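/- arXiv:0909.2408 — 3 statements merged into one kernel-verified Lean document; each statement's English description precedes it below -/
import Mathlib

section
/- (Strong Markov Lemma.) Let p(x,y,z) be a pmf on a finite alphabet 𝒳 × 𝒴 × 𝒵 that factors as p(x,y,z) = p(y)p(x|y)p(z|y) (Markov chain X−Y−Z), let ε > 0, and let x^n, y^n be arbitrary sequences with (x^n,y^n) ∈ T_ε^{(n)} with respect to p(x,y). Suppose Z^n is a random sequence supported on the set of z^n with (y^n,z^n) ∈ T_ε^{(n)} with respect to p(y,z), and that the distribution of Z^n is permutation-invariant with respect to y^n, i.e., P_{y^n,z^n} = P_{y^n,z̃^n} implies Pr(Z^n = z^n) = Pr(Z^n = z̃^n). Then there exist constants α > 0 and β, depending only on ε and the alphabet sizes |𝒳|, |𝒴|, |𝒵|, such that Pr((x^n, y^n, Z^n) ∈ T_{4ε}^{(n)} with respect to p(x,y,z)) ≥ 1 − 2^{−αn + β log n}; in particular this probability tends to 1 exponentially fast as n → ∞. -/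
open Filter

/-- A probability mass function on a finite alphabet. -/
def IsPMF {α : Type} [Fintype α] (p : α → ℝ) : Prop :=
  (∀ a, 0 ≤ p a) ∧ ∑ a, p a = 1

/-- Total variation distance: half the `L¹` distance. -/
noncomputable def tv {α : Type} [Fintype α] (p q : α → ℝ) : ℝ :=
  (1 / 2) * ∑ a, |p a - q a|

open Classical in
/-- Joint type (empirical distribution) of a sequence. -/
noncomputable def jointType {α : Type} (n : ℕ) (s : Fin n → α) : α → ℝ :=
  fun a => ((Finset.univ.filter fun t => s t = a).card : ℝ) / n

open Classical in
/-- Pushforward of a mass function along a map. -/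
noncomputable def pmfMap {S α : Type} [Fintype S] (p : S → ℝ) (f : S → α) : α → ℝ :=
  fun a => ∑ s, if f s = a then p s else 0

/-- Shannon entropy, base 2, with the convention `0 log 0 = 0`. -/
noncomputable def H2 {α : Type} [Fintype α] (p : α → ℝ) : ℝ :=
  ∑ a, -(p a * Real.logb 2 (p a))

/-- Mutual information `I(f(S); g(S))` for `S ∼ p`. -/
noncomputable def MI {S α β : Type} [Fintype S] [Fintype α] [Fintype β]
    (p : S → ℝ) (f : S → α) (g : S → β) : ℝ :=
  H2 (pmfMap p f) + H2 (pmfMap p g) - H2 (pmfMap p fun s => (f s, g s))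

/-- Conditional mutual information `I(f(S); g(S) | h(S))` for `S ∼ p`. -/
noncomputable def condMI {S α β γ : Type} [Fintype S] [Fintype α] [Fintype β] [Fintype γ]
    (p : S → ℝ) (f : S → α) (g : S → β) (h : S → γ) : ℝ :=
  H2 (pmfMap p fun s => (f s, h s)) + H2 (pmfMap p fun s => (g s, h s))
    - H2 (pmfMap p fun s => (f s, g s, h s)) - H2 (pmfMap p h)

/-- The number of messages `⌈2^{nR}⌉` available at rate `R` and blocklength `n`. -/
noncomputable def msgCount (n : ℕ) (R : ℝ) : ℕ := ⌈(2 : ℝ) ^ ((n : ℝ) * R)⌉₊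

open Classical in
/-- Probability of the event `E` under the (mass) distribution `μ`. -/
noncomputable def probOf {α : Type} [Fintype α] (μ : α → ℝ) (E : α → Prop) : ℝ :=
  ∑ a, if E a then μ a else 0

set_option linter.unusedSectionVars false
set_option maxHeartbeats 1000000

namespace SML

open Finset

variable {𝒳 𝒴 𝒵 : Type} [Fintype 𝒳] [Fintype 𝒴] [Fintype 𝒵]

lemma cardf_congr {ι : Type} {s : Finset ι} {p q : ι → Prop}
    [DecidablePred p] [DecidablePred q] (h : ∀ t, p t ↔ q t) :
    (s.filter p).card = (s.filter q).card := by
  congr 1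
  apply Finset.filter_congr
  intro t _
  simp [h t]

lemma cardf_congr' {ι : Type} {s : Finset ι} {p q : ι → Prop}
    {h1 : DecidablePred p} {h2 : DecidablePred q} (h : ∀ t, p t ↔ q t) :
    (@Finset.filter _ p h1 s).card = (@Finset.filter _ q h2 s).card := by
  congr 1
  ext t
  simp only [Finset.mem_filter, h t]

open Classical in
/-- positions with `ys t = b` -/
noncomputable def Yb {n : ℕ} (ys : Fin n → 𝒴) (b : 𝒴) : Finset (Fin n) :=
  univ.filter fun t => ys t = b

open Classical in
noncomputable def kcnt {n : ℕ} (ys : Fin n → 𝒴) (b : 𝒴) : ℕ := (Yb ys b).card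

open Classical in
noncomputable def dcnt {n : ℕ} (xs : Fin n → 𝒳) (ys : Fin n → 𝒴) (a : 𝒳) (b : 𝒴) : ℕ :=
  ((Yb ys b).filter fun t => xs t = a).card

open Classical in
noncomputable def gcnt {n : ℕ} (ys : Fin n → 𝒴) (zs : Fin n → 𝒵) (b : 𝒴) (G : Set 𝒵) : ℕ :=
  ((Yb ys b).filter fun t => zs t ∈ G).card

open Classical in
noncomputable def ncnt {n : ℕ} (xs : Fin n → 𝒳) (ys : Fin n → 𝒴) (zs : Fin n → 𝒵)
    (a : 𝒳) (b : 𝒴) (G : Set 𝒵) : ℕ :=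
  (((Yb ys b).filter fun t => xs t = a).filter fun t => zs t ∈ G).card

open Classical in
lemma ncnt_add_compl {n : ℕ} (xs : Fin n → 𝒳) (ys : Fin n → 𝒴) (zs : Fin n → 𝒵)
    (a : 𝒳) (b : 𝒴) (G : Set 𝒵) :
    ncnt xs ys zs a b G + ncnt xs ys zs a b Gᶜ = dcnt xs ys a b := by
  unfold ncnt dcnt
  simp only [Set.mem_compl_iff]
  exact Finset.card_filter_add_card_filter_not _

open Classical in
lemma gcnt_add_compl {n : ℕ} (ys : Fin n → 𝒴) (zs : Fin n → 𝒵) (b : 𝒴) (G : Set 𝒵) :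
    gcnt ys zs b G + gcnt ys zs b Gᶜ = kcnt ys b := by
  unfold gcnt kcnt
  simp only [Set.mem_compl_iff]
  exact Finset.card_filter_add_card_filter_not _

open Classical in
lemma ncnt_add_xcompl {n : ℕ} (xs : Fin n → 𝒳) (ys : Fin n → 𝒴) (zs : Fin n → 𝒵)
    (a : 𝒳) (b : 𝒴) (G : Set 𝒵) :
    ncnt xs ys zs a b G +
      (((Yb ys b).filter fun t => zs t ∈ G).filter fun t => ¬ xs t = a).card
      = gcnt ys zs b G := by
  unfold ncnt gcnt
  rw [show (((Yb ys b).filter fun t => xs t = a).filter fun t => zs t ∈ G)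
      = (((Yb ys b).filter fun t => zs t ∈ G).filter fun t => xs t = a) from
    Finset.filter_comm _ _ _]
  exact Finset.card_filter_add_card_filter_not _

open Classical in
lemma sum_dcnt {n : ℕ} (xs : Fin n → 𝒳) (ys : Fin n → 𝒴) (b : 𝒴) :
    ∑ a, dcnt xs ys a b = kcnt ys b := by
  unfold dcnt kcnt
  exact (Finset.card_eq_sum_card_fiberwise (f := fun t => xs t) (t := univ)
    (fun x _ => mem_univ _)).symm

open Classical in
lemma dcnt_le_kcnt {n : ℕ} (xs : Fin n → 𝒳) (ys : Fin n → 𝒴) (a : 𝒳) (b : 𝒴) :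
    dcnt xs ys a b ≤ kcnt ys b := Finset.card_le_card (filter_subset _ _)

open Classical in
lemma gcnt_le_kcnt {n : ℕ} (ys : Fin n → 𝒴) (zs : Fin n → 𝒵) (b : 𝒴) (G : Set 𝒵) :
    gcnt ys zs b G ≤ kcnt ys b := Finset.card_le_card (filter_subset _ _)

open Classical in
lemma ncnt_le_dcnt {n : ℕ} (xs : Fin n → 𝒳) (ys : Fin n → 𝒴) (zs : Fin n → 𝒵)
    (a : 𝒳) (b : 𝒴) (G : Set 𝒵) : ncnt xs ys zs a b G ≤ dcnt xs ys a b :=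
  Finset.card_le_card (filter_subset _ _)

open Classical in
lemma ncnt_le_gcnt {n : ℕ} (xs : Fin n → 𝒳) (ys : Fin n → 𝒴) (zs : Fin n → 𝒵)
    (a : 𝒳) (b : 𝒴) (G : Set 𝒵) : ncnt xs ys zs a b G ≤ gcnt ys zs b G := by
  unfold ncnt gcnt
  apply Finset.card_le_card
  intro t ht
  simp only [Finset.mem_filter] at *
  tauto

open Classical in
lemma kcnt_le_n {n : ℕ} (ys : Fin n → 𝒴) (b : 𝒴) : kcnt ys b ≤ n := by
  calc kcnt ys b ≤ (univ : Finset (Fin n)).card :=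
        Finset.card_le_card (filter_subset _ _)
  _ = n := by simp

open Classical in
lemma ncnt_le_n {n : ℕ} (xs : Fin n → 𝒳) (ys : Fin n → 𝒴) (zs : Fin n → 𝒵)
    (a : 𝒳) (b : 𝒴) (G : Set 𝒵) : ncnt xs ys zs a b G ≤ n :=
  le_trans (le_trans (ncnt_le_dcnt xs ys zs a b G) (dcnt_le_kcnt xs ys a b)) (kcnt_le_n ys b)


open Finset

variable {𝒳 𝒴 𝒵 : Type} [Fintype 𝒳] [Fintype 𝒴] [Fintype 𝒵]

/-- swap the values of `zs` at two positions -/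
def swapZ {n : ℕ} (zs : Fin n → 𝒵) (t1 t2 : Fin n) : Fin n → 𝒵 :=
  Function.update (Function.update zs t1 (zs t2)) t2 (zs t1)

lemma swapZ_apply1 {n : ℕ} (zs : Fin n → 𝒵) {t1 t2 : Fin n} (h : t1 ≠ t2) :
    swapZ zs t1 t2 t1 = zs t2 := by
  simp [swapZ, Function.update_of_ne h, Function.update_self]

lemma swapZ_apply2 {n : ℕ} (zs : Fin n → 𝒵) (t1 t2 : Fin n) :
    swapZ zs t1 t2 t2 = zs t1 := by
  simp [swapZ, Function.update_self]

lemma swapZ_apply_other {n : ℕ} (zs : Fin n → 𝒵) {t1 t2 t : Fin n}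
    (h1 : t ≠ t1) (h2 : t ≠ t2) : swapZ zs t1 t2 t = zs t := by
  simp [swapZ, Function.update_of_ne h1, Function.update_of_ne h2]

lemma swapZ_invol {n : ℕ} (zs : Fin n → 𝒵) {t1 t2 : Fin n} (h : t1 ≠ t2) :
    swapZ (swapZ zs t1 t2) t1 t2 = zs := by
  funext t
  by_cases h1 : t = t1
  · subst h1
    rw [swapZ_apply1 _ h, swapZ_apply2]
  · by_cases h2 : t = t2
    · subst h2
      rw [swapZ_apply2, swapZ_apply1 _ h]
    · rw [swapZ_apply_other _ h1 h2, swapZ_apply_other _ h1 h2]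

lemma swapZ_self {n : ℕ} (zs : Fin n → 𝒵) (t1 : Fin n) : swapZ zs t1 t1 = zs := by
  funext t
  by_cases h : t = t1
  · subst h; simp [swapZ, Function.update_self]
  · simp [swapZ, Function.update_of_ne h]

lemma swapZ_pair_eq {n : ℕ} (ys : Fin n → 𝒴) (zs : Fin n → 𝒵) {t1 t2 : Fin n}
    (hy : ys t1 = ys t2) (t : Fin n) :
    (ys (Equiv.swap t1 t2 t), zs (Equiv.swap t1 t2 t)) = (ys t, swapZ zs t1 t2 t) := by
  by_cases h12 : t1 = t2
  · subst h12
    simp [Equiv.swap_self, swapZ_self]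
  · by_cases h1 : t = t1
    · subst h1
      rw [Equiv.swap_apply_left, swapZ_apply1 _ h12, hy]
    · by_cases h2 : t = t2
      · subst h2
        rw [Equiv.swap_apply_right, swapZ_apply2, hy]
      · rw [Equiv.swap_apply_of_ne_of_ne h1 h2, swapZ_apply_other _ h1 h2]

open Classical in
lemma swapZ_jointType {n : ℕ} (ys : Fin n → 𝒴) (zs : Fin n → 𝒵) {t1 t2 : Fin n}
    (hy : ys t1 = ys t2) :
    (jointType n fun t => (ys t, swapZ zs t1 t2 t)) = jointType n fun t => (ys t, zs t) := by
  funext pr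
  unfold jointType
  congr 1
  norm_cast
  apply Finset.card_bij (i := fun t _ => Equiv.swap t1 t2 t)
  · intro t ht
    simp only [mem_filter, mem_univ, true_and] at *
    rw [swapZ_pair_eq ys zs hy t] at *
    exact ht
  · intro t _ t' _ h
    exact (Equiv.swap t1 t2).injective h
  · intro t ht
    refine ⟨Equiv.swap t1 t2 t, ?_, by simp⟩
    simp only [mem_filter, mem_univ, true_and] at *
    rw [← swapZ_pair_eq ys zs hy (Equiv.swap t1 t2 t)]
    simpa using ht


open Classical in
lemma count_eq_of_jointType_eq {α : Type} {n : ℕ} (hn : n ≠ 0) {s s' : Fin n → α}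
    (h : jointType n s = jointType n s') (v : α) :
    (univ.filter fun t => s t = v).card = (univ.filter fun t => s' t = v).card := by
  have hv := congrFun h v
  unfold jointType at hv
  have hn' : (n : ℝ) ≠ 0 := Nat.cast_ne_zero.2 hn
  field_simp at hv
  exact_mod_cast hv

open Classical in
lemma gcnt_sum_singleton {n : ℕ} (ys : Fin n → 𝒴) (zs : Fin n → 𝒵) (b : 𝒴) (G : Set 𝒵) :
    gcnt ys zs b G
      = ∑ c ∈ univ.filter (· ∈ G), (univ.filter fun t => (ys t, zs t) = (b, c)).card := by
  unfold gcnt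
  rw [Finset.card_eq_sum_card_fiberwise (f := fun t => zs t) (t := univ.filter (· ∈ G))
    (fun x hx => Finset.mem_filter.mpr ⟨Finset.mem_univ _, (Finset.mem_filter.mp hx).2⟩)]
  apply Finset.sum_congr rfl
  intro c hc
  simp only [mem_filter, mem_univ, true_and] at hc
  unfold Yb
  rw [Finset.filter_filter, Finset.filter_filter]
  apply cardf_congr
  intro t
  simp only [Prod.mk.injEq]
  constructor
  · rintro ⟨hb, _, hzc⟩; exact ⟨hb, hzc⟩
  · rintro ⟨hb, hzc⟩; exact ⟨hb, hzc ▸ hc, hzc⟩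

open Classical in
lemma gcnt_const_on_class {n : ℕ} (hn : n ≠ 0) (ys : Fin n → 𝒴) {zs zs' : Fin n → 𝒵}
    (h : (jointType n fun t => (ys t, zs t)) = jointType n fun t => (ys t, zs' t))
    (b : 𝒴) (G : Set 𝒵) : gcnt ys zs b G = gcnt ys zs' b G := by
  rw [gcnt_sum_singleton, gcnt_sum_singleton]
  apply Finset.sum_congr rfl
  intro c _
  exact (cardf_congr' (fun _ => Iff.rfl)).trans
    ((count_eq_of_jointType_eq hn h (b, c)).trans (cardf_congr' (fun _ => Iff.rfl)))

open Classical in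
lemma gcnt_singleton {n : ℕ} (ys : Fin n → 𝒴) (zs : Fin n → 𝒵) (b : 𝒴) (c : 𝒵) :
    gcnt ys zs b {c} = (univ.filter fun t => (ys t, zs t) = (b, c)).card := by
  unfold gcnt Yb
  rw [Finset.filter_filter]
  apply cardf_congr
  intro t
  simp [Prod.mk.injEq]

open Classical in
lemma ncnt_singleton {n : ℕ} (xs : Fin n → 𝒳) (ys : Fin n → 𝒴) (zs : Fin n → 𝒵)
    (a : 𝒳) (b : 𝒴) (c : 𝒵) :
    ncnt xs ys zs a b {c} = (univ.filter fun t => (xs t, ys t, zs t) = (a, b, c)).card := by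
  unfold ncnt Yb
  rw [Finset.filter_filter, Finset.filter_filter]
  apply cardf_congr
  intro t
  simp only [Prod.mk.injEq, Set.mem_singleton_iff]
  tauto

open Classical in
lemma dcnt_pair {n : ℕ} (xs : Fin n → 𝒳) (ys : Fin n → 𝒴) (a : 𝒳) (b : 𝒴) :
    dcnt xs ys a b = (univ.filter fun t => (xs t, ys t) = (a, b)).card := by
  unfold dcnt Yb
  rw [Finset.filter_filter]
  apply cardf_congr
  intro t
  simp only [Prod.mk.injEq]
  tauto

open Classical in
lemma sum_gcnt_singleton {n : ℕ} (ys : Fin n → 𝒴) (zs : Fin n → 𝒵) (b : 𝒴) :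
    ∑ c, gcnt ys zs b {c} = kcnt ys b := by
  unfold kcnt
  rw [Finset.card_eq_sum_card_fiberwise (f := fun t => zs t) (t := univ)
    (fun x _ => mem_univ _)]
  apply Finset.sum_congr rfl
  intro c _
  unfold gcnt
  apply cardf_congr
  intro t
  simp

open Classical in
lemma jointType_pair_eq {n : ℕ} (ys : Fin n → 𝒴) (zs : Fin n → 𝒵) (b : 𝒴) (c : 𝒵) :
    (jointType n fun t => (ys t, zs t)) (b, c) = (gcnt ys zs b {c} : ℝ) / n := by
  rw [gcnt_singleton]
  unfold jointType
  congr 1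
  exact_mod_cast cardf_congr' (fun _ => Iff.rfl)

open Classical in
lemma jointType_triple_eq {n : ℕ} (xs : Fin n → 𝒳) (ys : Fin n → 𝒴) (zs : Fin n → 𝒵)
    (a : 𝒳) (b : 𝒴) (c : 𝒵) :
    (jointType n fun t => (xs t, ys t, zs t)) (a, b, c)
      = (ncnt xs ys zs a b {c} : ℝ) / n := by
  rw [ncnt_singleton]
  unfold jointType
  congr 1
  exact_mod_cast cardf_congr' (fun _ => Iff.rfl)

open Classical in
lemma jointType_xy_eq {n : ℕ} (xs : Fin n → 𝒳) (ys : Fin n → 𝒴) (a : 𝒳) (b : 𝒴) :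
    (jointType n fun t => (xs t, ys t)) (a, b) = (dcnt xs ys a b : ℝ) / n := by
  rw [dcnt_pair]
  unfold jointType
  congr 1
  exact_mod_cast cardf_congr' (fun _ => Iff.rfl)

open Classical in
/-- the permutation class of `w` (sequences with the same `(y,z)` joint type) -/
noncomputable def cls {n : ℕ} (ys : Fin n → 𝒴) (w : Fin n → 𝒵) : Finset (Fin n → 𝒵) :=
  univ.filter fun zs =>
    (jointType n fun t => (ys t, zs t)) = jointType n fun t => (ys t, w t)

open Classical in
lemma mem_cls {n : ℕ} {ys : Fin n → 𝒴} {w zs : Fin n → 𝒵} :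
    zs ∈ cls ys w ↔
      (jointType n fun t => (ys t, zs t)) = jointType n fun t => (ys t, w t) := by
  simp [cls]

open Classical in
lemma ncnt_swap {n : ℕ} (xs : Fin n → 𝒳) (ys : Fin n → 𝒴) (zs : Fin n → 𝒵)
    {a : 𝒳} {b : 𝒴} {G : Set 𝒵} {t1 t2 : Fin n}
    (h1x : xs t1 = a) (h1y : ys t1 = b) (h1z : zs t1 ∉ G)
    (h2x : ¬ xs t2 = a) (h2y : ys t2 = b) (h2z : zs t2 ∈ G) :
    ncnt xs ys (swapZ zs t1 t2) a b G = ncnt xs ys zs a b G + 1 := by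
  have hne : t1 ≠ t2 := fun h => h1z (h ▸ h2z)
  unfold ncnt
  have hset : (((Yb ys b).filter fun t => xs t = a).filter
        fun t => swapZ zs t1 t2 t ∈ G)
      = insert t1 (((Yb ys b).filter fun t => xs t = a).filter fun t => zs t ∈ G) := by
    ext t
    simp only [Finset.mem_filter, Finset.mem_insert, Yb, Finset.mem_univ, true_and]
    by_cases ht1 : t = t1
    · subst ht1
      rw [swapZ_apply1 _ hne]
      simp [h1y, h1x, h2z]
    · by_cases ht2 : t = t2
      · subst ht2
        rw [swapZ_apply2]
        simp [h2x, Ne.symm hne, ht1]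
      · rw [swapZ_apply_other _ ht1 ht2]
        simp [ht1]
  rw [hset, Finset.card_insert_of_notMem]
  simp [Yb, h1z]

section Chain

variable {n : ℕ} (xs : Fin n → 𝒳) (ys : Fin n → 𝒴) (w : Fin n → 𝒵)
  (a : 𝒳) (b : 𝒴) (G : Set 𝒵)

open Classical in
/-- members of the class with `z`-count exactly `k` in the cell `(a,b,G)` -/
noncomputable def Ak (k : ℕ) : Finset (Fin n → 𝒵) :=
  (cls ys w).filter fun zs => ncnt xs ys zs a b G = k

open Classical in
lemma chain_step (hn : n ≠ 0) (k : ℕ) :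
    ((Ak xs ys w a b G (k + 1)).card : ℝ) * ((k : ℝ) + 1)
        * ((kcnt ys b : ℝ) - dcnt xs ys a b - gcnt ys w b G + k + 1)
      ≤ ((Ak xs ys w a b G k).card : ℝ) * ((dcnt xs ys a b : ℝ) - k)
        * ((gcnt ys w b G : ℝ) - k) := by
  classical
  set κ := kcnt ys b with hκdef
  set d := dcnt xs ys a b with hddef
  set m := gcnt ys w b G with hmdef
  -- the four kinds of positions
  set T1 : (Fin n → 𝒵) → Finset (Fin n) :=
    fun zs => ((Yb ys b).filter fun t => xs t = a).filter fun t => ¬ zs t ∈ G with hT1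
  set T2 : (Fin n → 𝒵) → Finset (Fin n) :=
    fun zs => ((Yb ys b).filter fun t => zs t ∈ G).filter fun t => ¬ xs t = a with hT2
  set S1 : (Fin n → 𝒵) → Finset (Fin n) :=
    fun zs => ((Yb ys b).filter fun t => xs t = a).filter fun t => zs t ∈ G with hS1
  set S2 : (Fin n → 𝒵) → Finset (Fin n) :=
    fun zs => ((Yb ys b).filter fun t => ¬ xs t = a).filter fun t => ¬ zs t ∈ G with hS2
  set U : Finset ((Fin n → 𝒵) × (Fin n × Fin n)) :=
    ((Ak xs ys w a b G k) ×ˢ univ).filter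
      (fun q => q.2.1 ∈ T1 q.1 ∧ q.2.2 ∈ T2 q.1) with hU
  set V : Finset ((Fin n → 𝒵) × (Fin n × Fin n)) :=
    ((Ak xs ys w a b G (k + 1)) ×ˢ univ).filter
      (fun q => q.2.1 ∈ S1 q.1 ∧ q.2.2 ∈ S2 q.1) with hV
  -- cardinality of a fiber-product-style filter
  have cardUV : ∀ (A : Finset (Fin n → 𝒵)) (F1 F2 : (Fin n → 𝒵) → Finset (Fin n)),
      (((A ×ˢ (univ : Finset (Fin n × Fin n))).filter
        (fun q => q.2.1 ∈ F1 q.1 ∧ q.2.2 ∈ F2 q.1)).card : ℝ)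
      = ∑ zs ∈ A, ((F1 zs).card : ℝ) * ((F2 zs).card : ℝ) := by
    intro A F1 F2
    rw [Finset.card_filter]
    push_cast
    rw [Finset.sum_product]
    apply Finset.sum_congr rfl
    intro zs _
    rw [show (univ : Finset (Fin n × Fin n)) = univ ×ˢ univ from by simp,
      Finset.sum_product]
    have hcard : ∀ (F : Finset (Fin n)), (∑ t, if t ∈ F then (1 : ℝ) else 0) = F.card := by
      intro F
      simp [Finset.sum_ite_mem]
    rw [← hcard (F1 zs), ← hcard (F2 zs), Finset.sum_mul_sum]
    apply Finset.sum_congr rfl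
    intro t1 _
    apply Finset.sum_congr rfl
    intro t2 _
    by_cases h1 : t1 ∈ F1 zs <;> by_cases h2 : t2 ∈ F2 zs <;>
      simp [h1, h2]
  -- counts inside the class
  have hk_mem : ∀ {j : ℕ} {zs}, zs ∈ Ak xs ys w a b G j →
      ncnt xs ys zs a b G = j ∧ gcnt ys zs b G = m := by
    intro j zs hzs
    simp only [Ak, Finset.mem_filter] at hzs
    refine ⟨hzs.2, ?_⟩
    rw [hmdef]
    exact gcnt_const_on_class hn ys (mem_cls.1 hzs.1) b G
  have hT1card : ∀ {zs}, zs ∈ Ak xs ys w a b G k → ((T1 zs).card : ℝ) = (d : ℝ) - k := by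
    intro zs hzs
    obtain ⟨hcnt, -⟩ := hk_mem hzs
    have h := Finset.card_filter_add_card_filter_not
      (s := (Yb ys b).filter fun t => xs t = a) (p := fun t => zs t ∈ G)
    have : ncnt xs ys zs a b G + (T1 zs).card = d := h
    rw [hcnt] at this
    have := congrArg (Nat.cast (R := ℝ)) this
    push_cast at this
    linarith
  have hT2card : ∀ {zs}, zs ∈ Ak xs ys w a b G k → ((T2 zs).card : ℝ) = (m : ℝ) - k := by
    intro zs hzs
    obtain ⟨hcnt, hg⟩ := hk_mem hzs
    have h := ncnt_add_xcompl xs ys zs a b G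
    rw [hcnt, hg] at h
    have := congrArg (Nat.cast (R := ℝ)) h
    push_cast at this
    linarith
  have hS1card : ∀ {zs}, zs ∈ Ak xs ys w a b G (k+1) → ((S1 zs).card : ℝ) = (k : ℝ) + 1 := by
    intro zs hzs
    obtain ⟨hcnt, -⟩ := hk_mem hzs
    have : (S1 zs).card = ncnt xs ys zs a b G := rfl
    rw [this, hcnt]
    push_cast
    ring
  have hS2card : ∀ {zs}, zs ∈ Ak xs ys w a b G (k+1) →
      ((S2 zs).card : ℝ) = (κ : ℝ) - d - m + k + 1 := by
    intro zs hzs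
    obtain ⟨hcnt, hg⟩ := hk_mem hzs
    -- partition of Yb by xs = a
    have hYb : d + ((Yb ys b).filter fun t => ¬ xs t = a).card = κ :=
      Finset.card_filter_add_card_filter_not
        (s := Yb ys b) (p := fun t => xs t = a)
    -- partition of the ¬xs=a part by membership in G
    have hE : (((Yb ys b).filter fun t => ¬ xs t = a).filter fun t => zs t ∈ G).card
        + (S2 zs).card = ((Yb ys b).filter fun t => ¬ xs t = a).card :=
      Finset.card_filter_add_card_filter_not
        (s := (Yb ys b).filter fun t => ¬ xs t = a) (p := fun t => zs t ∈ G)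
    have hcomm : (((Yb ys b).filter fun t => ¬ xs t = a).filter fun t => zs t ∈ G)
        = T2 zs := Finset.filter_comm _ _ _
    rw [hcomm] at hE
    -- T2 card for this zs
    have hT2 : ncnt xs ys zs a b G + (T2 zs).card = gcnt ys zs b G :=
      ncnt_add_xcompl xs ys zs a b G
    rw [hcnt, hg] at hT2
    have e1 := congrArg (Nat.cast (R := ℝ)) hYb
    have e2 := congrArg (Nat.cast (R := ℝ)) hE
    have e3 := congrArg (Nat.cast (R := ℝ)) hT2
    push_cast at e1 e2 e3
    linarith
  -- the injection from V into U
  have hVU : V.card ≤ U.card := by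
    apply Finset.card_le_card_of_injOn
      (f := fun q => (swapZ q.1 q.2.1 q.2.2, q.2.1, q.2.2))
    · rintro ⟨zs, t1, t2⟩ hq
      simp only [Finset.mem_coe, hV, Finset.mem_filter, Finset.mem_product, Finset.mem_univ,
        and_true, true_and] at hq
      obtain ⟨hA, hs1, hs2⟩ := hq
      simp only [hS1, Finset.mem_filter, Yb, Finset.mem_univ, true_and] at hs1
      simp only [hS2, Finset.mem_filter, Yb, Finset.mem_univ, true_and] at hs2
      obtain ⟨⟨hy1, hx1⟩, hz1⟩ := hs1
      obtain ⟨⟨hy2, hx2⟩, hz2⟩ := hs2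
      have hne : t1 ≠ t2 := fun h => hz2 (h ▸ hz1)
      simp only [Ak, Finset.mem_filter] at hA
      obtain ⟨hcls, hcnt⟩ := hA
      set u := swapZ zs t1 t2 with hu
      have hu1 : u t1 = zs t2 := swapZ_apply1 _ hne
      have hu2 : u t2 = zs t1 := swapZ_apply2 _ _ _
      have hycls : (jointType n fun t => (ys t, u t)) = jointType n fun t => (ys t, w t) := by
        rw [hu, swapZ_jointType ys zs (hy1.trans hy2.symm)]
        exact mem_cls.1 hcls
      have hinv : swapZ u t1 t2 = zs := swapZ_invol zs hne
      have hncnt : ncnt xs ys (swapZ u t1 t2) a b G = ncnt xs ys u a b G + 1 :=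
        ncnt_swap xs ys u hx1 hy1 (hu1 ▸ hz2) hx2 hy2 (hu2 ▸ hz1)
      rw [hinv, hcnt] at hncnt
      have hucnt : ncnt xs ys u a b G = k := by omega
      simp only [Finset.mem_coe, hU, Finset.mem_filter, Finset.mem_product, Finset.mem_univ,
        and_true, true_and]
      refine ⟨?_, ?_, ?_⟩
      · simp only [Ak, Finset.mem_filter, Finset.mem_univ, true_and]
        exact ⟨mem_cls.2 hycls, hucnt⟩
      · simp only [hT1, Finset.mem_filter, Yb, Finset.mem_univ, true_and]
        exact ⟨⟨hy1, hx1⟩, (hu1 ▸ hz2 : u t1 ∉ G)⟩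
      · simp only [hT2, Finset.mem_filter, Yb, Finset.mem_univ, true_and]
        exact ⟨⟨hy2, (hu2 ▸ hz1 : u t2 ∈ G)⟩, hx2⟩
    · rintro ⟨zs, t1, t2⟩ hq ⟨zs', t1', t2'⟩ hq' heq
      simp only [Finset.mem_coe] at hq hq'
      simp only [Prod.mk.injEq] at heq
      obtain ⟨hswap, ht1, ht2⟩ := heq
      subst ht1; subst ht2
      simp only [hV, Finset.mem_filter, Finset.mem_product, Finset.mem_univ,
        and_true, true_and] at hq hq'
      have hne : t1 ≠ t2 := by
        obtain ⟨-, hs1, hs2⟩ := hq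
        simp only [hS1, Finset.mem_filter] at hs1
        simp only [hS2, Finset.mem_filter] at hs2
        exact fun h => hs2.2 (h ▸ hs1.2)
      have : zs = zs' := by
        have h1 : swapZ (swapZ zs t1 t2) t1 t2 = swapZ (swapZ zs' t1 t2) t1 t2 := by
          rw [hswap]
        rwa [swapZ_invol zs hne, swapZ_invol zs' hne] at h1
      simp [this]
  -- put the cardinalities together
  have hUcard : (U.card : ℝ)
      = ((Ak xs ys w a b G k).card : ℝ) * (((d : ℝ) - k) * ((m : ℝ) - k)) := by
    rw [hU, cardUV]
    rw [Finset.sum_congr rfl (fun zs hzs => by rw [hT1card hzs, hT2card hzs])]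
    rw [Finset.sum_const, nsmul_eq_mul]
  have hVcard : (V.card : ℝ)
      = ((Ak xs ys w a b G (k + 1)).card : ℝ)
        * (((k : ℝ) + 1) * ((κ : ℝ) - d - m + k + 1)) := by
    rw [hV, cardUV]
    rw [Finset.sum_congr rfl (fun zs hzs => by rw [hS1card hzs, hS2card hzs])]
    rw [Finset.sum_const, nsmul_eq_mul]
  have := (Nat.cast_le (α := ℝ)).2 hVU
  rw [hUcard, hVcard] at this
  linarith

open Classical in
lemma chain_step2 {n : ℕ} (xs : Fin n → 𝒳) (ys : Fin n → 𝒴) (w : Fin n → 𝒵)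
    (a : 𝒳) (b : 𝒴) (G : Set 𝒵) (hn : n ≠ 0) {s : ℝ} (hs : 0 < s) (k : ℕ)
    (hk : (dcnt xs ys a b : ℝ) * (gcnt ys w b G : ℝ) / (kcnt ys b : ℝ) + s / 2 ≤ k) :
    ((Ak xs ys w a b G (k + 1)).card : ℝ) * ((kcnt ys b : ℝ) ^ 2 + s * (kcnt ys b : ℝ) / 2)
      ≤ ((Ak xs ys w a b G k).card : ℝ) * ((kcnt ys b : ℝ) ^ 2) := by
  have hdκ : dcnt xs ys a b ≤ kcnt ys b := dcnt_le_kcnt xs ys a b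
  have hmκ : gcnt ys w b G ≤ kcnt ys b := gcnt_le_kcnt ys w b G
  set κ : ℝ := (kcnt ys b : ℝ) with hκ
  set d : ℝ := (dcnt xs ys a b : ℝ) with hd
  set m : ℝ := (gcnt ys w b G : ℝ) with hm
  set X : ℝ := ((Ak xs ys w a b G (k + 1)).card : ℝ) with hX
  set Y : ℝ := ((Ak xs ys w a b G k).card : ℝ) with hY
  have hXnn : 0 ≤ X := by positivity
  have hYnn : 0 ≤ Y := by positivity
  by_cases hκ0 : kcnt ys b = 0
  · have hd0 : dcnt xs ys a b = 0 := by omega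
    have : κ = 0 := by rw [hκ, hκ0]; simp
    rw [this]
    ring_nf
    simp
  · have hκ1 : (1 : ℝ) ≤ κ := by
      rw [hκ]; exact_mod_cast Nat.one_le_iff_ne_zero.2 hκ0
    have hκpos : (0 : ℝ) < κ := lt_of_lt_of_le zero_lt_one hκ1
    have hdκ' : d ≤ κ := by rw [hd, hκ]; exact_mod_cast hdκ
    have hmκ' : m ≤ κ := by rw [hm, hκ]; exact_mod_cast hmκ
    have hdnn : (0:ℝ) ≤ d := by positivity
    have hmnn : (0:ℝ) ≤ m := by positivity
    have hknn : (0:ℝ) ≤ (k:ℝ) := by positivity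
    -- κ * k ≥ d * m + s/2 * κ
    have hne : κ ≠ 0 := ne_of_gt hκpos
    have hmean : d * m + s / 2 * κ ≤ κ * (k : ℝ) := by
      have h0 : d * m / κ ≤ (k : ℝ) - s / 2 := by linarith
      have h1 : d * m / κ * κ ≤ ((k : ℝ) - s / 2) * κ :=
        mul_le_mul_of_nonneg_right h0 hκpos.le
      rw [div_mul_cancel₀ _ hne] at h1
      nlinarith [h1]
    -- κ - d - m + k ≥ s/2
    have hgap : s / 2 ≤ κ - d - m + (k : ℝ) := by
      have h1 : (κ - d) * (κ - m) ≥ 0 :=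
        mul_nonneg (by linarith) (by linarith)
      have h2 : κ * (s/2) ≤ κ * (κ - d - m + (k:ℝ)) := by nlinarith [h1, hmean]
      exact (mul_le_mul_iff_right₀ hκpos).1 h2
    have hstep := chain_step xs ys w a b G hn k
    rw [← hκ, ← hd, ← hm, ← hX, ← hY] at hstep
    by_cases hbig : (k + 1 : ℕ) ≤ dcnt xs ys a b ∧ (k + 1 : ℕ) ≤ gcnt ys w b G
    · obtain ⟨hbd, hbm⟩ := hbig
      have hbd' : (k : ℝ) + 1 ≤ d := by rw [hd]; exact_mod_cast hbd
      have hbm' : (k : ℝ) + 1 ≤ m := by rw [hm]; exact_mod_cast hbm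
      set P : ℝ := (d - k) * (m - k) with hP
      have hPpos : 0 < P := mul_pos (by linarith) (by linarith)
      have hPκ : P ≤ κ ^ 2 := by
        have : d - k ≤ κ := by linarith
        have : m - k ≤ κ := by linarith
        nlinarith
      have hL : P + s * κ / 2 ≤ ((k:ℝ) + 1) * (κ - d - m + k + 1) := by nlinarith
      have hXL : X * (P + s * κ / 2) ≤ Y * P := by nlinarith
      have hXP : X * P ≤ Y * P := by
        have hXc : 0 ≤ X * (s * κ / 2) := by positivity
        nlinarith [hXL]
      have hXY : X ≤ Y := le_of_mul_le_mul_right hXP hPpos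
      have h2 : (Y - X) * P ≤ (Y - X) * κ ^ 2 :=
        mul_le_mul_of_nonneg_left hPκ (by linarith)
      nlinarith [hXL, h2]
    · -- the set of sequences with count k+1 is empty
      have hemp : Ak xs ys w a b G (k+1) = ∅ := by
        rw [Finset.eq_empty_iff_forall_notMem]
        intro zs hzs
        simp only [Ak, Finset.mem_filter] at hzs
        have h1 : ncnt xs ys zs a b G ≤ dcnt xs ys a b := ncnt_le_dcnt xs ys zs a b G
        have h2 : ncnt xs ys zs a b G ≤ gcnt ys zs b G := ncnt_le_gcnt xs ys zs a b G
        have h3 : gcnt ys zs b G = gcnt ys w b G :=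
          gcnt_const_on_class hn ys (mem_cls.1 hzs.1) b G
        omega
      have : X = 0 := by rw [hX, hemp]; simp
      rw [this]
      have : (0:ℝ) ≤ Y * κ ^ 2 := by positivity
      linarith

open Classical in
lemma chain_iter {n : ℕ} (xs : Fin n → 𝒳) (ys : Fin n → 𝒴) (w : Fin n → 𝒵)
    (a : 𝒳) (b : 𝒴) (G : Set 𝒵) (hn : n ≠ 0) {s : ℝ} (hs : 0 < s) (j k : ℕ)
    (hk : (dcnt xs ys a b : ℝ) * (gcnt ys w b G : ℝ) / (kcnt ys b : ℝ) + s / 2 ≤ k) :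
    ((Ak xs ys w a b G (k + j)).card : ℝ)
        * ((kcnt ys b : ℝ) ^ 2 + s * (kcnt ys b : ℝ) / 2) ^ j
      ≤ ((Ak xs ys w a b G k).card : ℝ) * ((kcnt ys b : ℝ) ^ 2) ^ j := by
  induction j with
  | zero => simp
  | succ j ih =>
    set κ : ℝ := (kcnt ys b : ℝ)
    have hknn : (0:ℝ) ≤ κ := by positivity
    have hc2 : (0:ℝ) ≤ κ ^ 2 + s * κ / 2 := by positivity
    have hkj : (dcnt xs ys a b : ℝ) * (gcnt ys w b G : ℝ) / (kcnt ys b : ℝ) + s / 2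
        ≤ ((k + j : ℕ) : ℝ) := by
      push_cast
      have hj : (0:ℝ) ≤ (j : ℝ) := Nat.cast_nonneg j
      linarith
    have hstep := chain_step2 xs ys w a b G hn hs (k + j) hkj
    calc ((Ak xs ys w a b G (k + (j+1))).card : ℝ) * (κ ^ 2 + s * κ / 2) ^ (j+1)
        = (((Ak xs ys w a b G ((k + j) + 1)).card : ℝ) * (κ ^ 2 + s * κ / 2))
            * (κ ^ 2 + s * κ / 2) ^ j := by
          rw [show k + (j+1) = (k + j) + 1 from rfl]; ring
      _ ≤ (((Ak xs ys w a b G (k + j)).card : ℝ) * κ ^ 2) * (κ ^ 2 + s * κ / 2) ^ j :=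
          mul_le_mul_of_nonneg_right hstep (by positivity)
      _ = (((Ak xs ys w a b G (k + j)).card : ℝ) * (κ ^ 2 + s * κ / 2) ^ j) * κ ^ 2 := by
          ring
      _ ≤ (((Ak xs ys w a b G k).card : ℝ) * (κ ^ 2) ^ j) * κ ^ 2 :=
          mul_le_mul_of_nonneg_right ih (by positivity)
      _ = ((Ak xs ys w a b G k).card : ℝ) * (κ ^ 2) ^ (j+1) := by ring

open Classical in
lemma tail_card {n : ℕ} (xs : Fin n → 𝒳) (ys : Fin n → 𝒴) (w : Fin n → 𝒵)
    (a : 𝒳) (b : 𝒴) (G : Set 𝒵) (hn : n ≠ 0) {s q0 : ℝ} (hs : 0 < s)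
    (hq0 : 0 ≤ q0)
    (hθ : 1 ≤ kcnt ys b →
      ((kcnt ys b : ℝ) ^ 2) / ((kcnt ys b : ℝ) ^ 2 + s * (kcnt ys b : ℝ) / 2) ≤ q0) :
    (((cls ys w).filter fun zs =>
        (dcnt xs ys a b : ℝ) * (gcnt ys w b G : ℝ) / (kcnt ys b : ℝ) + s
          < (ncnt xs ys zs a b G : ℝ)).card : ℝ)
      ≤ ((n : ℝ) + 1) * q0 ^ (⌊s / 2⌋₊) * ((cls ys w).card : ℝ) := by
  classical
  set κ : ℝ := (kcnt ys b : ℝ) with hκ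
  set d : ℝ := (dcnt xs ys a b : ℝ) with hd
  set m : ℝ := (gcnt ys w b G : ℝ) with hm
  set r : ℕ := ⌊s / 2⌋₊ with hr
  by_cases hκ0 : kcnt ys b = 0
  · -- tail is empty
    have : ((cls ys w).filter fun zs =>
        d * m / κ + s < (ncnt xs ys zs a b G : ℝ)).card = 0 := by
      rw [Finset.card_eq_zero, Finset.eq_empty_iff_forall_notMem]
      intro zs hzs
      simp only [Finset.mem_filter] at hzs
      have h1 : ncnt xs ys zs a b G = 0 := by
        have := le_trans (le_trans (ncnt_le_dcnt xs ys zs a b G)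
          (dcnt_le_kcnt xs ys a b)) (le_of_eq hκ0)
        omega
      have h2 : dcnt xs ys a b = 0 := by
        have := dcnt_le_kcnt (ys := ys) xs (a := a) (b := b)
        omega
      rw [h1] at hzs
      have : d = 0 := by rw [hd, h2]; simp
      rw [this] at hzs
      simp at hzs
      linarith [hzs.2]
    rw [this]
    simp only [Nat.cast_zero]
    positivity
  · have hκ1 : (1:ℝ) ≤ κ := by rw [hκ]; exact_mod_cast Nat.one_le_iff_ne_zero.2 hκ0
    have hκpos : (0:ℝ) < κ := by linarith
    have hmeannn : (0:ℝ) ≤ d * m / κ := by positivity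
    have hrle : (r : ℝ) ≤ s / 2 := Nat.floor_le (by positivity)
    -- each Ak with large k is small
    have hAk : ∀ k : ℕ, d * m / κ + s < (k : ℝ) →
        ((Ak xs ys w a b G k).card : ℝ) ≤ q0 ^ r * ((cls ys w).card : ℝ) := by
      intro k hk
      have hrk : r ≤ k := by
        have : (r : ℝ) < (k : ℝ) := by linarith
        exact_mod_cast le_of_lt this
      have hbase : d * m / κ + s / 2 ≤ ((k - r : ℕ) : ℝ) := by
        rw [Nat.cast_sub hrk]
        linarith
      have hiter := chain_iter xs ys w a b G hn hs r (k - r) hbase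
      rw [show (k - r) + r = k from by omega] at hiter
      have hAkr : ((Ak xs ys w a b G (k - r)).card : ℝ) ≤ ((cls ys w).card : ℝ) := by
        exact_mod_cast Finset.card_le_card (Finset.filter_subset _ _)
      have hc2pos : (0:ℝ) < κ ^ 2 + s * κ / 2 := by positivity
      have hc2rpos : (0:ℝ) < (κ ^ 2 + s * κ / 2) ^ r := by positivity
      have h1 : ((Ak xs ys w a b G k).card : ℝ)
          ≤ ((cls ys w).card : ℝ) * (κ ^ 2) ^ r / (κ ^ 2 + s * κ / 2) ^ r := by
        rw [le_div_iff₀ hc2rpos]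
        calc ((Ak xs ys w a b G k).card : ℝ) * (κ ^ 2 + s * κ / 2) ^ r
            ≤ ((Ak xs ys w a b G (k - r)).card : ℝ) * (κ ^ 2) ^ r := hiter
          _ ≤ ((cls ys w).card : ℝ) * (κ ^ 2) ^ r :=
              mul_le_mul_of_nonneg_right hAkr (by positivity)
      have h2 : ((cls ys w).card : ℝ) * (κ ^ 2) ^ r / (κ ^ 2 + s * κ / 2) ^ r
          = ((cls ys w).card : ℝ) * (κ ^ 2 / (κ ^ 2 + s * κ / 2)) ^ r := by
        rw [div_pow]
        ring
      have hθ' := hθ (Nat.one_le_iff_ne_zero.2 hκ0)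
      have h3 : (κ ^ 2 / (κ ^ 2 + s * κ / 2)) ^ r ≤ q0 ^ r :=
        pow_le_pow_left₀ (by positivity) hθ' r
      calc ((Ak xs ys w a b G k).card : ℝ)
          ≤ ((cls ys w).card : ℝ) * (κ ^ 2 / (κ ^ 2 + s * κ / 2)) ^ r := by
            rw [← h2]; exact h1
        _ ≤ ((cls ys w).card : ℝ) * q0 ^ r :=
            mul_le_mul_of_nonneg_left h3 (by positivity)
        _ = q0 ^ r * ((cls ys w).card : ℝ) := by ring
    -- tail is contained in the union of the large-count slices
    have hsub : ((cls ys w).filter fun zs =>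
          d * m / κ + s < (ncnt xs ys zs a b G : ℝ))
        ⊆ (Finset.range (n+1)).biUnion (fun k =>
            if d * m / κ + s < (k : ℝ) then Ak xs ys w a b G k else ∅) := by
      intro zs hzs
      simp only [Finset.mem_filter] at hzs
      rw [Finset.mem_biUnion]
      refine ⟨ncnt xs ys zs a b G, ?_, ?_⟩
      · rw [Finset.mem_range]
        have := ncnt_le_n xs ys zs a b G
        omega
      · rw [if_pos hzs.2]
        simp only [Ak, Finset.mem_filter]
        exact ⟨hzs.1, trivial⟩
    calc (((cls ys w).filter fun zs =>
          d * m / κ + s < (ncnt xs ys zs a b G : ℝ)).card : ℝ)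
        ≤ (((Finset.range (n+1)).biUnion (fun k =>
            if d * m / κ + s < (k : ℝ) then Ak xs ys w a b G k else ∅)).card : ℝ) := by
          exact_mod_cast Finset.card_le_card hsub
      _ ≤ ∑ k ∈ Finset.range (n+1), ((if d * m / κ + s < (k : ℝ)
            then Ak xs ys w a b G k else ∅).card : ℝ) := by
          exact_mod_cast Finset.card_biUnion_le
      _ ≤ ∑ _k ∈ Finset.range (n+1), q0 ^ r * ((cls ys w).card : ℝ) := by
          apply Finset.sum_le_sum
          intro k _
          by_cases hk : d * m / κ + s < (k : ℝ)
          · rw [if_pos hk]; exact hAk k hk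
          · rw [if_neg hk]; simp; positivity
      _ = ((n : ℝ) + 1) * q0 ^ r * ((cls ys w).card : ℝ) := by
          rw [Finset.sum_const, Finset.card_range, nsmul_eq_mul]
          push_cast
          ring

end Chain

section Marginals

variable (p : 𝒳 × 𝒴 × 𝒵 → ℝ)

open Classical in
lemma pXY_margin (a : 𝒳) (b : 𝒴) :
    pmfMap p (fun q => (q.1, q.2.1)) (a, b) = ∑ c, p (a, b, c) := by
  rw [pmfMap, Fintype.sum_prod_type]
  simp only [Fintype.sum_prod_type, Prod.mk.injEq, ite_and]
  rw [Finset.sum_eq_single a]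
  · rw [Finset.sum_eq_single b] <;> simp +contextual
  · simp +contextual
  · simp

open Classical in
lemma pYZ_margin (b : 𝒴) (c : 𝒵) :
    pmfMap p (fun q => (q.2.1, q.2.2)) (b, c) = ∑ a, p (a, b, c) := by
  rw [pmfMap, Fintype.sum_prod_type]
  simp only [Fintype.sum_prod_type, Prod.mk.injEq, ite_and]
  apply Finset.sum_congr rfl
  intro x _
  rw [Finset.sum_eq_single b]
  · rw [Finset.sum_eq_single c] <;> simp +contextual
  · simp +contextual
  · simp

open Classical in
lemma pY_margin (b : 𝒴) :
    pmfMap p (fun q => q.2.1) b = ∑ a, ∑ c, p (a, b, c) := by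
  rw [pmfMap, Fintype.sum_prod_type]
  apply Finset.sum_congr rfl
  intro x _
  rw [Fintype.sum_prod_type, Finset.sum_eq_single b]
  · simp
  · simp +contextual
  · simp

open Classical in
lemma pY_eq_sum_pXY (b : 𝒴) :
    pmfMap p (fun q => q.2.1) b = ∑ a, pmfMap p (fun q => (q.1, q.2.1)) (a, b) := by
  rw [pY_margin]
  exact Finset.sum_congr rfl fun a _ => (pXY_margin p a b).symm

open Classical in
lemma pY_eq_sum_pYZ (b : 𝒴) :
    pmfMap p (fun q => q.2.1) b = ∑ c, pmfMap p (fun q => (q.2.1, q.2.2)) (b, c) := by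
  rw [pY_margin, Finset.sum_comm]
  exact Finset.sum_congr rfl fun c _ => (pYZ_margin p b c).symm

end Marginals

open Classical in
/-- the "ideal" empirical triple distribution built from the pair types -/
noncomputable def Tf {n : ℕ} (xs : Fin n → 𝒳) (ys : Fin n → 𝒴) (w : Fin n → 𝒵) :
    𝒳 × 𝒴 × 𝒵 → ℝ :=
  fun q => ((dcnt xs ys q.1 q.2.1 : ℝ) * (gcnt ys w q.2.1 {q.2.2} : ℝ))
    / ((n : ℝ) * (kcnt ys q.2.1 : ℝ))

open Classical in
lemma claimA {ε : ℝ} (p : 𝒳 × 𝒴 × 𝒵 → ℝ) (hp : IsPMF p)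
    (hmk : ∀ x y z, p (x, y, z) * pmfMap p (fun q => q.2.1) y =
      pmfMap p (fun q => (q.1, q.2.1)) (x, y) * pmfMap p (fun q => (q.2.1, q.2.2)) (y, z))
    {n : ℕ} (hn : n ≠ 0) (xs : Fin n → 𝒳) (ys : Fin n → 𝒴) (w : Fin n → 𝒵)
    (hP : tv (jointType n fun t => (xs t, ys t)) (pmfMap p fun q => (q.1, q.2.1)) < ε)
    (hQ : tv (jointType n fun t => (ys t, w t)) (pmfMap p fun q => (q.2.1, q.2.2)) < ε) :
    tv (Tf xs ys w) p < 3 * ε := by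
  classical
  have hnR : (0 : ℝ) < (n : ℝ) := by exact_mod_cast Nat.pos_of_ne_zero hn
  set PXY := pmfMap p (fun q : 𝒳 × 𝒴 × 𝒵 => (q.1, q.2.1)) with hPXY
  set PYZ := pmfMap p (fun q : 𝒳 × 𝒴 × 𝒵 => (q.2.1, q.2.2)) with hPYZ
  set pY := pmfMap p (fun q : 𝒳 × 𝒴 × 𝒵 => q.2.1) with hpY
  set D : 𝒳 → 𝒴 → ℝ := fun a b => (dcnt xs ys a b : ℝ) / n with hD
  set g : 𝒴 → 𝒵 → ℝ := fun b c => (gcnt ys w b {c} : ℝ) / n with hg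
  set k' : 𝒴 → ℝ := fun b => (kcnt ys b : ℝ) / n with hk'
  have hpnn : ∀ q, 0 ≤ p q := hp.1
  have hPXYnn : ∀ a b, 0 ≤ PXY (a, b) := by
    intro a b
    rw [hPXY, pXY_margin]
    exact Finset.sum_nonneg fun c _ => hpnn _
  have hgnn : ∀ b c, 0 ≤ g b c := fun b c => by positivity
  have hk'nn : ∀ b, 0 ≤ k' b := fun b => by positivity
  have hgk : ∀ b c, k' b = 0 → g b c = 0 := by
    intro b c h
    have h0 : kcnt ys b = 0 := by
      simp only [hk', div_eq_zero_iff, Nat.cast_eq_zero] at h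
      exact h.resolve_right hn
    have := gcnt_le_kcnt ys w b ({c} : Set 𝒵)
    have : gcnt ys w b ({c} : Set 𝒵) = 0 := by omega
    simp [hg, this]
  have hsumg : ∀ b, ∑ c, g b c = k' b := by
    intro b
    rw [hg, hk', ← Finset.sum_div]
    congr 1
    exact_mod_cast sum_gcnt_singleton ys w b
  have hfrac : ∀ b, ∑ c, g b c / k' b ≤ 1 := by
    intro b
    by_cases hb : k' b = 0
    · rw [Finset.sum_congr rfl (fun c _ => by rw [hb, div_zero])]
      simp
    · rw [← Finset.sum_div, hsumg, div_self hb]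
  have hTf : ∀ a b c, Tf xs ys w (a, b, c) = D a b * (g b c / k' b) := by
    intro a b c
    rw [Tf, hD, hg, hk']
    by_cases hb : (kcnt ys b : ℝ) = 0
    · simp [hb]
    · field_simp
  -- per-term triangle bound
  have hterm : ∀ a b c, |Tf xs ys w (a, b, c) - p (a, b, c)|
      ≤ g b c / k' b * |D a b - PXY (a, b)|
        + |PXY (a, b) * (g b c / k' b) - p (a, b, c)| := by
    intro a b c
    rw [hTf]
    have h1 : D a b * (g b c / k' b) - p (a, b, c)
        = (D a b - PXY (a, b)) * (g b c / k' b)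
          + (PXY (a, b) * (g b c / k' b) - p (a, b, c)) := by ring
    rw [h1]
    refine le_trans (abs_add_le _ _) ?_
    rw [abs_mul, abs_of_nonneg (by positivity : (0:ℝ) ≤ g b c / k' b)]
    ring_nf
    nlinarith [abs_nonneg (D a b - PXY (a, b))]
  -- total of the first part
  have hE1 : ∑ a, ∑ b, |D a b - PXY (a, b)| < 2 * ε := by
    have h1 := hP
    rw [tv, Fintype.sum_prod_type] at h1
    have heq : ∑ a, ∑ b, |D a b - PXY (a, b)|
        = ∑ a, ∑ b, |(jointType n fun t => (xs t, ys t)) (a, b) - PXY (a, b)| := by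
      apply Finset.sum_congr rfl; intro a _
      apply Finset.sum_congr rfl; intro b _
      rw [jointType_xy_eq]
    rw [heq]
    linarith
  have hE2 : ∑ b, ∑ c, |g b c - PYZ (b, c)| < 2 * ε := by
    have h1 := hQ
    rw [tv, Fintype.sum_prod_type] at h1
    have heq : ∑ b, ∑ c, |g b c - PYZ (b, c)|
        = ∑ b, ∑ c, |(jointType n fun t => (ys t, w t)) (b, c) - PYZ (b, c)| := by
      apply Finset.sum_congr rfl; intro b _
      apply Finset.sum_congr rfl; intro c _
      rw [jointType_pair_eq]
    rw [heq]
    linarith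
  -- the u-part, summed per b
  have hu : ∀ b, ∑ a, ∑ c, |PXY (a, b) * (g b c / k' b) - p (a, b, c)|
      ≤ 2 * ∑ c, |g b c - PYZ (b, c)| := by
    intro b
    by_cases hb : pY b = 0
    · -- everything vanishes
      have hzero : ∀ a c, p (a, b, c) = 0 := by
        intro a c
        have hsum : ∑ a, ∑ c, p (a, b, c) = 0 := by rw [← pY_margin]; exact hb
        have h1 : ∀ a ∈ (univ : Finset 𝒳), (0:ℝ) ≤ ∑ c, p (a, b, c) :=
          fun a _ => Finset.sum_nonneg fun c _ => hpnn _
        have h2 : ∑ c, p (a, b, c) = 0 :=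
          (Finset.sum_eq_zero_iff_of_nonneg h1).1 hsum a (Finset.mem_univ a)
        exact (Finset.sum_eq_zero_iff_of_nonneg
          (fun c _ => hpnn _)).1 h2 c (Finset.mem_univ c)
      have hPXY0 : ∀ a, PXY (a, b) = 0 := by
        intro a
        rw [hPXY, pXY_margin]
        exact Finset.sum_eq_zero fun c _ => hzero a c
      calc (∑ a, ∑ c, |PXY (a, b) * (g b c / k' b) - p (a, b, c)|)
          = ∑ _a : 𝒳, ∑ _c : 𝒵, (0:ℝ) := by
            apply Finset.sum_congr rfl; intro a _
            apply Finset.sum_congr rfl; intro c _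
            rw [hzero a c, hPXY0 a]
            simp
        _ ≤ 2 * ∑ c, |g b c - PYZ (b, c)| := by
            simp only [Finset.sum_const_zero]
            positivity
    · have h00 : (0:ℝ) ≤ pY b := by
        rw [hpY, pY_margin]
        exact Finset.sum_nonneg fun a _ => Finset.sum_nonneg fun c _ => hpnn _
      have hbpos : 0 < pY b := by
        rcases lt_or_eq_of_le h00 with h | h
        · exact h
        · exact absurd h.symm hb
      have hpeq : ∀ a c, p (a, b, c) = PXY (a, b) * PYZ (b, c) / pY b := by
        intro a c
        have := hmk a b c
        field_simp
        linarith [this]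
      have hstep1 : ∀ a c, |PXY (a, b) * (g b c / k' b) - p (a, b, c)|
          = PXY (a, b) * |g b c / k' b - PYZ (b, c) / pY b| := by
        intro a c
        rw [hpeq a c, show PXY (a, b) * (g b c / k' b) - PXY (a, b) * PYZ (b, c) / pY b
          = PXY (a, b) * (g b c / k' b - PYZ (b, c) / pY b) from by ring,
          abs_mul, abs_of_nonneg (hPXYnn a b)]
      have hsumPXY : ∑ a, PXY (a, b) = pY b := by
        rw [hpY, pY_eq_sum_pXY]
      have hstep2 : ∑ a, ∑ c, |PXY (a, b) * (g b c / k' b) - p (a, b, c)|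
          = ∑ c, |pY b * (g b c / k' b) - PYZ (b, c)| := by
        rw [Finset.sum_comm]
        apply Finset.sum_congr rfl
        intro c _
        rw [Finset.sum_congr rfl (fun a _ => hstep1 a c), ← Finset.sum_mul, hsumPXY]
        rw [show pY b * (g b c / k' b) - PYZ (b, c)
          = pY b * (g b c / k' b - PYZ (b, c) / pY b) from by field_simp,
          abs_mul, abs_of_nonneg hbpos.le]
      rw [hstep2]
      have hstep3 : ∀ c, |pY b * (g b c / k' b) - PYZ (b, c)|
          ≤ g b c / k' b * |pY b - k' b| + |g b c - PYZ (b, c)| := by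
        intro c
        by_cases hkb : k' b = 0
        · rw [hkb, hgk b c hkb]
          simp
        · have hgg : g b c / k' b * k' b = g b c := div_mul_cancel₀ _ hkb
          have : pY b * (g b c / k' b) - PYZ (b, c)
              = g b c / k' b * (pY b - k' b) + (g b c - PYZ (b, c)) := by
            rw [mul_sub, hgg]; ring
          rw [this]
          refine le_trans (abs_add_le _ _) ?_
          rw [abs_mul, abs_of_nonneg (by positivity : (0:ℝ) ≤ g b c / k' b)]
      have hstep4 : |pY b - k' b| ≤ ∑ c, |g b c - PYZ (b, c)| := by
        have h1 : pY b - k' b = ∑ c, (PYZ (b, c) - g b c) := by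
          rw [Finset.sum_sub_distrib, ← hsumg, hpY, pY_eq_sum_pYZ]
        rw [h1]
        refine le_trans (Finset.abs_sum_le_sum_abs _ _) ?_
        apply Finset.sum_le_sum
        intro c _
        rw [abs_sub_comm]
      calc ∑ c, |pY b * (g b c / k' b) - PYZ (b, c)|
          ≤ ∑ c, (g b c / k' b * |pY b - k' b| + |g b c - PYZ (b, c)|) :=
            Finset.sum_le_sum fun c _ => hstep3 c
        _ = (∑ c, g b c / k' b) * |pY b - k' b| + ∑ c, |g b c - PYZ (b, c)| := by
            rw [Finset.sum_add_distrib, Finset.sum_mul]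
        _ ≤ 1 * |pY b - k' b| + ∑ c, |g b c - PYZ (b, c)| := by
            have := hfrac b
            have habs : (0:ℝ) ≤ |pY b - k' b| := abs_nonneg _
            nlinarith
        _ ≤ |pY b - k' b| + ∑ c, |g b c - PYZ (b, c)| := by rw [one_mul]
        _ ≤ ∑ c, |g b c - PYZ (b, c)| + ∑ c, |g b c - PYZ (b, c)| := by
            linarith [hstep4]
        _ = 2 * ∑ c, |g b c - PYZ (b, c)| := by ring
  -- put it all together
  have htotal : ∑ q : 𝒳 × 𝒴 × 𝒵, |Tf xs ys w q - p q| < 6 * ε := by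
    have hsplit : ∑ q : 𝒳 × 𝒴 × 𝒵, |Tf xs ys w q - p q|
        = ∑ a, ∑ b, ∑ c, |Tf xs ys w (a, b, c) - p (a, b, c)| := by
      rw [Fintype.sum_prod_type]
      exact Finset.sum_congr rfl fun a _ => Fintype.sum_prod_type _
    rw [hsplit]
    have hbound : ∑ a, ∑ b, ∑ c, |Tf xs ys w (a, b, c) - p (a, b, c)|
        ≤ (∑ a, ∑ b, |D a b - PXY (a, b)|)
          + ∑ b, ∑ a, ∑ c, |PXY (a, b) * (g b c / k' b) - p (a, b, c)| := by
      calc ∑ a, ∑ b, ∑ c, |Tf xs ys w (a, b, c) - p (a, b, c)|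
          ≤ ∑ a, ∑ b, ∑ c, (g b c / k' b * |D a b - PXY (a, b)|
              + |PXY (a, b) * (g b c / k' b) - p (a, b, c)|) := by
            apply Finset.sum_le_sum; intro a _
            apply Finset.sum_le_sum; intro b _
            apply Finset.sum_le_sum; intro c _
            exact hterm a b c
        _ = ∑ a, ∑ b, ((∑ c, g b c / k' b) * |D a b - PXY (a, b)|
              + ∑ c, |PXY (a, b) * (g b c / k' b) - p (a, b, c)|) := by
            apply Finset.sum_congr rfl; intro a _
            apply Finset.sum_congr rfl; intro b _
            rw [Finset.sum_add_distrib, Finset.sum_mul]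
        _ ≤ ∑ a, ∑ b, (|D a b - PXY (a, b)|
              + ∑ c, |PXY (a, b) * (g b c / k' b) - p (a, b, c)|) := by
            apply Finset.sum_le_sum; intro a _
            apply Finset.sum_le_sum; intro b _
            have h1 := hfrac b
            have h2 : (0:ℝ) ≤ |D a b - PXY (a, b)| := abs_nonneg _
            have h3 : (0:ℝ) ≤ ∑ c, g b c / k' b :=
              Finset.sum_nonneg fun c _ => by positivity
            nlinarith
        _ = (∑ a, ∑ b, |D a b - PXY (a, b)|)
              + ∑ a, ∑ b, ∑ c, |PXY (a, b) * (g b c / k' b) - p (a, b, c)| := by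
            rw [← Finset.sum_add_distrib]
            apply Finset.sum_congr rfl; intro a _
            rw [Finset.sum_add_distrib]
        _ = (∑ a, ∑ b, |D a b - PXY (a, b)|)
              + ∑ b, ∑ a, ∑ c, |PXY (a, b) * (g b c / k' b) - p (a, b, c)| := by
            rw [Finset.sum_comm (s := univ) (t := univ)
              (f := fun a b => ∑ c, |PXY (a, b) * (g b c / k' b) - p (a, b, c)|)]
    have huu : ∑ b, ∑ a, ∑ c, |PXY (a, b) * (g b c / k' b) - p (a, b, c)|
        ≤ 2 * ∑ b, ∑ c, |g b c - PYZ (b, c)| := by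
      rw [Finset.mul_sum]
      exact Finset.sum_le_sum fun b _ => hu b
    linarith
  rw [tv]
  linarith

lemma tv_triangle {α : Type} [Fintype α] (f g h : α → ℝ) : tv f h ≤ tv f g + tv g h := by
  rw [tv, tv, tv, ← mul_add, ← Finset.sum_add_distrib]
  have hle : ∀ a ∈ (univ : Finset α), |f a - h a| ≤ |f a - g a| + |g a - h a| :=
    fun a _ => abs_sub_le _ _ _
  have := Finset.sum_le_sum hle
  linarith

open Classical in
lemma class_bad_count {ε : ℝ} (hε : 0 < ε) (p : 𝒳 × 𝒴 × 𝒵 → ℝ) (hp : IsPMF p)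
    (hmk : ∀ x y z, p (x, y, z) * pmfMap p (fun q => q.2.1) y =
      pmfMap p (fun q => (q.1, q.2.1)) (x, y) * pmfMap p (fun q => (q.2.1, q.2.2)) (y, z))
    {n : ℕ} (hn : n ≠ 0) (xs : Fin n → 𝒳) (ys : Fin n → 𝒴) (w : Fin n → 𝒵)
    (hP : tv (jointType n fun t => (xs t, ys t)) (pmfMap p fun q => (q.1, q.2.1)) < ε)
    (hQ : tv (jointType n fun t => (ys t, w t)) (pmfMap p fun q => (q.2.1, q.2.2)) < ε) :
    (((cls ys w).filter fun zs =>
        ¬ tv (jointType n fun t => (xs t, ys t, zs t)) p < 4 * ε).card : ℝ)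
      ≤ 2 * (Fintype.card (𝒳 × 𝒴 × 𝒵) : ℝ) * ((n : ℝ) + 1)
        * ((Fintype.card (𝒳 × 𝒴 × 𝒵) : ℝ) / ((Fintype.card (𝒳 × 𝒴 × 𝒵) : ℝ) + ε))
            ^ (⌊ε * (n : ℝ) / (Fintype.card (𝒳 × 𝒴 × 𝒵) : ℝ)⌋₊)
        * ((cls ys w).card : ℝ) := by
  classical
  have hne : Nonempty (𝒳 × 𝒴 × 𝒵) := by
    by_contra hc
    rw [not_nonempty_iff] at hc
    have := hp.2
    rw [Finset.univ_eq_empty, Finset.sum_empty] at this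
    norm_num at this
  set Kc : ℝ := (Fintype.card (𝒳 × 𝒴 × 𝒵) : ℝ) with hKc
  have hKpos : 0 < Kc := by
    rw [hKc]
    exact_mod_cast Fintype.card_pos_iff.2 hne
  have hnR : (0:ℝ) < n := by exact_mod_cast Nat.pos_of_ne_zero hn
  set s : ℝ := 2 * ε * n / Kc with hs_def
  have hs : 0 < s := by rw [hs_def]; positivity
  set q0 : ℝ := Kc / (Kc + ε) with hq0_def
  have hq0nn : 0 ≤ q0 := by rw [hq0_def]; positivity
  have hfloor : ⌊s / 2⌋₊ = ⌊ε * (n:ℝ) / Kc⌋₊ := by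
    congr 1
    rw [hs_def]
    ring
  set r : ℕ := ⌊ε * (n:ℝ) / Kc⌋₊ with hr_def
  have hθ : ∀ b : 𝒴, 1 ≤ kcnt ys b →
      ((kcnt ys b : ℝ) ^ 2) / ((kcnt ys b : ℝ) ^ 2 + s * (kcnt ys b : ℝ) / 2) ≤ q0 := by
    intro b hb
    have hκ1 : (1:ℝ) ≤ (kcnt ys b : ℝ) := by exact_mod_cast hb
    have hκn : (kcnt ys b : ℝ) ≤ n := by exact_mod_cast kcnt_le_n ys b
    set κ : ℝ := (kcnt ys b : ℝ)
    have hκpos : (0:ℝ) < κ := by linarith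
    rw [hq0_def, div_le_div_iff₀ (by positivity) (by positivity)]
    have hsκ : s * κ / 2 = ε * n * κ / Kc := by rw [hs_def]; ring
    rw [hsκ]
    have h1 : κ ^ 2 * ε ≤ ε * n * κ := by
      nlinarith [mul_nonneg (mul_nonneg hε.le hκpos.le) (sub_nonneg.2 hκn)]
    have h3 : Kc * (κ ^ 2 + ε * n * κ / Kc) = Kc * κ ^ 2 + ε * n * κ := by
      field_simp
    rw [h3]
    nlinarith [h1]
  have htail : ∀ (a : 𝒳) (b : 𝒴) (G : Set 𝒵),
      (((cls ys w).filter fun zs =>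
          (dcnt xs ys a b : ℝ) * (gcnt ys w b G : ℝ) / (kcnt ys b : ℝ) + s
            < (ncnt xs ys zs a b G : ℝ)).card : ℝ)
        ≤ ((n : ℝ) + 1) * q0 ^ r * ((cls ys w).card : ℝ) := by
    intro a b G
    have := tail_card xs ys w a b G hn hs hq0nn (hθ b)
    rw [hfloor] at this
    exact this
  have hT := claimA p hp hmk hn xs ys w hP hQ
  -- bad set is inside the union of tails
  have hsub : ((cls ys w).filter fun zs =>
        ¬ tv (jointType n fun t => (xs t, ys t, zs t)) p < 4 * ε)
      ⊆ (univ : Finset (𝒳 × 𝒴 × 𝒵)).biUnion (fun q =>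
          ((cls ys w).filter fun zs =>
            (dcnt xs ys q.1 q.2.1 : ℝ) * (gcnt ys w q.2.1 {q.2.2} : ℝ)
                / (kcnt ys q.2.1 : ℝ) + s
              < (ncnt xs ys zs q.1 q.2.1 {q.2.2} : ℝ))
          ∪ ((cls ys w).filter fun zs =>
            (dcnt xs ys q.1 q.2.1 : ℝ) * (gcnt ys w q.2.1 ({q.2.2}ᶜ) : ℝ)
                / (kcnt ys q.2.1 : ℝ) + s
              < (ncnt xs ys zs q.1 q.2.1 ({q.2.2}ᶜ) : ℝ))) := by
    intro zs hzs
    rw [Finset.mem_filter] at hzs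
    obtain ⟨hcls, hbad⟩ := hzs
    set R := jointType n fun t => (xs t, ys t, zs t) with hR
    have h4 : 4 * ε ≤ tv R p := not_lt.1 hbad
    have htvRT : ε < tv R (Tf xs ys w) := by
      have := tv_triangle R (Tf xs ys w) p
      linarith
    have hcell : ∃ q : 𝒳 × 𝒴 × 𝒵, 2 * ε / Kc < |R q - Tf xs ys w q| := by
      by_contra hco
      push_neg at hco
      have hsum : ∑ q : 𝒳 × 𝒴 × 𝒵, |R q - Tf xs ys w q|
          ≤ (Fintype.card (𝒳 × 𝒴 × 𝒵)) • (2 * ε / Kc) :=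
        Finset.sum_le_card_nsmul _ _ _ (fun q _ => hco q)
      rw [nsmul_eq_mul, ← hKc] at hsum
      have : Kc * (2 * ε / Kc) = 2 * ε := by field_simp
      rw [this] at hsum
      rw [tv] at htvRT
      linarith
    obtain ⟨⟨a, b, c⟩, hq⟩ := hcell
    have hRval : R (a, b, c) = (ncnt xs ys zs a b {c} : ℝ) / n := by
      rw [hR]; exact jointType_triple_eq xs ys zs a b c
    have hTval : Tf xs ys w (a, b, c)
        = (dcnt xs ys a b : ℝ) * (gcnt ys w b {c} : ℝ) / ((n:ℝ) * (kcnt ys b : ℝ)) := rfl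
    rw [hRval, hTval] at hq
    set N : ℝ := (ncnt xs ys zs a b {c} : ℝ) with hN
    set d : ℝ := (dcnt xs ys a b : ℝ) with hd
    set m : ℝ := (gcnt ys w b {c} : ℝ) with hm
    set κ : ℝ := (kcnt ys b : ℝ) with hκ
    have hscale : s < |N - d * m / κ| := by
      have heq : N - d * m / κ = (n : ℝ) * (N / n - d * m / ((n:ℝ) * κ)) := by
        by_cases hκ0 : κ = 0
        · rw [hκ0]
          field_simp
        · field_simp
      rw [heq, abs_mul, abs_of_nonneg hnR.le]
      have : s = (n : ℝ) * (2 * ε / Kc) := by rw [hs_def]; field_simp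
      rw [this]
      exact (mul_lt_mul_iff_right₀ hnR).2 hq
    rw [Finset.mem_biUnion]
    refine ⟨(a, b, c), Finset.mem_univ _, ?_⟩
    rw [Finset.mem_union]
    rcases lt_abs.1 hscale with hup | hdown
    · left
      rw [Finset.mem_filter]
      exact ⟨hcls, by rw [← hd, ← hm, ← hκ, ← hN]; linarith⟩
    · right
      rw [Finset.mem_filter]
      refine ⟨hcls, ?_⟩
      have hκne : κ ≠ 0 := by
        intro hκ0
        have hd0 : dcnt xs ys a b = 0 := by
          have h1 : dcnt xs ys a b ≤ kcnt ys b := dcnt_le_kcnt xs ys a b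
          have : kcnt ys b = 0 := by rw [hκ] at hκ0; exact_mod_cast hκ0
          omega
        have : d = 0 := by rw [hd, hd0]; simp
        rw [this, hκ0] at hdown
        simp at hdown
        have : (0:ℝ) ≤ N := by rw [hN]; positivity
        linarith
      have hN' : (ncnt xs ys zs a b ({c}ᶜ : Set 𝒵) : ℝ) = d - N := by
        have := ncnt_add_compl xs ys zs a b ({c} : Set 𝒵)
        have hcast := congrArg (Nat.cast (R := ℝ)) this
        push_cast at hcast
        rw [← hN, ← hd] at hcast
        linarith
      have hm' : (gcnt ys w b ({c}ᶜ : Set 𝒵) : ℝ) = κ - m := by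
        have := gcnt_add_compl ys w b ({c} : Set 𝒵)
        have hcast := congrArg (Nat.cast (R := ℝ)) this
        push_cast at hcast
        rw [← hm, ← hκ] at hcast
        linarith
      rw [← hd, ← hκ, hN', hm']
      have : d * (κ - m) / κ = d - d * m / κ := by field_simp
      rw [this]
      linarith
  -- count
  calc (((cls ys w).filter fun zs =>
        ¬ tv (jointType n fun t => (xs t, ys t, zs t)) p < 4 * ε).card : ℝ)
      ≤ (((univ : Finset (𝒳 × 𝒴 × 𝒵)).biUnion _).card : ℝ) := by
        exact_mod_cast Finset.card_le_card hsub
    _ ≤ ∑ q : 𝒳 × 𝒴 × 𝒵, ((((cls ys w).filter fun zs =>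
            (dcnt xs ys q.1 q.2.1 : ℝ) * (gcnt ys w q.2.1 {q.2.2} : ℝ)
                / (kcnt ys q.2.1 : ℝ) + s
              < (ncnt xs ys zs q.1 q.2.1 {q.2.2} : ℝ))
          ∪ ((cls ys w).filter fun zs =>
            (dcnt xs ys q.1 q.2.1 : ℝ) * (gcnt ys w q.2.1 ({q.2.2}ᶜ) : ℝ)
                / (kcnt ys q.2.1 : ℝ) + s
              < (ncnt xs ys zs q.1 q.2.1 ({q.2.2}ᶜ) : ℝ))).card : ℝ) := by
        exact_mod_cast Finset.card_biUnion_le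
    _ ≤ ∑ _q : 𝒳 × 𝒴 × 𝒵, 2 * (((n : ℝ) + 1) * q0 ^ r * ((cls ys w).card : ℝ)) := by
        apply Finset.sum_le_sum
        rintro ⟨a, b, c⟩ _
        have hcup : ((((cls ys w).filter fun zs =>
              (dcnt xs ys a b : ℝ) * (gcnt ys w b {c} : ℝ) / (kcnt ys b : ℝ) + s
                < (ncnt xs ys zs a b {c} : ℝ))
            ∪ ((cls ys w).filter fun zs =>
              (dcnt xs ys a b : ℝ) * (gcnt ys w b ({c}ᶜ) : ℝ) / (kcnt ys b : ℝ) + s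
                < (ncnt xs ys zs a b ({c}ᶜ) : ℝ))).card : ℝ)
            ≤ (((cls ys w).filter fun zs =>
              (dcnt xs ys a b : ℝ) * (gcnt ys w b {c} : ℝ) / (kcnt ys b : ℝ) + s
                < (ncnt xs ys zs a b {c} : ℝ)).card : ℝ)
            + (((cls ys w).filter fun zs =>
              (dcnt xs ys a b : ℝ) * (gcnt ys w b ({c}ᶜ) : ℝ) / (kcnt ys b : ℝ) + s
                < (ncnt xs ys zs a b ({c}ᶜ) : ℝ)).card : ℝ) := by
          exact_mod_cast Finset.card_union_le _ _
        have ht1 := htail a b ({c} : Set 𝒵)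
        have ht2 := htail a b ({c}ᶜ : Set 𝒵)
        linarith
    _ = 2 * Kc * ((n : ℝ) + 1) * q0 ^ r * ((cls ys w).card : ℝ) := by
        rw [Finset.sum_const, Finset.card_univ, nsmul_eq_mul, ← hKc]
        ring

open Classical in
lemma fin1_filter_card (p : Fin 1 → Prop) [DecidablePred p] :
    (univ.filter p).card = if p 0 then 1 else 0 := by
  rw [show (univ : Finset (Fin 1)) = {0} from rfl, Finset.filter_singleton]
  split <;> simp

open Classical in
lemma jointType_eq_Tf_n1 (xs : Fin 1 → 𝒳) (ys : Fin 1 → 𝒴) (w : Fin 1 → 𝒵)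
    {zs : Fin 1 → 𝒵} (hzs : zs ∈ cls ys w) :
    (jointType 1 fun t => (xs t, ys t, zs t)) = Tf xs ys w := by
  funext q
  obtain ⟨a, b, c⟩ := q
  rw [jointType_triple_eq]
  show (ncnt xs ys zs a b {c} : ℝ) / (1:ℕ)
    = (dcnt xs ys a b : ℝ) * (gcnt ys w b {c} : ℝ) / (((1:ℕ) : ℝ) * (kcnt ys b : ℝ))
  have hκ : kcnt ys b = if ys 0 = b then 1 else 0 := by
    unfold kcnt Yb
    exact fin1_filter_card _
  have hd : dcnt xs ys a b = if ys 0 = b ∧ xs 0 = a then 1 else 0 := by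
    unfold dcnt Yb
    rw [Finset.filter_filter]
    exact fin1_filter_card _
  have hm : gcnt ys w b {c} = gcnt ys zs b {c} :=
    (gcnt_const_on_class one_ne_zero ys (mem_cls.1 hzs) b {c}).symm
  have hmz : gcnt ys zs b {c} = if ys 0 = b ∧ zs 0 = c then 1 else 0 := by
    unfold gcnt Yb
    rw [Finset.filter_filter]
    rw [cardf_congr' (q := fun t => ys t = b ∧ zs t = c) (fun t => by simp)]
    exact fin1_filter_card _
  have hN : ncnt xs ys zs a b {c} = if (ys 0 = b ∧ xs 0 = a) ∧ zs 0 = c then 1 else 0 := by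
    unfold ncnt Yb
    rw [Finset.filter_filter, Finset.filter_filter]
    rw [cardf_congr' (q := fun t => (ys t = b ∧ xs t = a) ∧ zs t = c) (fun t => by simp [and_assoc])]
    exact fin1_filter_card _
  rw [hN, hd, hm, hmz, hκ]
  by_cases h1 : ys 0 = b <;> by_cases h2 : xs 0 = a <;> by_cases h3 : zs 0 = c <;>
    simp [h1, h2, h3]

open Classical in
lemma class_bad_count_one {ε : ℝ} (hε : 0 < ε) (p : 𝒳 × 𝒴 × 𝒵 → ℝ) (hp : IsPMF p)
    (hmk : ∀ x y z, p (x, y, z) * pmfMap p (fun q => q.2.1) y =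
      pmfMap p (fun q => (q.1, q.2.1)) (x, y) * pmfMap p (fun q => (q.2.1, q.2.2)) (y, z))
    (xs : Fin 1 → 𝒳) (ys : Fin 1 → 𝒴) (w : Fin 1 → 𝒵)
    (hP : tv (jointType 1 fun t => (xs t, ys t)) (pmfMap p fun q => (q.1, q.2.1)) < ε)
    (hQ : tv (jointType 1 fun t => (ys t, w t)) (pmfMap p fun q => (q.2.1, q.2.2)) < ε) :
    ((cls ys w).filter fun zs =>
      ¬ tv (jointType 1 fun t => (xs t, ys t, zs t)) p < 4 * ε).card = 0 := by
  rw [Finset.card_eq_zero, Finset.eq_empty_iff_forall_notMem]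
  intro zs hzs
  rw [Finset.mem_filter] at hzs
  obtain ⟨hcls, hbad⟩ := hzs
  have hT := claimA p hp hmk one_ne_zero xs ys w hP hQ
  apply hbad
  rw [jointType_eq_Tf_n1 xs ys w hcls]
  linarith

open Classical in
lemma cls_symm {n : ℕ} {ys : Fin n → 𝒴} {w zs : Fin n → 𝒵} :
    w ∈ cls ys zs ↔ zs ∈ cls ys w := by
  rw [mem_cls, mem_cls, eq_comm]

open Classical in
lemma cls_congr {n : ℕ} {ys : Fin n → 𝒴} {w zs : Fin n → 𝒵} (h : w ∈ cls ys zs) :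
    cls ys zs = cls ys w := by
  ext u
  rw [mem_cls, mem_cls, mem_cls.1 h]

open Classical in
lemma mixture {n : ℕ} (ys : Fin n → 𝒴) (μ : (Fin n → 𝒵) → ℝ) (hμ : IsPMF μ)
    (hinv : ∀ zs zs', (jointType n fun t => (ys t, zs t)) = (jointType n fun t => (ys t, zs' t))
      → μ zs = μ zs')
    (E : (Fin n → 𝒵) → Prop) (B : ℝ) (hB : 0 ≤ B)
    (hclass : ∀ w, μ w ≠ 0 →
      (((cls ys w).filter fun zs => E zs).card : ℝ) ≤ B * ((cls ys w).card : ℝ)) :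
    probOf μ E ≤ B := by
  classical
  have hcpos : ∀ zs : Fin n → 𝒵, (0:ℝ) < ((cls ys zs).card : ℝ) := by
    intro zs
    have : zs ∈ cls ys zs := mem_cls.2 rfl
    exact_mod_cast Finset.card_pos.2 ⟨zs, this⟩
  have hμconst : ∀ zs, ∑ w ∈ cls ys zs, μ w = μ zs * ((cls ys zs).card : ℝ) := by
    intro zs
    rw [Finset.sum_congr rfl (fun w hw => hinv w zs (mem_cls.1 hw)),
      Finset.sum_const, nsmul_eq_mul]
    ring
  have step1 : ∀ zs, (if E zs then μ zs else 0)
      = ∑ w ∈ cls ys zs, (if E zs then μ w / ((cls ys zs).card : ℝ) else 0) := by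
    intro zs
    by_cases hE : E zs
    · rw [if_pos hE, Finset.sum_congr rfl (fun w _ => if_pos hE), ← Finset.sum_div,
        hμconst zs, mul_div_assoc, div_self (ne_of_gt (hcpos zs)), mul_one]
    · rw [if_neg hE, Finset.sum_congr rfl (fun w _ => if_neg hE), Finset.sum_const,
        smul_zero]
  have step2 : probOf μ E = ∑ zs, ∑ w,
      (if w ∈ cls ys zs then (if E zs then μ w / ((cls ys zs).card : ℝ) else 0) else 0) := by
    rw [probOf]
    apply Finset.sum_congr rfl
    intro zs _
    rw [step1 zs]
    rw [Finset.sum_ite_mem, Finset.univ_inter]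
  have step4 : ∀ w, (∑ zs, if w ∈ cls ys zs
        then (if E zs then μ w / ((cls ys zs).card : ℝ) else 0) else 0)
      = (((cls ys w).filter fun zs => E zs).card : ℝ) * (μ w / ((cls ys w).card : ℝ)) := by
    intro w
    have hcongr : ∀ zs, (if w ∈ cls ys zs
          then (if E zs then μ w / ((cls ys zs).card : ℝ) else 0) else 0)
        = (if zs ∈ (cls ys w).filter (fun u => E u)
            then μ w / ((cls ys w).card : ℝ) else 0) := by
      intro zs
      by_cases hm : w ∈ cls ys zs
      · rw [if_pos hm, cls_congr hm]
        have hzw : zs ∈ cls ys w := cls_symm.1 hm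
        by_cases hE : E zs
        · rw [if_pos hE, if_pos (Finset.mem_filter.2 ⟨hzw, hE⟩)]
        · rw [if_neg hE, if_neg (fun hc => hE (Finset.mem_filter.1 hc).2)]
      · rw [if_neg hm, if_neg (fun hc => hm (cls_symm.2 (Finset.mem_filter.1 hc).1))]
    rw [Finset.sum_congr rfl (fun zs _ => hcongr zs), Finset.sum_ite_mem,
      Finset.univ_inter, Finset.sum_const, nsmul_eq_mul]
  have step5 : probOf μ E
      = ∑ w, (((cls ys w).filter fun zs => E zs).card : ℝ) * (μ w / ((cls ys w).card : ℝ)) := by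
    rw [step2, Finset.sum_comm]
    exact Finset.sum_congr rfl fun w _ => step4 w
  rw [step5]
  have hfinal : ∀ w, (((cls ys w).filter fun zs => E zs).card : ℝ)
      * (μ w / ((cls ys w).card : ℝ)) ≤ B * μ w := by
    intro w
    by_cases hw : μ w = 0
    · rw [hw]
      simp
    · have h1 := hclass w hw
      have h2 : 0 ≤ μ w := hμ.1 w
      have h3 := hcpos w
      rw [mul_div_assoc', div_le_iff₀ h3]
      calc (((cls ys w).filter fun zs => E zs).card : ℝ) * μ w
          ≤ B * ((cls ys w).card : ℝ) * μ w := mul_le_mul_of_nonneg_right h1 h2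
        _ = B * μ w * ((cls ys w).card : ℝ) := by ring
  calc ∑ w, (((cls ys w).filter fun zs => E zs).card : ℝ) * (μ w / ((cls ys w).card : ℝ))
      ≤ ∑ w, B * μ w := Finset.sum_le_sum fun w _ => hfinal w
    _ = B := by rw [← Finset.mul_sum, hμ.2, mul_one]

end SML


lemma sml_analytic (ε : ℝ) (hε : 0 < ε) (k : ℝ) (hk1 : 1 ≤ k) (n : ℕ) (hn2 : 2 ≤ n) :
    2 * k * ((n : ℝ) + 1) * (k / (k + ε)) ^ (⌊ε * (n : ℝ) / k⌋₊)
      ≤ (2 : ℝ) ^ (-((ε / k * Real.logb 2 (1 + ε / k)) * (n : ℝ))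
          + (2 + Real.logb 2 (2 * k * (1 + ε / k))) * Real.logb 2 (n : ℝ)) := by
  have hkpos : (0:ℝ) < k := lt_of_lt_of_le zero_lt_one hk1
  set u : ℝ := 1 + ε / k with hu
  have hu1 : (1:ℝ) < u := by
    have : 0 < ε / k := by positivity
    rw [hu]; linarith
  have hupos : (0:ℝ) < u := by linarith
  set t : ℝ := ε * (n : ℝ) / k with ht
  have hnR : (0:ℝ) < (n : ℝ) := by positivity
  have hn2R : (2:ℝ) ≤ (n : ℝ) := by exact_mod_cast hn2
  have htpos : 0 < t := by rw [ht]; positivity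
  set r : ℕ := ⌊t⌋₊ with hr
  have hq : k / (k + ε) = u⁻¹ := by
    rw [hu]
    field_simp
  set M : ℝ := 2 * k * u with hM
  have hM2 : (2:ℝ) ≤ M := by
    rw [hM]
    nlinarith
  have hMpos : (0:ℝ) < M := by linarith
  set c : ℝ := Real.logb 2 M with hc
  have hcnn : 0 ≤ c := by
    rw [hc]
    exact Real.logb_nonneg one_lt_two (by linarith)
  -- RHS decomposition
  have hα : -((ε / k * Real.logb 2 u) * (n : ℝ)) = Real.logb 2 u * (-t) := by
    rw [ht]; ring
  have hrhs : (2:ℝ) ^ (-((ε / k * Real.logb 2 u) * (n : ℝ)) + (2 + c) * Real.logb 2 (n:ℝ))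
      = ((n:ℝ) ^ (2:ℕ) * (n:ℝ) ^ c) * u ^ (-t) := by
    rw [Real.rpow_add two_pos, hα, Real.rpow_mul (by norm_num : (0:ℝ) ≤ 2),
      Real.rpow_logb two_pos (by norm_num) hupos]
    have h2 : (2:ℝ) ^ ((2 + c) * Real.logb 2 (n:ℝ)) = (n:ℝ) ^ ((2:ℝ) + c) := by
      rw [mul_comm, Real.rpow_mul (by norm_num : (0:ℝ) ≤ 2),
        Real.rpow_logb two_pos (by norm_num) hnR]
    rw [h2, Real.rpow_add hnR]
    have h3 : (n:ℝ) ^ (2:ℝ) = (n:ℝ) ^ (2:ℕ) := by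
      rw [← Real.rpow_natCast (n:ℝ) 2]
      norm_num
    rw [h3]
    ring
  rw [hq, hrhs]
  -- LHS bound
  have hlhs : (u⁻¹) ^ r ≤ u * u ^ (-t) := by
    have h1 : (u⁻¹) ^ r = (u ^ (r:ℝ))⁻¹ := by
      rw [inv_pow, Real.rpow_natCast]
    have h2 : t - 1 ≤ (r : ℝ) := by
      have := Nat.lt_floor_add_one t
      rw [← hr] at this
      linarith
    have h3 : u ^ (t - 1) ≤ u ^ (r:ℝ) :=
      Real.rpow_le_rpow_of_exponent_le hu1.le h2
    have h4 : (u ^ (r:ℝ))⁻¹ ≤ (u ^ (t - 1))⁻¹ := by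
      apply inv_anti₀
      · exact Real.rpow_pos_of_pos hupos _
      · exact h3
    have h5 : (u ^ (t - 1))⁻¹ = u * u ^ (-t) := by
      rw [← Real.rpow_neg hupos.le, show -(t - 1) = 1 + -t from by ring,
        Real.rpow_add hupos, Real.rpow_one]
    rw [h1, ← h5]
    exact h4
  -- combine
  have hut : (0:ℝ) < u ^ (-t) := Real.rpow_pos_of_pos hupos _
  have hnc : M ≤ (n:ℝ) ^ c := by
    have h1 : (2:ℝ) ^ c ≤ (n:ℝ) ^ c := Real.rpow_le_rpow (by norm_num) hn2R hcnn
    rw [hc, Real.rpow_logb two_pos (by norm_num) hMpos] at h1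
    exact h1
  have hn1 : (n:ℝ) + 1 ≤ (n:ℝ) ^ (2:ℕ) := by nlinarith
  calc 2 * k * ((n : ℝ) + 1) * (u⁻¹) ^ r
      ≤ 2 * k * ((n : ℝ) + 1) * (u * u ^ (-t)) := by
        apply mul_le_mul_of_nonneg_left hlhs
        positivity
    _ = M * ((n:ℝ) + 1) * u ^ (-t) := by rw [hM]; ring
    _ ≤ ((n:ℝ) ^ c * (n:ℝ) ^ (2:ℕ)) * u ^ (-t) := by
        apply mul_le_mul_of_nonneg_right _ hut.le
        calc M * ((n:ℝ) + 1) ≤ M * (n:ℝ) ^ (2:ℕ) :=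
              mul_le_mul_of_nonneg_left hn1 hMpos.le
          _ ≤ (n:ℝ) ^ c * (n:ℝ) ^ (2:ℕ) :=
              mul_le_mul_of_nonneg_right hnc (by positivity)
    _ = ((n:ℝ) ^ (2:ℕ) * (n:ℝ) ^ c) * u ^ (-t) := by ring

/-- Strong Markov Lemma: fix finite alphabets and `ε > 0`.  There are constants `α > 0`
and `β` (depending only on `ε` and the alphabet sizes) such that for every pmf `p` on
`𝒳 × 𝒴 × 𝒵` forming a Markov chain `X − Y − Z`, every pair of `ε`-jointly typical
sequences `(x^n, y^n)`, and every random sequence `Z^n ∼ μ` supported on the `z^n` that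
are `ε`-jointly typical with `y^n` and whose distribution is permutation-invariant with
respect to `y^n`, the triple `(x^n, y^n, Z^n)` is `4ε`-jointly typical with probability
at least `1 − 2^{−αn + β log n}`. -/
theorem strong_markov_lemma {𝒳 𝒴 𝒵 : Type} [Fintype 𝒳] [Fintype 𝒴] [Fintype 𝒵]
    (ε : ℝ) (hε : 0 < ε) :
    ∃ α : ℝ, 0 < α ∧ ∃ β : ℝ,
      ∀ (p : 𝒳 × 𝒴 × 𝒵 → ℝ), IsPMF p →
      (∀ x y z, p (x, y, z) * pmfMap p (fun a => a.2.1) y =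
          pmfMap p (fun a => (a.1, a.2.1)) (x, y) *
            pmfMap p (fun a => (a.2.1, a.2.2)) (y, z)) →
      ∀ (n : ℕ) (xs : Fin n → 𝒳) (ys : Fin n → 𝒴) (μ : (Fin n → 𝒵) → ℝ),
        IsPMF μ →
        tv (jointType n fun t => (xs t, ys t)) (pmfMap p fun a => (a.1, a.2.1)) < ε →
        (∀ zs, μ zs ≠ 0 →
          tv (jointType n fun t => (ys t, zs t)) (pmfMap p fun a => (a.2.1, a.2.2)) < ε) →
        (∀ zs zs', jointType n (fun t => (ys t, zs t)) = jointType n (fun t => (ys t, zs' t))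
          → μ zs = μ zs') →
        1 - (2 : ℝ) ^ (-(α * n) + β * Real.logb 2 n) ≤
          probOf μ (fun zs => tv (jointType n fun t => (xs t, ys t, zs t)) p < 4 * ε) := by
  classical
  set K : ℕ := Fintype.card (𝒳 × 𝒴 × 𝒵) with hK
  set k : ℝ := ((max K 1 : ℕ) : ℝ) with hk
  have hk1 : (1:ℝ) ≤ k := by
    rw [hk]
    exact_mod_cast le_max_right K 1
  have hkpos : (0:ℝ) < k := lt_of_lt_of_le zero_lt_one hk1
  have hu1 : (1:ℝ) < 1 + ε / k := by
    have : 0 < ε / k := by positivity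
    linarith
  refine ⟨ε / k * Real.logb 2 (1 + ε / k),
    mul_pos (by positivity) (Real.logb_pos one_lt_two hu1),
    2 + Real.logb 2 (2 * k * (1 + ε / k)), ?_⟩
  set α : ℝ := ε / k * Real.logb 2 (1 + ε / k) with hα
  set β : ℝ := 2 + Real.logb 2 (2 * k * (1 + ε / k)) with hβ
  intro p hp hmk n xs ys μ hμ hP hsupp hinv
  -- nonempty alphabet
  have hne : Nonempty (𝒳 × 𝒴 × 𝒵) := by
    by_contra hc
    rw [not_nonempty_iff] at hc
    have := hp.2
    rw [Finset.univ_eq_empty, Finset.sum_empty] at this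
    norm_num at this
  have hK1 : 1 ≤ K := by
    rw [hK]
    exact Fintype.card_pos_iff.2 hne
  have hkK : k = ((K : ℕ) : ℝ) := by
    rw [hk]
    congr 1
    exact max_eq_left hK1
  have hprobnn : 0 ≤ probOf μ (fun zs => tv (jointType n fun t => (xs t, ys t, zs t)) p < 4 * ε) := by
    rw [probOf]
    apply Finset.sum_nonneg
    intro zs _
    split_ifs
    · exact hμ.1 zs
    · exact le_refl 0
  by_cases hn0 : n = 0
  · subst hn0
    have h0 : (-(α * ((0:ℕ):ℝ)) + β * Real.logb 2 ((0:ℕ):ℝ)) = 0 := by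
      norm_num
    rw [h0, Real.rpow_zero]
    linarith [hprobnn]
  -- split the probability
  have hsplit : probOf μ (fun zs => tv (jointType n fun t => (xs t, ys t, zs t)) p < 4 * ε)
      + probOf μ (fun zs => ¬ tv (jointType n fun t => (xs t, ys t, zs t)) p < 4 * ε) = 1 := by
    rw [probOf, probOf, ← Finset.sum_add_distrib]
    rw [Finset.sum_congr rfl (fun zs _ => by
      by_cases hzs : tv (jointType n fun t => (xs t, ys t, zs t)) p < 4 * ε
      · rw [if_pos hzs, if_neg (not_not.2 hzs), add_zero]
      · rw [if_neg hzs, if_pos hzs, zero_add])]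
    exact hμ.2
  by_cases hn1 : n = 1
  · subst hn1
    have hbadzero : probOf μ
        (fun zs => ¬ tv (jointType 1 fun t => (xs t, ys t, zs t)) p < 4 * ε) ≤ 0 := by
      apply SML.mixture ys μ hμ hinv _ 0 (le_refl 0)
      intro w hw
      have h0 := SML.class_bad_count_one hε p hp hmk xs ys w hP (hsupp w hw)
      rw [zero_mul]
      norm_cast; exact le_of_eq ((SML.cardf_congr' (fun _ => Iff.rfl)).trans h0)
    have hpow : (0:ℝ) < (2:ℝ) ^ (-(α * (1:ℕ)) + β * Real.logb 2 ((1:ℕ):ℝ)) :=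
      Real.rpow_pos_of_pos two_pos _
    linarith
  -- now n ≥ 2
  have hn2 : 2 ≤ n := by omega
  have hbad : probOf μ (fun zs => ¬ tv (jointType n fun t => (xs t, ys t, zs t)) p < 4 * ε)
      ≤ 2 * ((K:ℕ) : ℝ) * ((n : ℝ) + 1)
        * (((K:ℕ):ℝ) / (((K:ℕ):ℝ) + ε)) ^ (⌊ε * (n : ℝ) / ((K:ℕ):ℝ)⌋₊) := by
    apply SML.mixture ys μ hμ hinv
    · have hKr : (0:ℝ) < ((K:ℕ):ℝ) := by exact_mod_cast hK1
      positivity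
    · intro w hw
      refine le_trans (le_of_eq ?_)
        (SML.class_bad_count hε p hp hmk hn0 xs ys w hP (hsupp w hw))
      exact_mod_cast SML.cardf_congr' (fun _ => Iff.rfl)
  rw [← hkK] at hbad
  have han := sml_analytic ε hε k hk1 n hn2
  rw [← hα, ← hβ] at han
  linarith
end

section
/- Let (X,Y) be random variables with pmf p on the finite alphabet 𝒳 × 𝒴. Then the minimum of I(Y;U|X) over all finite random variables U jointly distributed with (X,Y) satisfying both Markov chains X − U − Y and X − Y − U equals the necessary conditional entropy H(Y†X) = min{ H(f(Y)|X) : f a function on 𝒴 such that X − f(Y) − Y is a Markov chain }. -/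
open Filter

open Classical in
/-- The joint distribution of `(X, Y, f(Y))` when `(X,Y) ∼ p`. -/
noncomputable def funJoint {𝒳 𝒴 𝒰 : Type} (p : 𝒳 × 𝒴 → ℝ) (f : 𝒴 → 𝒰) :
    𝒳 × 𝒴 × 𝒰 → ℝ :=
  fun s => if f s.2.1 = s.2.2 then p (s.1, s.2.1) else 0

/-- `X` and `Y` are conditionally independent given `U` (Markov chain `X − U − Y`)
under the joint pmf `w` on `𝒳 × 𝒴 × 𝒰`. -/
def MarkovXUY {𝒳 𝒴 𝒰 : Type} [Fintype 𝒳] [Fintype 𝒴] [Fintype 𝒰]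
    (w : 𝒳 × 𝒴 × 𝒰 → ℝ) : Prop :=
  ∀ x y u, w (x, y, u) * pmfMap w (fun s => s.2.2) u =
    pmfMap w (fun s => (s.1, s.2.2)) (x, u) * pmfMap w (fun s => (s.2.1, s.2.2)) (y, u)

/-- `X` and `U` are conditionally independent given `Y` (Markov chain `X − Y − U`)
under the joint pmf `w` on `𝒳 × 𝒴 × 𝒰`. -/
def MarkovXYU {𝒳 𝒴 𝒰 : Type} [Fintype 𝒳] [Fintype 𝒴] [Fintype 𝒰]
    (w : 𝒳 × 𝒴 × 𝒰 → ℝ) : Prop :=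
  ∀ x y u, w (x, y, u) * pmfMap w (fun s => s.2.1) y =
    pmfMap w (fun s => (s.1, s.2.1)) (x, y) * pmfMap w (fun s => (s.2.1, s.2.2)) (y, u)

set_option linter.unusedSectionVars false

section lemmas
variable {S α β γ : Type} [Fintype S] [Fintype α] [Fintype β] [Fintype γ]

open Classical Finset

lemma ite_sum_zero {c : Prop} [Decidable c] (f : S → ℝ) :
    (if c then (∑ s, f s) else 0) = ∑ s, if c then f s else 0 := by
  split <;> simp

lemma pmfMap_nonneg {p : S → ℝ} (hp : ∀ s, 0 ≤ p s) (f : S → α) (a : α) :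
    0 ≤ pmfMap p f a := by
  refine Finset.sum_nonneg fun s _ => ?_
  split <;> simp [hp s]

lemma sum_pmfMap_mul (p : S → ℝ) (f : S → α) (F : α → ℝ) :
    ∑ a, pmfMap p f a * F a = ∑ s, p s * F (f s) := by
  unfold pmfMap
  simp only [Finset.sum_mul]
  rw [Finset.sum_comm]
  refine Finset.sum_congr rfl fun s _ => ?_
  rw [Finset.sum_congr rfl (fun a _ => by rw [ite_mul, zero_mul] :
    ∀ a ∈ Finset.univ, (if f s = a then p s else 0) * F a
      = if f s = a then p s * F a else 0)]
  simp

lemma sum_pmfMap (p : S → ℝ) (f : S → α) : ∑ a, pmfMap p f a = ∑ s, p s := by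
  have := sum_pmfMap_mul p f (fun _ => 1)
  simpa using this

lemma pmfMap_comp (p : S → ℝ) (f : S → α) (g : α → β) :
    pmfMap (pmfMap p f) g = pmfMap p (g ∘ f) := by
  funext b
  unfold pmfMap
  rw [Finset.sum_congr rfl fun a _ => ite_sum_zero _]
  rw [Finset.sum_comm]
  refine Finset.sum_congr rfl fun s _ => ?_
  have : ∀ a ∈ Finset.univ, (if g a = b then (if f s = a then p s else 0) else 0)
      = if f s = a then (if g a = b then p s else 0) else 0 := by
    intro a _; split_ifs <;> simp_all
  rw [Finset.sum_congr rfl this]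
  simp

lemma pmfMap_congr {p : S → ℝ} {f g : S → α} (h : ∀ s, p s ≠ 0 → f s = g s) :
    pmfMap p f = pmfMap p g := by
  funext a
  refine Finset.sum_congr rfl fun s _ => ?_
  by_cases hs : p s = 0
  · simp [hs]
  · rw [h s hs]

lemma pmfMap_apply_self {p : S → ℝ} (hp : ∀ s, 0 ≤ p s) (f : S → α) (s : S) :
    p s ≤ pmfMap p f (f s) := by
  have := Finset.single_le_sum (f := fun s' => if f s' = f s then p s' else 0)
    (fun s' _ => by split <;> simp [hp s']) (Finset.mem_univ s)
  simpa [pmfMap] using this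

lemma pmfMap_inj_apply (p : S → ℝ) {g : S → α} (hg : Function.Injective g) (s : S) :
    pmfMap p g (g s) = p s := by
  unfold pmfMap
  rw [Finset.sum_congr rfl (fun s' _ => by rw [show (g s' = g s) = (s' = s) from by
    simp [hg.eq_iff]] : ∀ s' ∈ Finset.univ, (if g s' = g s then p s' else 0) = if s' = s then p s' else 0)]
  simp

lemma H2_pmfMap_inj (p : S → ℝ) {g : S → α} (hg : Function.Injective g) :
    H2 (pmfMap p g) = H2 p := by
  unfold H2
  rw [← Finset.sum_subset (Finset.subset_univ (Finset.univ.image g))]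
  · rw [Finset.sum_image (fun x _ y _ h => hg h)]
    refine Finset.sum_congr rfl fun s _ => ?_
    rw [pmfMap_inj_apply p hg]
  · intro a _ ha
    have : pmfMap p g a = 0 := by
      unfold pmfMap
      refine Finset.sum_eq_zero fun s _ => ?_
      have : g s ≠ a := fun h => ha (by simp [← h])
      simp [this]
    simp [this]

end lemmas
section core
variable {α β γ : Type} [Fintype α] [Fintype β] [Fintype γ]
open Classical Finset Real

lemma H2_eq {α : Type} [Fintype α] (r : α → ℝ) :
    H2 r = -∑ a, r a * Real.logb 2 (r a) := by
  unfold H2; exact Finset.sum_neg_distrib (f := fun a => r a * Real.logb 2 (r a))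

lemma gibbs (q σ : α → ℝ) (hq : ∀ i, 0 ≤ q i) (hσ : ∀ i, 0 ≤ σ i)
    (hpos : ∀ i, 0 < q i → 0 < σ i) (hsum : ∑ i, σ i ≤ ∑ i, q i) :
    0 ≤ ∑ i, q i * Real.logb 2 (q i / σ i) := by
  have key : ∀ i, q i * Real.logb 2 (σ i / q i) ≤ (σ i - q i) / Real.log 2 := by
    intro i
    rcases lt_or_eq_of_le (hq i) with hqi | hqi
    · have hσi := hpos i hqi
      have hlog : Real.log (σ i / q i) ≤ σ i / q i - 1 :=
        Real.log_le_sub_one_of_pos (by positivity)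
      rw [Real.logb, div_eq_mul_inv (Real.log _)]
      calc q i * (Real.log (σ i / q i) * (Real.log 2)⁻¹)
          ≤ q i * ((σ i / q i - 1) * (Real.log 2)⁻¹) := by
            refine mul_le_mul_of_nonneg_left ?_ (le_of_lt hqi)
            exact mul_le_mul_of_nonneg_right hlog (by positivity)
        _ = (σ i - q i) / Real.log 2 := by
            field_simp
    · rw [← hqi]
      simp only [zero_mul, sub_zero]
      exact div_nonneg (hσ i) (Real.log_nonneg one_le_two)
  have h1 : ∑ i, q i * Real.logb 2 (σ i / q i) ≤ 0 := by
    calc ∑ i, q i * Real.logb 2 (σ i / q i) ≤ ∑ i, (σ i - q i) / Real.log 2 :=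
          Finset.sum_le_sum fun i _ => key i
      _ = (∑ i, σ i - ∑ i, q i) / Real.log 2 := by
          rw [← Finset.sum_div, Finset.sum_sub_distrib]
      _ ≤ 0 := div_nonpos_of_nonpos_of_nonneg (by linarith) (Real.log_nonneg one_le_two)
  have h2 : ∀ i, q i * Real.logb 2 (q i / σ i) = -(q i * Real.logb 2 (σ i / q i)) := by
    intro i
    rcases lt_or_eq_of_le (hq i) with hqi | hqi
    · have : q i / σ i = (σ i / q i)⁻¹ := by rw [inv_div]
      rw [this, Real.logb_inv]; ring
    · rw [← hqi]; simp
  rw [Finset.sum_congr rfl fun i _ => h2 i, Finset.sum_neg_distrib]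
  linarith

lemma condMI_core (q : α × β × γ → ℝ) (hq0 : ∀ t, 0 ≤ q t) (hq1 : ∑ t, q t = 1) :
    H2 q + H2 (pmfMap q fun t => t.2.2)
      ≤ H2 (pmfMap q fun t => (t.1, t.2.2)) + H2 (pmfMap q fun t => t.2) := by
  set A := pmfMap q fun t => (t.1, t.2.2) with hA
  set B := pmfMap q fun t => t.2 with hB
  set C := pmfMap q fun t => t.2.2 with hC
  have eHA : H2 A = -∑ t, q t * Real.logb 2 (A (t.1, t.2.2)) := by
    rw [H2_eq, sum_pmfMap_mul q _ (fun a => Real.logb 2 (A a))]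
  have eHB : H2 B = -∑ t, q t * Real.logb 2 (B t.2) := by
    rw [H2_eq, sum_pmfMap_mul q _ (fun a => Real.logb 2 (B a))]
  have eHC : H2 C = -∑ t, q t * Real.logb 2 (C t.2.2) := by
    rw [H2_eq, sum_pmfMap_mul q _ (fun a => Real.logb 2 (C a))]
  have eHq : H2 q = -∑ t, q t * Real.logb 2 (q t) := H2_eq q
  set σ : α × β × γ → ℝ := fun t => if q t = 0 then 0 else A (t.1, t.2.2) * B t.2 / C t.2.2 with hσ
  have hAt : ∀ t, 0 < q t → 0 < A (t.1, t.2.2) := fun t ht =>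
    lt_of_lt_of_le ht (pmfMap_apply_self hq0 _ t)
  have hBt : ∀ t, 0 < q t → 0 < B t.2 := fun t ht =>
    lt_of_lt_of_le ht (pmfMap_apply_self hq0 _ t)
  have hCt : ∀ t, 0 < q t → 0 < C t.2.2 := fun t ht =>
    lt_of_lt_of_le ht (pmfMap_apply_self hq0 _ t)
  have key : ∀ t, q t * Real.logb 2 (q t) + q t * Real.logb 2 (C t.2.2)
      - q t * Real.logb 2 (A (t.1, t.2.2)) - q t * Real.logb 2 (B t.2)
      = q t * Real.logb 2 (q t / σ t) := by
    intro t
    rcases lt_or_eq_of_le (hq0 t) with ht | ht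
    · have h1 := hAt t ht; have h2 := hBt t ht; have h3 := hCt t ht
      have hσt : σ t = A (t.1, t.2.2) * B t.2 / C t.2.2 := by
        rw [hσ]; simp [ne_of_gt ht]
      rw [hσt, div_div_eq_mul_div, Real.logb_div (by positivity) (by positivity),
        Real.logb_mul (by positivity) (by positivity),
        Real.logb_mul (by positivity) (by positivity)]
      ring
    · rw [← ht]; ring
  have hmargA : ∀ c, ∑ a, A (a, c) = C c := by
    intro c
    rw [hA, hC]
    unfold pmfMap
    rw [Finset.sum_comm]
    refine Finset.sum_congr rfl fun t _ => ?_
    dsimp only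
    by_cases h : t.2.2 = c
    · simp [Prod.ext_iff, h]
    · simp [Prod.ext_iff, h]
  have hmargB : ∀ c, ∑ b, B (b, c) = C c := by
    intro c
    rw [hB, hC]
    unfold pmfMap
    rw [Finset.sum_comm]
    refine Finset.sum_congr rfl fun t _ => ?_
    dsimp only
    by_cases h : t.2.2 = c
    · simp [Prod.ext_iff, h]
    · simp [Prod.ext_iff, h]
  have hσsum : ∑ t, σ t ≤ ∑ t, q t := by
    rw [hq1]
    calc ∑ t, σ t ≤ ∑ t : α × β × γ, A (t.1, t.2.2) * B t.2 / C t.2.2 := by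
          refine Finset.sum_le_sum fun t _ => ?_
          rw [hσ]; dsimp only
          split
          · have h1 := pmfMap_nonneg hq0 (fun t : α × β × γ => (t.1, t.2.2)) (t.1, t.2.2)
            have h2 := pmfMap_nonneg hq0 (fun t : α × β × γ => t.2) t.2
            have h3 := pmfMap_nonneg hq0 (fun t : α × β × γ => t.2.2) t.2.2
            rw [← hA] at h1; rw [← hB] at h2; rw [← hC] at h3
            positivity
          · exact le_refl _
      _ = ∑ c, C c * C c / C c := by
          rw [Fintype.sum_prod_type]
          rw [Finset.sum_congr rfl fun a _ => Fintype.sum_prod_type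
            (f := fun bc : β × γ => A (a, bc.2) * B bc / C bc.2)]
          rw [Finset.sum_congr rfl fun a _ => Finset.sum_comm (s := Finset.univ)
            (t := Finset.univ) (f := fun b c => A (a, c) * B (b, c) / C c)]
          rw [Finset.sum_comm]
          refine Finset.sum_congr rfl fun c _ => ?_
          rw [show C c * C c / C c = (∑ a, A (a, c)) * (∑ b, B (b, c)) / C c from by
            rw [hmargA, hmargB], Finset.sum_mul_sum, Finset.sum_div]
          refine Finset.sum_congr rfl fun a _ => ?_
          rw [Finset.sum_div]
      _ ≤ ∑ c, C c := by
          refine Finset.sum_le_sum fun c _ => ?_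
          by_cases h : C c = 0
          · simp [h]
          · rw [mul_div_assoc, div_self h, mul_one]
      _ = 1 := by rw [hC, sum_pmfMap, hq1]
  have hσ0 : ∀ t, 0 ≤ σ t := by
    intro t
    rw [hσ]; dsimp only
    split
    · exact le_refl 0
    · have h1 := pmfMap_nonneg hq0 (fun t : α × β × γ => (t.1, t.2.2)) (t.1, t.2.2)
      have h2 := pmfMap_nonneg hq0 (fun t : α × β × γ => t.2) t.2
      have h3 := pmfMap_nonneg hq0 (fun t : α × β × γ => t.2.2) t.2.2
      rw [← hA] at h1; rw [← hB] at h2; rw [← hC] at h3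
      positivity
  have hσpos : ∀ t, 0 < q t → 0 < σ t := by
    intro t ht
    have hσt : σ t = A (t.1, t.2.2) * B t.2 / C t.2.2 := by
      rw [hσ]; simp [ne_of_gt ht]
    rw [hσt]
    exact div_pos (mul_pos (hAt t ht) (hBt t ht)) (hCt t ht)
  have main : 0 ≤ ∑ t, (q t * Real.logb 2 (q t) + q t * Real.logb 2 (C t.2.2)
      - q t * Real.logb 2 (A (t.1, t.2.2)) - q t * Real.logb 2 (B t.2)) := by
    rw [Finset.sum_congr rfl fun t _ => key t]
    exact gibbs q σ hq0 hσ0 hσpos hσsum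
  rw [Finset.sum_congr rfl (fun t _ => by ring :
    ∀ t ∈ Finset.univ, q t * Real.logb 2 (q t) + q t * Real.logb 2 (C t.2.2)
      - q t * Real.logb 2 (A (t.1, t.2.2)) - q t * Real.logb 2 (B t.2)
      = q t * Real.logb 2 (q t) + q t * Real.logb 2 (C t.2.2)
      - (q t * Real.logb 2 (A (t.1, t.2.2)) + q t * Real.logb 2 (B t.2))),
    Finset.sum_sub_distrib, Finset.sum_add_distrib, Finset.sum_add_distrib] at main
  rw [eHA, eHB, eHC, eHq]
  linarith
end core
section wrappers
variable {S α β γ : Type} [Fintype S] [Fintype α] [Fintype β] [Fintype γ]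
open Classical Finset Real

lemma dup_inj {A B : Type} : Function.Injective (fun t : A × B => (t.1, t.1, t.2)) := by
  intro a b h
  simp only [Prod.mk.injEq] at h
  exact Prod.ext h.1 h.2.2

lemma inj_aux1 {A B C : Type} (f : A → C) :
    Function.Injective (fun t : A × B => (t.1, f t.1, t.2)) := by
  intro a b h
  simp only [Prod.mk.injEq] at h
  exact Prod.ext h.1 h.2.2

lemma inj_aux2 {A B C D : Type} (f : A → D) :
    Function.Injective (fun t : A × B × C => (t.1, t.2.1, f t.1, t.2.2)) := by
  intro a b h
  simp only [Prod.mk.injEq] at h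
  exact Prod.ext h.1 (Prod.ext h.2.1 h.2.2.2)

lemma swap_inj {A B : Type} : Function.Injective (fun t : A × B => (t.2, t.1)) := by
  intro a b h
  simp only [Prod.mk.injEq] at h
  exact Prod.ext h.2 h.1

lemma swap3_inj {A B C : Type} (f : B → C) :
    Function.Injective (fun t : A × B => (t.2, f t.2, t.1)) := by
  intro a b h
  simp only [Prod.mk.injEq] at h
  exact Prod.ext h.2.2 h.1

lemma condMI_nonneg (w : S → ℝ) (hw : IsPMF w) (f : S → α) (g : S → β) (h : S → γ) :
    0 ≤ condMI w f g h := by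
  have hcore := condMI_core (pmfMap w fun s => (f s, g s, h s))
    (fun t => pmfMap_nonneg hw.1 _ t) (by rw [sum_pmfMap]; exact hw.2)
  have e1 : pmfMap (pmfMap w fun s => (f s, g s, h s)) (fun t => (t.1, t.2.2))
      = pmfMap w (fun s => (f s, h s)) := pmfMap_comp w _ _
  have e2 : pmfMap (pmfMap w fun s => (f s, g s, h s)) (fun t => t.2)
      = pmfMap w (fun s => (g s, h s)) := pmfMap_comp w _ _
  have e3 : pmfMap (pmfMap w fun s => (f s, g s, h s)) (fun t => t.2.2)
      = pmfMap w h := pmfMap_comp w _ _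
  rw [e1, e2, e3] at hcore
  unfold condMI
  linarith

end wrappers

section funJointLemmas
variable {𝒳 𝒴 U : Type} [Fintype 𝒳] [Fintype 𝒴] [Fintype U]
open Classical Finset Real

lemma pmfMap_funJoint {α : Type} (p : 𝒳 × 𝒴 → ℝ) (f : 𝒴 → U) (j : 𝒳 × 𝒴 × U → α) :
    pmfMap (funJoint p f) j = pmfMap p fun a => j (a.1, a.2, f a.2) := by
  funext t
  unfold pmfMap funJoint
  rw [Fintype.sum_prod_type, Fintype.sum_prod_type]
  refine Finset.sum_congr rfl fun x _ => ?_
  rw [Fintype.sum_prod_type]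
  refine Finset.sum_congr rfl fun y _ => ?_
  rw [Finset.sum_congr rfl (fun u _ => by split_ifs <;> simp_all :
    ∀ u ∈ Finset.univ,
      (if j (x, y, u) = t then (if f (x, y, u).2.1 = (x, y, u).2.2 then p ((x, y, u).1, (x, y, u).2.1) else 0) else 0)
      = if f y = u then (if j (x, y, u) = t then p (x, y) else 0) else 0)]
  simp

lemma pmfMap_marg {α : Type} (w : 𝒳 × 𝒴 × U → ℝ) (p : 𝒳 × 𝒴 → ℝ)
    (hm : ∀ x y, ∑ u, w (x, y, u) = p (x, y)) (k : 𝒳 × 𝒴 → α) :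
    pmfMap w (fun s => k (s.1, s.2.1)) = pmfMap p k := by
  funext t
  unfold pmfMap
  rw [Fintype.sum_prod_type, Fintype.sum_prod_type]
  refine Finset.sum_congr rfl fun x _ => ?_
  rw [Fintype.sum_prod_type]
  refine Finset.sum_congr rfl fun y _ => ?_
  dsimp only
  split_ifs <;> simp [hm x y]

lemma pmfMap_snd_apply (p : 𝒳 × 𝒴 → ℝ) (y : 𝒴) :
    pmfMap p (fun a => a.2) y = ∑ x, p (x, y) := by
  unfold pmfMap
  rw [Fintype.sum_prod_type]
  exact Finset.sum_congr rfl fun x _ => by simp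

lemma pmfMap_pairf_apply (p : 𝒳 × 𝒴 → ℝ) (f : 𝒴 → U) (y : 𝒴) (u : U) :
    pmfMap p (fun a => (a.2, f a.2)) (y, u)
      = if f y = u then ∑ x, p (x, y) else 0 := by
  unfold pmfMap
  by_cases h : f y = u
  · simp only [Prod.ext_iff, h, Fintype.sum_prod_type, if_pos h]
    refine Finset.sum_congr rfl fun x _ => ?_
    rw [Finset.sum_eq_single y]
    · simp [h]
    · intro b _ hb; simp [hb]
    · simp
  · simp only [Prod.ext_iff, Fintype.sum_prod_type, if_neg h]
    refine Finset.sum_eq_zero fun x _ => Finset.sum_eq_zero fun y' _ => ?_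
    split_ifs with hc
    · exact absurd (hc.1 ▸ hc.2) h
    · rfl

lemma funJoint_isPMF (p : 𝒳 × 𝒴 → ℝ) (hp : IsPMF p) (f : 𝒴 → U) :
    IsPMF (funJoint p f) := by
  constructor
  · intro s
    unfold funJoint
    split
    · exact hp.1 _
    · exact le_refl 0
  · have := hp.2
    rw [Fintype.sum_prod_type] at this ⊢
    rw [← this]
    refine Finset.sum_congr rfl fun x _ => ?_
    rw [Fintype.sum_prod_type]
    refine Finset.sum_congr rfl fun y _ => ?_
    simp [funJoint]

lemma funJoint_marg (p : 𝒳 × 𝒴 → ℝ) (f : 𝒴 → U) (x : 𝒳) (y : 𝒴) :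
    ∑ u, funJoint p f (x, y, u) = p (x, y) := by
  simp [funJoint]
end funJointLemmas
section markovLemmas
variable {𝒳 𝒴 U : Type} [Fintype 𝒳] [Fintype 𝒴] [Fintype U]
open Classical Finset Real

lemma pair_id_inj {A B : Type} : Function.Injective (fun t : A × B => (t.1, t.2)) := by
  intro a b h
  simp only [Prod.mk.injEq] at h
  exact Prod.ext h.1 h.2

lemma markovXYU_funJoint (p : 𝒳 × 𝒴 → ℝ) (f : 𝒴 → U) : MarkovXYU (funJoint p f) := by
  intro x y u
  have e1 : pmfMap (funJoint p f) (fun s => s.2.1) = pmfMap p (fun a => a.2) :=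
    pmfMap_funJoint p f _
  have e2 : pmfMap (funJoint p f) (fun s => (s.1, s.2.1)) = pmfMap p (fun a => (a.1, a.2)) :=
    pmfMap_funJoint p f _
  have e3 : pmfMap (funJoint p f) (fun s => (s.2.1, s.2.2)) = pmfMap p (fun a => (a.2, f a.2)) :=
    pmfMap_funJoint p f _
  rw [e1, e2, e3, pmfMap_pairf_apply]
  have e4 : pmfMap p (fun a => (a.1, a.2)) (x, y) = p (x, y) := pmfMap_inj_apply p pair_id_inj (x, y)
  rw [e4, show funJoint p f (x, y, u) = if f y = u then p (x, y) else 0 from rfl, pmfMap_snd_apply]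
  split_ifs with h <;> ring

lemma markovXUY_funJoint_of (p : 𝒳 × 𝒴 → ℝ) (f : 𝒴 → U)
    (hcross : ∀ y y', f y = f y' → ∀ x,
      p (x, y) * (∑ x', p (x', y')) = p (x, y') * (∑ x', p (x', y))) :
    MarkovXUY (funJoint p f) := by
  intro x y u
  have e1 : pmfMap (funJoint p f) (fun s => s.2.2) = pmfMap p (fun a => f a.2) :=
    pmfMap_funJoint p f _
  have e2 : pmfMap (funJoint p f) (fun s => (s.1, s.2.2)) = pmfMap p (fun a => (a.1, f a.2)) :=
    pmfMap_funJoint p f _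
  have e3 : pmfMap (funJoint p f) (fun s => (s.2.1, s.2.2)) = pmfMap p (fun a => (a.2, f a.2)) :=
    pmfMap_funJoint p f _
  rw [e1, e2, e3, pmfMap_pairf_apply]
  show (if f y = u then p (x, y) else 0) * pmfMap p (fun a => f a.2) u
    = pmfMap p (fun a => (a.1, f a.2)) (x, u) * (if f y = u then ∑ x', p (x', y) else 0)
  by_cases h : f y = u
  · rw [if_pos h, if_pos h]
    have eU : pmfMap p (fun a => f a.2) u = ∑ y', if f y' = u then (∑ x', p (x', y')) else 0 := by
      unfold pmfMap
      rw [Fintype.sum_prod_type, Finset.sum_comm]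
      refine Finset.sum_congr rfl fun y' _ => ?_
      dsimp only
      split_ifs <;> simp
    have eXU : pmfMap p (fun a => (a.1, f a.2)) (x, u) = ∑ y', if f y' = u then p (x, y') else 0 := by
      unfold pmfMap
      rw [Fintype.sum_prod_type, Finset.sum_comm]
      refine Finset.sum_congr rfl fun y' _ => ?_
      dsimp only
      by_cases h' : f y' = u
      · rw [if_pos h', Finset.sum_eq_single x]
        · simp [h']
        · intro b _ hb; simp [Prod.ext_iff, hb]
        · simp
      · rw [if_neg h']
        refine Finset.sum_eq_zero fun x' _ => ?_
        split_ifs with hc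
        · simp only [Prod.mk.injEq] at hc
          exact absurd hc.2 h'
        · rfl
    rw [eU, eXU, Finset.mul_sum, Finset.sum_mul]
    refine Finset.sum_congr rfl fun y' _ => ?_
    by_cases h' : f y' = u
    · rw [if_pos h', if_pos h']
      exact hcross y y' (h.trans h'.symm) x
    · rw [if_neg h', if_neg h']; ring
  · rw [if_neg h, if_neg h]; ring

lemma condMI_funJoint (p : 𝒳 × 𝒴 → ℝ) (f : 𝒴 → U) :
    condMI (funJoint p f) (fun s => s.2.1) (fun s => s.2.2) (fun s => s.1)
      = H2 (pmfMap p fun a => (f a.2, a.1)) - H2 (pmfMap p fun a => a.1) := by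
  unfold condMI
  have e1 : (pmfMap (funJoint p f) fun s => (s.2.1, s.1)) = pmfMap p (fun a => (a.2, a.1)) :=
    pmfMap_funJoint p f _
  have e2 : (pmfMap (funJoint p f) fun s => (s.2.2, s.1)) = pmfMap p (fun a => (f a.2, a.1)) :=
    pmfMap_funJoint p f _
  have e3 : (pmfMap (funJoint p f) fun s => (s.2.1, s.2.2, s.1)) = pmfMap p (fun a => (a.2, f a.2, a.1)) :=
    pmfMap_funJoint p f _
  have e4 : (pmfMap (funJoint p f) fun s => s.1) = pmfMap p (fun a => a.1) :=
    pmfMap_funJoint p f _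
  rw [e1, e2, e3, e4, H2_pmfMap_inj p (swap_inj), H2_pmfMap_inj p (swap3_inj f)]
  ring

lemma pairX_nonneg (p : 𝒳 × 𝒴 → ℝ) (hp : IsPMF p) (f : 𝒴 → U) :
    0 ≤ H2 (pmfMap p fun a => (f a.2, a.1)) - H2 (pmfMap p fun a => a.1) := by
  have h := condMI_nonneg p hp (fun a => f a.2) (fun a => f a.2) (fun a => a.1)
  unfold condMI at h
  have e : (pmfMap p fun a => (f a.2, f a.2, a.1))
      = pmfMap (pmfMap p fun a => (f a.2, a.1)) (fun t => (t.1, t.1, t.2)) :=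
    (pmfMap_comp p (fun a => (f a.2, a.1)) (fun t => (t.1, t.1, t.2))).symm
  rw [e, H2_pmfMap_inj _ dup_inj] at h
  linarith
end markovLemmas

section classify
variable {𝒳 𝒴 : Type} [Fintype 𝒳] [Fintype 𝒴]
open Classical Finset Real

open Classical in
noncomputable def condFn (p : 𝒳 × 𝒴 → ℝ) (y : 𝒴) : Option (𝒳 → ℝ) :=
  if (∑ x, p (x, y)) = 0 then none else some fun x => p (x, y) / ∑ x', p (x', y)

noncomputable def classFn [Nonempty 𝒴] (p : 𝒳 × 𝒴 → ℝ) (y : 𝒴) : Fin (Fintype.card 𝒴) :=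
  Fintype.equivFin 𝒴 (Function.invFun (condFn p) (condFn p y))

lemma condFn_eq_of_classFn [Nonempty 𝒴] {p : 𝒳 × 𝒴 → ℝ} {y y' : 𝒴}
    (h : classFn p y = classFn p y') : condFn p y = condFn p y' := by
  unfold classFn at h
  have h2 := (Fintype.equivFin 𝒴).injective h
  calc condFn p y = condFn p (Function.invFun (condFn p) (condFn p y)) :=
        (Function.invFun_eq ⟨y, rfl⟩).symm
    _ = condFn p (Function.invFun (condFn p) (condFn p y')) := by rw [h2]
    _ = condFn p y' := Function.invFun_eq ⟨y', rfl⟩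

lemma classFn_eq_of [Nonempty 𝒴] {p : 𝒳 × 𝒴 → ℝ} {y y' : 𝒴}
    (h : condFn p y = condFn p y') : classFn p y = classFn p y' := by
  unfold classFn
  rw [h]

lemma cross_of_condFn_eq {p : 𝒳 × 𝒴 → ℝ} {y y' : 𝒴}
    (h : condFn p y = condFn p y') :
    ∀ x, p (x, y) * (∑ x', p (x', y')) = p (x, y') * (∑ x', p (x', y)) := by
  intro x
  unfold condFn at h
  by_cases hy : (∑ x', p (x', y)) = 0
  · by_cases hy' : (∑ x', p (x', y')) = 0
    · rw [hy, hy']; ring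
    · rw [if_pos hy, if_neg hy'] at h
      exact absurd h (by simp)
  · by_cases hy' : (∑ x', p (x', y')) = 0
    · rw [if_neg hy, if_pos hy'] at h
      exact absurd h (by simp)
    · rw [if_neg hy, if_neg hy'] at h
      have h2 : p (x, y) / (∑ x', p (x', y)) = p (x, y') / (∑ x', p (x', y')) :=
        congrFun (Option.some.inj h) x
      rw [div_eq_div_iff hy hy'] at h2
      exact h2
end classify
section hardDir
variable {𝒳 𝒴 : Type} [Fintype 𝒳] [Fintype 𝒴]
open Classical Finset Real

lemma hard_dir [Nonempty 𝒴] (p : 𝒳 × 𝒴 → ℝ) (hp : IsPMF p) {m : ℕ}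
    (w : 𝒳 × 𝒴 × Fin m → ℝ) (hw : IsPMF w)
    (hmarg : ∀ x y, ∑ u, w (x, y, u) = p (x, y))
    (hXUY : MarkovXUY w) (hXYU : MarkovXYU w) :
    H2 (pmfMap p fun a => (classFn p a.2, a.1)) - H2 (pmfMap p fun a => a.1)
      ≤ condMI w (fun s => s.2.1) (fun s => s.2.2) (fun s => s.1) := by
  classical
  have hpY : pmfMap w (fun s => s.2.1) = pmfMap p (fun a => a.2) := pmfMap_marg w p hmarg (fun a => a.2)
  have hpXY : pmfMap w (fun s => (s.1, s.2.1)) = pmfMap p (fun a => (a.1, a.2)) :=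
    pmfMap_marg w p hmarg (fun a => (a.1, a.2))
  have dagger : ∀ u y, pmfMap w (fun s => (s.2.1, s.2.2)) (y, u) ≠ 0 →
      ((∑ x, p (x, y)) ≠ 0 ∧ pmfMap w (fun s => s.2.2) u ≠ 0 ∧
        ∀ x, p (x, y) * pmfMap w (fun s => s.2.2) u
          = pmfMap w (fun s => (s.1, s.2.2)) (x, u) * (∑ x', p (x', y))) := by
    intro u y hyu
    have hyu' : 0 < pmfMap w (fun s => (s.2.1, s.2.2)) (y, u) :=
      (pmfMap_nonneg hw.1 _ _).lt_of_ne (Ne.symm hyu)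
    have hSy : pmfMap w (fun s => (s.2.1, s.2.2)) (y, u) ≤ ∑ x, p (x, y) := by
      have h1 : pmfMap w (fun s => (s.2.1, s.2.2)) (y, u) ≤ pmfMap w (fun s => s.2.1) y := by
        unfold pmfMap
        refine Finset.sum_le_sum fun s _ => ?_
        dsimp only
        split_ifs with h1 h2 <;> simp_all [Prod.ext_iff, hw.1 s]
      rwa [hpY, pmfMap_snd_apply p y] at h1
    have hSy0 : (∑ x, p (x, y)) ≠ 0 := (lt_of_lt_of_le hyu' hSy).ne'
    have hUU : pmfMap w (fun s => (s.2.1, s.2.2)) (y, u) ≤ pmfMap w (fun s => s.2.2) u := by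
      unfold pmfMap
      refine Finset.sum_le_sum fun s _ => ?_
      dsimp only
      split_ifs with h1 h2 <;> simp_all [Prod.ext_iff, hw.1 s]
    have hU0 : pmfMap w (fun s => s.2.2) u ≠ 0 := (lt_of_lt_of_le hyu' hUU).ne'
    refine ⟨hSy0, hU0, fun x => ?_⟩
    have e1 := hXYU x y u
    rw [hpY, pmfMap_snd_apply p y, hpXY, pmfMap_inj_apply p pair_id_inj (x, y)] at e1
    have e2 := hXUY x y u
    have key : (p (x, y) * pmfMap w (fun s => s.2.2) u)
          * pmfMap w (fun s => (s.2.1, s.2.2)) (y, u)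
        = (pmfMap w (fun s => (s.1, s.2.2)) (x, u) * (∑ x', p (x', y)))
          * pmfMap w (fun s => (s.2.1, s.2.2)) (y, u) := by
      linear_combination (-(pmfMap w (fun s => s.2.2) u)) * e1 + (∑ x', p (x', y)) * e2
    exact mul_right_cancel₀ hyu key
  have sameclass : ∀ (u : Fin m) (y y' : 𝒴), pmfMap w (fun s => (s.2.1, s.2.2)) (y, u) ≠ 0 →
      pmfMap w (fun s => (s.2.1, s.2.2)) (y', u) ≠ 0 → condFn p y = condFn p y' := by
    intro u y y' hyu hyu'
    obtain ⟨hy0, hU0, hy⟩ := dagger u y hyu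
    obtain ⟨hy'0, -, hy'⟩ := dagger u y' hyu'
    unfold condFn
    rw [if_neg hy0, if_neg hy'0]
    congr 1
    funext x
    show p (x, y) / (∑ x', p (x', y)) = p (x, y') / (∑ x', p (x', y'))
    rw [div_eq_div_iff hy0 hy'0]
    refine mul_right_cancel₀ hU0 ?_
    linear_combination (∑ x', p (x', y')) * (hy x) - (∑ x', p (x', y)) * (hy' x)
  have hg : ∃ g : Fin m → Fin (Fintype.card 𝒴),
      ∀ s : 𝒳 × 𝒴 × Fin m, w s ≠ 0 → classFn p s.2.1 = g s.2.2 := by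
    refine ⟨fun u => if h : ∃ y, pmfMap w (fun s => (s.2.1, s.2.2)) (y, u) ≠ 0
      then classFn p h.choose else classFn p (Classical.arbitrary 𝒴), fun s hs => ?_⟩
    have hyu : pmfMap w (fun s => (s.2.1, s.2.2)) (s.2.1, s.2.2) ≠ 0 := by
      have h1 := pmfMap_apply_self hw.1 (fun s : 𝒳 × 𝒴 × Fin m => (s.2.1, s.2.2)) s
      have h2 := (hw.1 s).lt_of_ne (Ne.symm hs)
      exact (lt_of_lt_of_le h2 h1).ne'
    have hex : ∃ y, pmfMap w (fun s => (s.2.1, s.2.2)) (y, s.2.2) ≠ 0 := ⟨s.2.1, hyu⟩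
    show classFn p s.2.1 = if h : ∃ y, pmfMap w (fun s => (s.2.1, s.2.2)) (y, s.2.2) ≠ 0
      then classFn p h.choose else classFn p (Classical.arbitrary 𝒴)
    rw [dif_pos hex]
    exact classFn_eq_of (sameclass s.2.2 s.2.1 hex.choose hyu hex.choose_spec)
  obtain ⟨g, stepA⟩ := hg
  have core := condMI_core
    (pmfMap w fun s => (s.2.1, s.2.2, (classFn p s.2.1, s.1)))
    (pmfMap_nonneg hw.1 _) (by rw [sum_pmfMap]; exact hw.2)
  have c3 : pmfMap (pmfMap w fun s => (s.2.1, s.2.2, (classFn p s.2.1, s.1))) (fun t => t.2.2)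
      = pmfMap w (fun s => (classFn p s.2.1, s.1)) := pmfMap_comp w _ _
  have c13 : pmfMap (pmfMap w fun s => (s.2.1, s.2.2, (classFn p s.2.1, s.1)))
        (fun t => (t.1, t.2.2))
      = pmfMap w (fun s => (s.2.1, classFn p s.2.1, s.1)) := pmfMap_comp w _ _
  have c23 : pmfMap (pmfMap w fun s => (s.2.1, s.2.2, (classFn p s.2.1, s.1))) (fun t => t.2)
      = pmfMap w (fun s => (s.2.2, classFn p s.2.1, s.1)) := pmfMap_comp w _ _
  rw [c3, c13, c23] at core
  have E3 : H2 (pmfMap w fun s => (s.2.1, s.2.2, (classFn p s.2.1, s.1)))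
      = H2 (pmfMap w fun s => (s.2.1, s.2.2, s.1)) := by
    have e : (pmfMap w fun s => (s.2.1, s.2.2, (classFn p s.2.1, s.1)))
        = pmfMap (pmfMap w fun s => (s.2.1, s.2.2, s.1))
            (fun t => (t.1, t.2.1, classFn p t.1, t.2.2)) :=
      (pmfMap_comp w (fun s => (s.2.1, s.2.2, s.1))
        (fun t => (t.1, t.2.1, classFn p t.1, t.2.2))).symm
    rw [e, H2_pmfMap_inj _ (inj_aux2 (classFn p))]
  have E1 : H2 (pmfMap w fun s => (s.2.1, classFn p s.2.1, s.1))
      = H2 (pmfMap w fun s => (s.2.1, s.1)) := by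
    have e : (pmfMap w fun s => (s.2.1, classFn p s.2.1, s.1))
        = pmfMap (pmfMap w fun s => (s.2.1, s.1)) (fun t => (t.1, classFn p t.1, t.2)) :=
      (pmfMap_comp w (fun s => (s.2.1, s.1)) (fun t => (t.1, classFn p t.1, t.2))).symm
    rw [e, H2_pmfMap_inj _ (inj_aux1 (classFn p))]
  have E2 : H2 (pmfMap w fun s => (s.2.2, classFn p s.2.1, s.1))
      = H2 (pmfMap w fun s => (s.2.2, s.1)) := by
    have e0 : (pmfMap w fun s => (s.2.2, classFn p s.2.1, s.1))
        = pmfMap w (fun s => (s.2.2, g s.2.2, s.1)) :=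
      pmfMap_congr (fun s hs => by rw [stepA s hs])
    have e : pmfMap w (fun s => (s.2.2, g s.2.2, s.1))
        = pmfMap (pmfMap w fun s => (s.2.2, s.1)) (fun t => (t.1, g t.1, t.2)) :=
      (pmfMap_comp w (fun s => (s.2.2, s.1)) (fun t => (t.1, g t.1, t.2))).symm
    rw [e0, e, H2_pmfMap_inj _ (inj_aux1 g)]
  have E4 : pmfMap w (fun s => (classFn p s.2.1, s.1))
      = pmfMap p (fun a => (classFn p a.2, a.1)) :=
    pmfMap_marg w p hmarg (fun a => (classFn p a.2, a.1))
  have E5 : pmfMap w (fun s => s.1) = pmfMap p (fun a => a.1) := pmfMap_marg w p hmarg (fun a => a.1)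
  rw [E3, E1, E2, E4] at core
  simp only [condMI]
  rw [E5]
  linarith
end hardDir

/-- The minimum of `I(Y;U|X)` over all finite auxiliary variables `U` satisfying both
Markov chains `X − U − Y` and `X − Y − U` equals the necessary conditional entropy
`H(Y†X) = min { H(f(Y)|X) : X − f(Y) − Y }`. -/
theorem necessary_conditional_entropy {𝒳 𝒴 : Type} [Fintype 𝒳] [Fintype 𝒴]
    (p : 𝒳 × 𝒴 → ℝ) (hp : IsPMF p) :
    sInf {r : ℝ | ∃ m : ℕ, ∃ w : 𝒳 × 𝒴 × Fin m → ℝ, IsPMF w ∧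
        (∀ x y, (∑ u, w (x, y, u)) = p (x, y)) ∧
        MarkovXUY w ∧ MarkovXYU w ∧
        r = condMI w (fun s => s.2.1) (fun s => s.2.2) (fun s => s.1)} =
      sInf {r : ℝ | ∃ m : ℕ, ∃ f : 𝒴 → Fin m,
        MarkovXUY (funJoint p f) ∧
        r = H2 (pmfMap p fun a => (f a.2, a.1)) - H2 (pmfMap p fun a => a.1)} := by
  classical
  have hne : Nonempty (𝒳 × 𝒴) := by
    by_contra h
    rw [not_nonempty_iff] at h
    have h2 := hp.2
    rw [Finset.univ_eq_empty, Finset.sum_empty] at h2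
    exact one_ne_zero h2.symm
  haveI : Nonempty 𝒴 := ⟨hne.some.2⟩
  have hMe : MarkovXUY (funJoint p (Fintype.equivFin 𝒴)) :=
    markovXUY_funJoint_of p _ (fun y y' hyy x => by
      rw [(Fintype.equivFin 𝒴).injective hyy])
  refine le_antisymm (csInf_le_csInf ?_ ?_ ?_) ?_
  · exact ⟨0, fun r hr => by
      obtain ⟨m, w, hw, hmarg, h1, h2, hr⟩ := hr
      rw [hr]; exact condMI_nonneg w hw _ _ _⟩
  · exact ⟨_, Fintype.card 𝒴, Fintype.equivFin 𝒴, hMe, rfl⟩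
  · intro r hr
    obtain ⟨m, f, hM, hr⟩ := hr
    exact ⟨m, funJoint p f, funJoint_isPMF p hp f, funJoint_marg p f, hM,
      markovXYU_funJoint p f, by rw [condMI_funJoint p f]; exact hr⟩
  · have hbddR : BddBelow {r : ℝ | ∃ m : ℕ, ∃ f : 𝒴 → Fin m,
        MarkovXUY (funJoint p f) ∧
        r = H2 (pmfMap p fun a => (f a.2, a.1)) - H2 (pmfMap p fun a => a.1)} :=
      ⟨0, fun r hr => by
        obtain ⟨m, f, hM, hr⟩ := hr
        rw [hr]; exact pairX_nonneg p hp f⟩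
    refine le_csInf ⟨_, Fintype.card 𝒴, funJoint p (Fintype.equivFin 𝒴),
      funJoint_isPMF p hp _, funJoint_marg p _, hMe, markovXYU_funJoint p _, rfl⟩ ?_
    intro r hr
    obtain ⟨m, w, hw, hmarg, h1, h2, hr⟩ := hr
    have hMc : MarkovXUY (funJoint p (classFn p)) :=
      markovXUY_funJoint_of p _ (fun y y' hyy x =>
        cross_of_condFn_eq (condFn_eq_of_classFn hyy) x)
    refine (csInf_le hbddR ⟨Fintype.card 𝒴, classFn p, hMc, rfl⟩).trans ?_
    rw [hr]
    exact hard_dir p hp w hw hmarg h1 h2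
end

section
/- (Rate-distortion as a projection of coordination capacity, two-node network.) Let d : 𝒳 × 𝒴 → [0,∞) be a distortion function. Then the rate-distortion region for the memoryless source p0(x) in the two-node network equals the image of the coordination capacity region under the map (R, p(y|x)) ↦ (R, Σ_{x,y} p0(x)p(y|x)d(x,y)): precisely, (R,D) ∈ D_{p0} if and only if there exists a conditional pmf p(y|x) with (R, p(y|x)) ∈ C_{p0} and Σ_{x,y} p0(x)p(y|x)d(x,y) ≤ D. -/
open Filter

/-- Achievability of `p(y|x)` at rate `R` in the two-node network. -/
def TwoNodeAchievable {𝒳 𝒴 : Type} [Fintype 𝒳] [Fintype 𝒴]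
    (p0 : 𝒳 → ℝ) (R : ℝ) (q : 𝒳 → 𝒴 → ℝ) : Prop :=
  ∃ enc : (n : ℕ) → (Fin n → 𝒳) → Fin (msgCount n R),
  ∃ dec : (n : ℕ) → Fin (msgCount n R) → (Fin n → 𝒴),
    ∀ ε > 0,
      Tendsto (fun n => probOf (fun xs : Fin n → 𝒳 => ∏ t, p0 (xs t)) fun xs =>
          ε ≤ tv (jointType n fun t => (xs t, dec n (enc n xs) t))
              (fun a => p0 a.1 * q a.1 a.2)) atTop (nhds 0)

/-- Coordination capacity region of the two-node network. -/
def twoNodeCapacity {𝒳 𝒴 : Type} [Fintype 𝒳] [Fintype 𝒴] (p0 : 𝒳 → ℝ) :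
    Set (ℝ × (𝒳 → 𝒴 → ℝ)) :=
  closure {v | 0 ≤ v.1 ∧ (∀ x, IsPMF (v.2 x)) ∧ TwoNodeAchievable p0 v.1 v.2}

/-- Achievability of the rate–distortion pair `(R, D)`: a sequence of `(2^{nR}, n)` codes
whose expected average distortion has limsup at most `D`. -/
def RDAchievable {𝒳 𝒴 : Type} [Fintype 𝒳] [Fintype 𝒴]
    (p0 : 𝒳 → ℝ) (d : 𝒳 → 𝒴 → ℝ) (R D : ℝ) : Prop :=
  ∃ enc : (n : ℕ) → (Fin n → 𝒳) → Fin (msgCount n R),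
  ∃ dec : (n : ℕ) → Fin (msgCount n R) → (Fin n → 𝒴),
    Filter.limsup (fun n => ∑ xs : Fin n → 𝒳,
        (∏ t, p0 (xs t)) * ((n : ℝ)⁻¹ * ∑ t, d (xs t) (dec n (enc n xs) t)))
      atTop ≤ D

/-- Rate–distortion region of the two-node network. -/
def rdRegion {𝒳 𝒴 : Type} [Fintype 𝒳] [Fintype 𝒴]
    (p0 : 𝒳 → ℝ) (d : 𝒳 → 𝒴 → ℝ) : Set (ℝ × ℝ) :=
  closure {v : ℝ × ℝ | 0 ≤ v.1 ∧ RDAchievable (𝒴 := 𝒴) p0 d v.1 v.2}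


section Aux
set_option linter.unusedSectionVars false
open Classical

variable {α : Type} [Fintype α]

lemma sum_pi_prod {ι : Type} [Fintype ι] [DecidableEq ι] (G : ι → α → ℝ) :
    ∑ xs : ι → α, ∏ t, G t (xs t) = ∏ t, ∑ x, G t x := by
  rw [Finset.prod_univ_sum, Fintype.piFinset_univ]

lemma isPMF_prod {ι : Type} [Fintype ι] [DecidableEq ι] {p : α → ℝ} (hp : IsPMF p) :
    IsPMF (fun xs : ι → α => ∏ t, p (xs t)) := by
  constructor
  · intro xs; exact Finset.prod_nonneg fun t _ => hp.1 _
  · rw [sum_pi_prod]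
    simp [hp.2]

open Classical in
lemma sum_comp_type {n : ℕ} (s : Fin n → α) (f : α → ℝ) :
    ∑ t, f (s t) = ∑ a, ((Finset.univ.filter fun t => s t = a).card : ℝ) * f a := by
  classical
  have : ∀ a, ((Finset.univ.filter fun t => s t = a).card : ℝ) * f a
      = ∑ t, if s t = a then f a else 0 := by
    intro a
    rw [← Finset.sum_filter, Finset.sum_const, nsmul_eq_mul]
  simp_rw [this]
  rw [Finset.sum_comm]
  congr 1; ext t
  simp

open Classical in
lemma jointType_nonneg {n : ℕ} (s : Fin n → α) (a : α) : 0 ≤ jointType n s a := by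
  unfold jointType
  positivity

open Classical in
lemma jointType_sum {n : ℕ} (hn : 0 < n) (s : Fin n → α) : ∑ a, jointType n s a = 1 := by
  unfold jointType
  rw [← Finset.sum_div]
  rw [div_eq_one_iff_eq (by positivity)]
  rw [← Nat.cast_sum]
  norm_cast
  rw [← Finset.card_eq_sum_card_fiberwise (f := s) (t := Finset.univ) (fun x _ => Finset.mem_univ _)]
  simp

open Classical in
lemma avg_eq_type_sum {n : ℕ} (s : Fin n → α) (f : α → ℝ) :
    (n : ℝ)⁻¹ * ∑ t, f (s t) = ∑ a, jointType n s a * f a := by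
  rw [sum_comp_type, Finset.mul_sum]
  congr 1; ext a
  unfold jointType
  ring

end Aux
section Aux2
set_option linter.unusedSectionVars false
open Classical

variable {α : Type} [Fintype α]

lemma exp_coord {ι : Type} [Fintype ι] [DecidableEq ι] {p : α → ℝ} (hp : IsPMF p)
    (t0 : ι) (F : α → ℝ) :
    ∑ xs : ι → α, (∏ t, p (xs t)) * F (xs t0) = ∑ x, p x * F x := by
  have h1 : ∀ xs : ι → α, (∏ t, p (xs t)) * F (xs t0)
      = ∏ t, (p (xs t) * (if t = t0 then F (xs t) else 1)) := by
    intro xs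
    rw [Finset.prod_mul_distrib]
    congr 1
    rw [Finset.prod_ite_eq' Finset.univ t0 (fun t => F (xs t))]
    simp
  simp_rw [h1]
  rw [sum_pi_prod (G := fun t x => p x * (if t = t0 then F x else 1))]
  have h2 : ∀ t : ι, (∑ x, p x * (if t = t0 then F x else 1))
      = if t = t0 then ∑ x, p x * F x else 1 := by
    intro t; split_ifs with h <;> simp [hp.2]
  simp_rw [h2]
  rw [Finset.prod_ite_eq' Finset.univ t0 (fun _ => ∑ x, p x * F x)]
  simp

lemma exp_two_coord {ι : Type} [Fintype ι] [DecidableEq ι] {p : α → ℝ} (hp : IsPMF p)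
    {i j : ι} (hij : i ≠ j) (g h : α → ℝ) :
    ∑ xs : ι → α, (∏ t, p (xs t)) * (g (xs i) * h (xs j))
      = (∑ x, p x * g x) * (∑ x, p x * h x) := by
  have h1 : ∀ xs : ι → α, (∏ t, p (xs t)) * (g (xs i) * h (xs j))
      = ∏ t, (p (xs t) * (if t = i then g (xs t) else 1) * (if t = j then h (xs t) else 1)) := by
    intro xs
    rw [Finset.prod_mul_distrib, Finset.prod_mul_distrib]
    rw [Finset.prod_ite_eq' Finset.univ i (fun t => g (xs t))]
    rw [Finset.prod_ite_eq' Finset.univ j (fun t => h (xs t))]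
    simp; ring
  simp_rw [h1]
  rw [sum_pi_prod (G := fun t x => p x * (if t = i then g x else 1) * (if t = j then h x else 1))]
  have h2 : ∀ t : ι, (∑ x, p x * (if t = i then g x else 1) * (if t = j then h x else 1))
      = (if t = i then ∑ x, p x * g x else 1) * (if t = j then ∑ x, p x * h x else 1) := by
    intro t
    rcases eq_or_ne t i with rfl | hti
    · simp only [if_neg hij, if_pos rfl, mul_one]
      simp
    · rcases eq_or_ne t j with rfl | htj
      · simp [hti, hp.2]
      · simp [hti, htj, hp.2]
  simp_rw [h2]
  rw [Finset.prod_mul_distrib]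
  rw [Finset.prod_ite_eq' Finset.univ i (fun _ => ∑ x, p x * g x)]
  rw [Finset.prod_ite_eq' Finset.univ j (fun _ => ∑ x, p x * h x)]
  simp

lemma probOf_nonneg {W : Type} [Fintype W] (μ : W → ℝ) (hμ : ∀ w, 0 ≤ μ w) (E : W → Prop) :
    0 ≤ probOf μ E := by
  apply Finset.sum_nonneg
  intro w _
  split_ifs with h; exacts [hμ w, le_rfl]

lemma probOf_le_one {W : Type} [Fintype W] {μ : W → ℝ} (hμ : IsPMF μ) (E : W → Prop) :
    probOf μ E ≤ 1 := by
  rw [← hμ.2]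
  apply Finset.sum_le_sum
  intro w _
  split_ifs with h; exacts [le_rfl, hμ.1 w]

lemma probOf_mono {W : Type} [Fintype W] (μ : W → ℝ) (hμ : ∀ w, 0 ≤ μ w) {E F : W → Prop}
    (h : ∀ w, E w → F w) : probOf μ E ≤ probOf μ F := by
  apply Finset.sum_le_sum
  intro w _
  by_cases hw : E w
  · rw [if_pos hw, if_pos (h w hw)]
  · rw [if_neg hw]
    split_ifs with h; exacts [hμ w, le_rfl]

lemma probOf_union {W A : Type} [Fintype W] [Fintype A] (μ : W → ℝ) (hμ : ∀ w, 0 ≤ μ w)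
    (P : A → W → Prop) :
    probOf μ (fun w => ∃ a, P a w) ≤ ∑ a, probOf μ (fun w => P a w) := by
  unfold probOf
  rw [Finset.sum_comm]
  apply Finset.sum_le_sum
  intro w _
  simp only []
  by_cases hw : ∃ a, P a w
  · rw [if_pos hw]
    obtain ⟨a, ha⟩ := hw
    calc μ w = (if P a w then μ w else 0) := by rw [if_pos ha]
    _ ≤ ∑ a, (if P a w then μ w else 0) := by
        apply Finset.single_le_sum (f := fun a => if P a w then μ w else 0) _ (Finset.mem_univ a)
        intro b _
        try dsimp only
        split_ifs with h; exacts [hμ w, le_rfl]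
  · rw [if_neg hw]
    apply Finset.sum_nonneg
    intro b _
    split_ifs with h; exacts [hμ w, le_rfl]

lemma chebyshev {W : Type} [Fintype W] (μ : W → ℝ) (hμ : ∀ w, 0 ≤ μ w) (Z : W → ℝ)
    {c δ : ℝ} (hδ : 0 < δ) (hc : ∑ w, μ w * (Z w)^2 ≤ c) :
    probOf μ (fun w => δ ≤ |Z w|) ≤ c / δ^2 := by
  rw [le_div_iff₀ (by positivity)]
  calc probOf μ (fun w => δ ≤ |Z w|) * δ^2
      = ∑ w, (if δ ≤ |Z w| then μ w else 0) * δ^2 := by rw [probOf, Finset.sum_mul]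
    _ ≤ ∑ w, μ w * (Z w)^2 := by
        apply Finset.sum_le_sum
        intro w _
        split_ifs with hw
        · apply mul_le_mul_of_nonneg_left _ (hμ w)
          rw [← sq_abs (Z w)]
          exact pow_le_pow_left₀ hδ.le hw 2
        · rw [zero_mul]; exact mul_nonneg (hμ w) (sq_nonneg _)
    _ ≤ c := hc

lemma sum_mul_le_of_tv {P Q g : α → ℝ} {M : ℝ} (hg : ∀ a, 0 ≤ g a) (hgM : ∀ a, g a ≤ M) :
    ∑ a, P a * g a ≤ ∑ a, Q a * g a + 2 * tv P Q * M := by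
  have hM : ∀ a, |g a| ≤ M := fun a => by rw [abs_of_nonneg (hg a)]; exact hgM a
  have : ∑ a, P a * g a - ∑ a, Q a * g a = ∑ a, (P a - Q a) * g a := by
    rw [← Finset.sum_sub_distrib]; congr 1; ext a; ring
  have hb : ∑ a, (P a - Q a) * g a ≤ ∑ a, |P a - Q a| * M := by
    apply Finset.sum_le_sum
    intro a _
    calc (P a - Q a) * g a ≤ |(P a - Q a) * g a| := le_abs_self _
      _ = |P a - Q a| * |g a| := abs_mul _ _
      _ ≤ |P a - Q a| * M := mul_le_mul_of_nonneg_left (hM a) (abs_nonneg _)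
  have : ∑ a, P a * g a ≤ ∑ a, Q a * g a + ∑ a, |P a - Q a| * M := by linarith
  calc ∑ a, P a * g a ≤ ∑ a, Q a * g a + ∑ a, |P a - Q a| * M := this
    _ = ∑ a, Q a * g a + 2 * tv P Q * M := by
        rw [tv, ← Finset.sum_mul]; ring

end Aux2
section Easy
set_option linter.unusedSectionVars false
open Classical

variable {𝒳 𝒴 : Type} [Fintype 𝒳] [Fintype 𝒴]

lemma coord_to_rd (p0 : 𝒳 → ℝ) (hp0 : IsPMF p0)
    (d : 𝒳 → 𝒴 → ℝ) (hd : ∀ x y, 0 ≤ d x y) (R' : ℝ) (q : 𝒳 → 𝒴 → ℝ)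
    (hq : ∀ x, IsPMF (q x)) (hA : TwoNodeAchievable p0 R' q) :
    RDAchievable (𝒴 := 𝒴) p0 d R' (∑ x, ∑ y, p0 x * q x y * d x y) := by
  obtain ⟨enc, dec, hten⟩ := hA
  refine ⟨enc, dec, ?_⟩
  set D0 : ℝ := ∑ x, ∑ y, p0 x * q x y * d x y with hD0
  set M : ℝ := ∑ a : 𝒳 × 𝒴, d a.1 a.2 with hM
  have hM0 : 0 ≤ M := Finset.sum_nonneg fun a _ => hd a.1 a.2
  have hdM : ∀ a : 𝒳 × 𝒴, d a.1 a.2 ≤ M := fun a =>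
    Finset.single_le_sum (f := fun a : 𝒳 × 𝒴 => d a.1 a.2) (fun b _ => hd b.1 b.2)
      (Finset.mem_univ a)
  have hD00 : 0 ≤ D0 := by
    apply Finset.sum_nonneg; intro x _; apply Finset.sum_nonneg; intro y _
    exact mul_nonneg (mul_nonneg (hp0.1 x) ((hq x).1 y)) (hd x y)
  set f : ℕ → ℝ := fun n => ∑ xs : Fin n → 𝒳,
      (∏ t, p0 (xs t)) * ((n : ℝ)⁻¹ * ∑ t, d (xs t) (dec n (enc n xs) t)) with hf
  have hf0 : ∀ n, 0 ≤ f n := by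
    intro n
    apply Finset.sum_nonneg; intro xs _
    apply mul_nonneg (Finset.prod_nonneg fun t _ => hp0.1 _)
    apply mul_nonneg (by positivity)
    exact Finset.sum_nonneg fun t _ => hd _ _
  have key : ∀ ε > 0, ∀ᶠ n in atTop, f n ≤ D0 + 2 * ε * M + ε * M := by
    intro ε hε
    have h1 := (hten ε hε).eventually (eventually_lt_nhds hε)
    filter_upwards [h1, eventually_ge_atTop 1] with n hn hn1
    set μ : (Fin n → 𝒳) → ℝ := fun xs => ∏ t, p0 (xs t) with hμ
    have hμpmf : IsPMF μ := isPMF_prod hp0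
    set bad : (Fin n → 𝒳) → Prop := fun xs =>
      ε ≤ tv (jointType n fun t => (xs t, dec n (enc n xs) t))
          (fun a : 𝒳 × 𝒴 => p0 a.1 * q a.1 a.2) with hbad
    have hg : ∀ xs, (n : ℝ)⁻¹ * ∑ t, d (xs t) (dec n (enc n xs) t)
        ≤ (D0 + 2 * ε * M) + (if bad xs then M else 0) := by
      intro xs
      set T := jointType n (fun t => (xs t, dec n (enc n xs) t)) with hT
      have heq : (n : ℝ)⁻¹ * ∑ t, d (xs t) (dec n (enc n xs) t)
          = ∑ a : 𝒳 × 𝒴, T a * d a.1 a.2 :=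
        avg_eq_type_sum (fun t => (xs t, dec n (enc n xs) t)) (fun a => d a.1 a.2)
      rw [heq]
      have hD0' : D0 = ∑ a : 𝒳 × 𝒴, (p0 a.1 * q a.1 a.2) * d a.1 a.2 := by
        rw [hD0, Fintype.sum_prod_type]
      by_cases hb : bad xs
      · rw [if_pos hb]
        have hTsum : ∑ a, T a = 1 := jointType_sum (by omega) _
        have : ∑ a : 𝒳 × 𝒴, T a * d a.1 a.2 ≤ ∑ a : 𝒳 × 𝒴, T a * M := by
          apply Finset.sum_le_sum; intro a _
          exact mul_le_mul_of_nonneg_left (hdM a) (jointType_nonneg _ a)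
        calc ∑ a : 𝒳 × 𝒴, T a * d a.1 a.2 ≤ ∑ a : 𝒳 × 𝒴, T a * M := this
          _ = M := by rw [← Finset.sum_mul, hTsum, one_mul]
          _ ≤ (D0 + 2 * ε * M) + M := by linarith [mul_nonneg (mul_nonneg (by norm_num : (0:ℝ) ≤ 2) hε.le) hM0]
      · rw [if_neg hb, add_zero]
        have htv : tv T (fun a : 𝒳 × 𝒴 => p0 a.1 * q a.1 a.2) < ε := lt_of_not_ge hb
        have := sum_mul_le_of_tv (P := T) (Q := fun a : 𝒳 × 𝒴 => p0 a.1 * q a.1 a.2)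
          (g := fun a : 𝒳 × 𝒴 => d a.1 a.2) (M := M) (fun a => hd a.1 a.2) hdM
        rw [← hD0'] at this
        have htvle : 2 * tv T (fun a : 𝒳 × 𝒴 => p0 a.1 * q a.1 a.2) * M ≤ 2 * ε * M := by
          apply mul_le_mul_of_nonneg_right _ hM0
          linarith
        linarith
    calc f n = ∑ xs, μ xs * ((n : ℝ)⁻¹ * ∑ t, d (xs t) (dec n (enc n xs) t)) := rfl
      _ ≤ ∑ xs, μ xs * ((D0 + 2 * ε * M) + (if bad xs then M else 0)) := by
          apply Finset.sum_le_sum; intro xs _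
          exact mul_le_mul_of_nonneg_left (hg xs) (hμpmf.1 xs)
      _ = (D0 + 2 * ε * M) + ∑ xs, (if bad xs then μ xs * M else 0) := by
          simp_rw [mul_add, Finset.sum_add_distrib, ← Finset.sum_mul, hμpmf.2, one_mul,
            mul_ite, mul_zero]
      _ = (D0 + 2 * ε * M) + (probOf μ bad) * M := by
          rw [probOf, Finset.sum_mul]
          congr 1
          apply Finset.sum_congr rfl; intro xs _
          split_ifs <;> simp
      _ ≤ (D0 + 2 * ε * M) + ε * M := by
          have hpb : 0 ≤ probOf μ bad := probOf_nonneg μ hμpmf.1 _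
          have := hn.le
          apply add_le_add_right
          exact mul_le_mul_of_nonneg_right this hM0
  -- conclude limsup ≤ D0
  have hcb : IsCoboundedUnder (· ≤ ·) atTop f :=
    isCoboundedUnder_le_of_eventually_le atTop (Eventually.of_forall hf0)
  apply le_of_forall_pos_le_add
  intro ε hε
  have h3M : (0:ℝ) < 3 * M + 1 := by linarith
  have hε' : 0 < ε / (3 * M + 1) := by positivity
  have := key _ hε'
  have hev : ∀ᶠ n in atTop, f n ≤ D0 + ε := by
    filter_upwards [this] with n hn
    have ht : (ε / (3 * M + 1)) * (3 * M + 1) = ε := div_mul_cancel₀ _ (ne_of_gt h3M)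
    nlinarith [hε'.le, hM0]
  exact limsup_le_of_le hcb hev

end Easy
section Topo
set_option linter.unusedSectionVars false

lemma isClosed_pmf {A : Type} [Fintype A] : IsClosed {P : A → ℝ | IsPMF P} := by
  have : {P : A → ℝ | IsPMF P}
      = (⋂ a, {P : A → ℝ | 0 ≤ P a}) ∩ {P : A → ℝ | ∑ a, P a = 1} := by
    ext P; simp [IsPMF, Set.mem_iInter]
  rw [this]
  exact ((isClosed_iInter fun a => isClosed_le continuous_const (continuous_apply a)).inter
    (isClosed_eq (continuous_finset_sum _ fun a _ => continuous_apply a) continuous_const))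

lemma isCompact_pmf {A : Type} [Fintype A] : IsCompact {P : A → ℝ | IsPMF P} := by
  apply IsCompact.of_isClosed_subset (isCompact_univ_pi fun _ : A => isCompact_Icc (a := (0:ℝ)) (b := 1))
    isClosed_pmf
  intro P hP
  rw [Set.mem_univ_pi]
  intro a
  refine ⟨hP.1 a, ?_⟩
  rw [← hP.2]
  exact Finset.single_le_sum (fun b _ => hP.1 b) (Finset.mem_univ a)

lemma condPMF_eq_pi {𝒳 𝒴 : Type} [Fintype 𝒳] [Fintype 𝒴] :
    {q : 𝒳 → 𝒴 → ℝ | ∀ x, IsPMF (q x)} = Set.univ.pi (fun _ : 𝒳 => {P : 𝒴 → ℝ | IsPMF P}) := by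
  ext q; simp [Set.mem_pi]

lemma isClosed_condPMF {𝒳 𝒴 : Type} [Fintype 𝒳] [Fintype 𝒴] :
    IsClosed {q : 𝒳 → 𝒴 → ℝ | ∀ x, IsPMF (q x)} := by
  rw [condPMF_eq_pi]
  exact isClosed_set_pi fun x _ => isClosed_pmf

lemma isCompact_condPMF {𝒳 𝒴 : Type} [Fintype 𝒳] [Fintype 𝒴] :
    IsCompact {q : 𝒳 → 𝒴 → ℝ | ∀ x, IsPMF (q x)} := by
  rw [condPMF_eq_pi]
  exact isCompact_univ_pi fun _ => isCompact_pmf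

end Topo

section EasyDir
set_option linter.unusedSectionVars false
open Classical

variable {𝒳 𝒴 : Type} [Fintype 𝒳] [Fintype 𝒴]

lemma RDAchievable.mono {p0 : 𝒳 → ℝ} {d : 𝒳 → 𝒴 → ℝ} {R D D' : ℝ}
    (h : RDAchievable (𝒴 := 𝒴) p0 d R D) (hDD' : D ≤ D') : RDAchievable (𝒴 := 𝒴) p0 d R D' := by
  obtain ⟨e, dc, hl⟩ := h
  exact ⟨e, dc, hl.trans hDD'⟩

lemma distSum_tendsto {p0 : 𝒳 → ℝ} {d : 𝒳 → 𝒴 → ℝ} {w : ℕ → 𝒳 → 𝒴 → ℝ} {q : 𝒳 → 𝒴 → ℝ}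
    (hv : Filter.Tendsto w Filter.atTop (nhds q)) :
    Filter.Tendsto (fun j => ∑ x, ∑ y, p0 x * w j x y * d x y) Filter.atTop
      (nhds (∑ x, ∑ y, p0 x * q x y * d x y)) := by
  apply tendsto_finset_sum
  intro x _
  apply tendsto_finset_sum
  intro y _
  have hxy : Filter.Tendsto (fun j => w j x y) Filter.atTop (nhds (q x y)) :=
    tendsto_pi_nhds.mp (tendsto_pi_nhds.mp hv x) y
  exact (Filter.Tendsto.mul tendsto_const_nhds hxy).mul tendsto_const_nhds

lemma rhs_to_lhs (p0 : 𝒳 → ℝ) (hp0 : IsPMF p0) (d : 𝒳 → 𝒴 → ℝ) (hd : ∀ x y, 0 ≤ d x y)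
    (R D : ℝ) (q : 𝒳 → 𝒴 → ℝ) (hq : ∀ x, IsPMF (q x)) (hcap : (R, q) ∈ twoNodeCapacity p0)
    (hle : (∑ x, ∑ y, p0 x * q x y * d x y) ≤ D) :
    (R, D) ∈ rdRegion (𝒴 := 𝒴) p0 d := by
  rw [twoNodeCapacity] at hcap
  obtain ⟨v, hvS, hvlim⟩ := mem_closure_iff_seq_limit.mp hcap
  set D0 : ℝ := ∑ x, ∑ y, p0 x * q x y * d x y with hD0
  set δ : ℝ := D - D0 with hδdef
  have hδ : 0 ≤ δ := by rw [hδdef]; linarith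
  apply mem_closure_of_tendsto
    (f := fun j => ((v j).1, (∑ x, ∑ y, p0 x * (v j).2 x y * d x y) + δ))
    (b := Filter.atTop)
  · have h1 : Filter.Tendsto (fun j => (v j).1) Filter.atTop (nhds R) :=
      (continuous_fst.tendsto (R, q)).comp hvlim
    have h2 : Filter.Tendsto (fun j => (v j).2) Filter.atTop (nhds q) :=
      (continuous_snd.tendsto (R, q)).comp hvlim
    have h3 := (distSum_tendsto (p0 := p0) (d := d) h2).add_const δ
    have hDeq : D0 + δ = D := by rw [hδdef]; ring
    rw [hDeq] at h3
    exact h1.prodMk_nhds h3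
  · apply Filter.Eventually.of_forall
    intro j
    obtain ⟨hj1, hj2, hj3⟩ := hvS j
    refine ⟨hj1, ?_⟩
    have := coord_to_rd p0 hp0 d hd (v j).1 (v j).2 hj2 hj3
    exact this.mono (le_add_of_nonneg_right hδ)

end EasyDir
section Blocks
set_option linter.unusedSectionVars false
open Classical Sum

variable {𝒳 : Type} [Fintype 𝒳]

/-- Pushforward of a block-functional expectation to the space of block tuples. -/
lemma exp_blocks {k n r' m : ℕ} {p : 𝒳 → ℝ} (hp : IsPMF p)
    (se : Fin m ≃ (Fin k × Fin n) ⊕ Fin r') (G : (Fin k → Fin n → 𝒳) → ℝ) :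
    ∑ xs : Fin m → 𝒳, (∏ t, p (xs t)) * G (fun i j => xs (se.symm (Sum.inl (i, j))))
      = ∑ b : Fin k → Fin n → 𝒳, (∏ i, ∏ j, p (b i j)) * G b := by
  classical
  have h1 : ∑ xs : Fin m → 𝒳, (∏ t, p (xs t)) * G (fun i j => xs (se.symm (Sum.inl (i, j))))
      = ∑ u : (Fin k × Fin n) ⊕ Fin r' → 𝒳,
          ((∏ ij : Fin k × Fin n, p (u (Sum.inl ij))) * ∏ l : Fin r', p (u (Sum.inr l)))
            * G (fun i j => u (Sum.inl (i, j))) := by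
    rw [← Equiv.sum_comp (Equiv.arrowCongr se.symm (Equiv.refl 𝒳))
      (fun xs => (∏ t, p (xs t)) * G (fun i j => xs (se.symm (Sum.inl (i, j)))))]
    apply Finset.sum_congr rfl
    intro u _
    have hu : ∀ s, (Equiv.arrowCongr se.symm (Equiv.refl 𝒳)) u (se.symm s) = u s := by
      intro s
      simp [Equiv.arrowCongr_apply]
    have hprod : ∏ t, p ((Equiv.arrowCongr se.symm (Equiv.refl 𝒳)) u t)
        = ∏ s, p (u s) := by
      rw [← Equiv.prod_comp se.symm
        (fun t => p ((Equiv.arrowCongr se.symm (Equiv.refl 𝒳)) u t))]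
      exact Finset.prod_congr rfl fun s _ => by rw [hu]
    simp only [hu]
    rw [hprod, Fintype.prod_sum_type]
  rw [h1]
  rw [← Equiv.sum_comp (Equiv.sumArrowEquivProdArrow (Fin k × Fin n) (Fin r') 𝒳).symm]
  rw [Fintype.sum_prod_type]
  have h5 : ∀ (c : Fin k × Fin n → 𝒳) (z : Fin r' → 𝒳),
      (((∏ ij : Fin k × Fin n,
          p ((Equiv.sumArrowEquivProdArrow (Fin k × Fin n) (Fin r') 𝒳).symm (c, z) (Sum.inl ij)))
        * ∏ l : Fin r',
            p ((Equiv.sumArrowEquivProdArrow (Fin k × Fin n) (Fin r') 𝒳).symm (c, z) (Sum.inr l)))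
        * G (fun i j =>
            (Equiv.sumArrowEquivProdArrow (Fin k × Fin n) (Fin r') 𝒳).symm (c, z) (Sum.inl (i, j))))
      = ((∏ ij : Fin k × Fin n, p (c ij)) * G (fun i j => c (i, j))) * ∏ l : Fin r', p (z l) := by
    intro c z
    simp only [Equiv.sumArrowEquivProdArrow, Equiv.coe_fn_symm_mk, Sum.elim_inl, Sum.elim_inr]
    ring
  simp_rw [h5]
  rw [← Finset.sum_mul_sum]
  have hz : ∑ z : Fin r' → 𝒳, ∏ l, p (z l) = 1 := (isPMF_prod hp).2
  rw [hz, mul_one]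
  rw [← Equiv.sum_comp (Equiv.curry (Fin k) (Fin n) 𝒳)
    (fun b => (∏ i, ∏ j, p (b i j)) * G b)]
  apply Finset.sum_congr rfl
  intro c _
  rw [Fintype.prod_prod_type (fun ij : Fin k × Fin n => p (c ij))]
  rfl

/-- Variance bound for the average of i.i.d. bounded variables. -/
lemma var_avg {V : Type} [Fintype V] {ν : V → ℝ} (hν : IsPMF ν) {k : ℕ} (hk : 0 < k)
    (f : V → ℝ) (hf : ∀ v, |f v| ≤ 1) :
    ∑ b : Fin k → V, (∏ i, ν (b i)) * ((k : ℝ)⁻¹ * ∑ i, f (b i) - ∑ v, ν v * f v) ^ 2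
      ≤ 4 / k := by
  classical
  set m0 : ℝ := ∑ v, ν v * f v with hm0
  set g : V → ℝ := fun v => f v - m0 with hg
  have hm0abs : |m0| ≤ 1 := by
    rw [hm0]
    calc |∑ v, ν v * f v| ≤ ∑ v, |ν v * f v| := Finset.abs_sum_le_sum_abs _ _
      _ ≤ ∑ v, ν v := by
          apply Finset.sum_le_sum; intro v _
          rw [abs_mul, abs_of_nonneg (hν.1 v)]
          calc ν v * |f v| ≤ ν v * 1 := mul_le_mul_of_nonneg_left (hf v) (hν.1 v)
            _ = ν v := mul_one _
      _ = 1 := hν.2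
  have hgabs : ∀ v, |g v| ≤ 2 := by
    intro v
    rw [hg]
    calc |f v - m0| ≤ |f v| + |m0| := abs_sub _ _
      _ ≤ 1 + 1 := add_le_add (hf v) hm0abs
      _ = 2 := by norm_num
  have hgmean : ∑ v, ν v * g v = 0 := by
    rw [hg]
    simp_rw [mul_sub]
    rw [Finset.sum_sub_distrib, ← Finset.sum_mul, hν.2, one_mul, hm0]
    ring
  have hkR : (0:ℝ) < k := by exact_mod_cast hk
  have hdev : ∀ b : Fin k → V, ((k : ℝ)⁻¹ * ∑ i, f (b i) - m0) ^ 2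
      = (k:ℝ)⁻¹ ^ 2 * ∑ i : Fin k, ∑ i' : Fin k, g (b i) * g (b i') := by
    intro b
    have hstep : (k : ℝ)⁻¹ * ∑ i, f (b i) - m0 = (k:ℝ)⁻¹ * ∑ i, g (b i) := by
      rw [hg]
      simp only
      rw [Finset.sum_sub_distrib, Finset.sum_const, Finset.card_univ, Fintype.card_fin,
        nsmul_eq_mul, mul_sub]
      congr 1
      field_simp
    rw [hstep, mul_pow, pow_two ((k:ℝ)⁻¹), pow_two, Finset.sum_mul_sum, ← pow_two ((k:ℝ)⁻¹)]
  simp_rw [hdev]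
  have hpull : ∑ b : Fin k → V, (∏ i, ν (b i))
        * ((k:ℝ)⁻¹ ^ 2 * ∑ i : Fin k, ∑ i' : Fin k, g (b i) * g (b i'))
      = (k:ℝ)⁻¹ ^ 2 * ∑ b : Fin k → V, (∏ i, ν (b i))
        * ∑ i : Fin k, ∑ i' : Fin k, g (b i) * g (b i') := by
    rw [Finset.mul_sum]
    apply Finset.sum_congr rfl
    intro b _
    ring
  rw [hpull]
  have hswap : ∑ b : Fin k → V, (∏ i, ν (b i)) * ∑ i : Fin k, ∑ i' : Fin k, g (b i) * g (b i')
      = ∑ i : Fin k, ∑ i' : Fin k, ∑ b : Fin k → V, (∏ l, ν (b l)) * (g (b i) * g (b i')) := by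
    simp_rw [Finset.mul_sum]
    rw [Finset.sum_comm]
    apply Finset.sum_congr rfl
    intro i _
    rw [Finset.sum_comm]
  rw [hswap]
  have hterm : ∀ i i' : Fin k, ∑ b : Fin k → V, (∏ l, ν (b l)) * (g (b i) * g (b i'))
      ≤ if i = i' then 4 else 0 := by
    intro i i'
    by_cases h : i = i'
    · subst h
      rw [if_pos rfl]
      rw [exp_coord hν i (fun v => g v * g v)]
      calc ∑ v, ν v * (g v * g v) ≤ ∑ v, ν v * 4 := by
            apply Finset.sum_le_sum
            intro v _
            apply mul_le_mul_of_nonneg_left _ (hν.1 v)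
            calc g v * g v = |g v| * |g v| := (abs_mul_abs_self _).symm
              _ ≤ 2 * 2 := mul_le_mul (hgabs v) (hgabs v) (abs_nonneg _) (by norm_num)
              _ = 4 := by norm_num
        _ = 4 := by rw [← Finset.sum_mul, hν.2, one_mul]
    · rw [if_neg h]
      rw [exp_two_coord hν h g g, hgmean, mul_zero]
  have htotal : ∑ i : Fin k, ∑ i' : Fin k, ∑ b : Fin k → V, (∏ l, ν (b l)) * (g (b i) * g (b i'))
      ≤ (4:ℝ) * (k:ℝ) := by
    calc ∑ i : Fin k, ∑ i' : Fin k, ∑ b : Fin k → V, (∏ l, ν (b l)) * (g (b i) * g (b i'))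
        ≤ ∑ i : Fin k, ∑ i' : Fin k, (if i = i' then (4:ℝ) else 0) := by
          apply Finset.sum_le_sum; intro i _
          apply Finset.sum_le_sum; intro i' _
          exact hterm i i'
      _ = ∑ i : Fin k, (4:ℝ) := by
          apply Finset.sum_congr rfl; intro i _
          rw [Finset.sum_ite_eq Finset.univ i (fun _ => (4:ℝ))]
          simp
      _ = (4:ℝ) * (k:ℝ) := by
          rw [Finset.sum_const, Finset.card_univ, Fintype.card_fin, nsmul_eq_mul]
          ring
  have hkne : (k:ℝ) ≠ 0 := ne_of_gt hkR
  calc (k:ℝ)⁻¹ ^ 2 * ∑ i : Fin k, ∑ i' : Fin k, ∑ b : Fin k → V,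
        (∏ l, ν (b l)) * (g (b i) * g (b i'))
      ≤ (k:ℝ)⁻¹ ^ 2 * ((4:ℝ) * (k:ℝ)) := by
        apply mul_le_mul_of_nonneg_left htotal (by positivity)
    _ = 4 / (k:ℝ) := by
        rw [pow_two]
        field_simp
        try ring
end Blocks
section BlockCode
set_option linter.unusedSectionVars false
open Classical Sum

lemma msgCount_pos (n : ℕ) (R : ℝ) : 0 < msgCount n R :=
  Nat.ceil_pos.mpr (Real.rpow_pos_of_pos two_pos _)

lemma msgCount_pow_le {R' : ℝ} (hR' : 0 ≤ R') {n : ℕ} (hn : 0 < n) (m : ℕ) :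
    (msgCount n R') ^ (m / n) ≤ msgCount m (R' + 1 / (n : ℝ)) := by
  have hnR : (0:ℝ) < n := by exact_mod_cast hn
  set k := m / n with hk
  have hkn : k * n ≤ m := Nat.div_mul_le_self m n
  have hknR : (k : ℝ) * n ≤ m := by exact_mod_cast hkn
  have h20 : (0:ℝ) ≤ 2 := by norm_num
  have hα : (0:ℝ) ≤ (n:ℝ) * R' := mul_nonneg (le_of_lt hnR) hR'
  have hMn : (msgCount n R' : ℝ) ≤ (2:ℝ) ^ ((n:ℝ) * R' + 1) := by
    have h1 : (msgCount n R' : ℝ) < (2:ℝ) ^ ((n:ℝ) * R') + 1 :=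
      Nat.ceil_lt_add_one (le_of_lt (Real.rpow_pos_of_pos two_pos _))
    have h2 : (2:ℝ) ^ ((n:ℝ) * R') + 1 ≤ (2:ℝ) ^ ((n:ℝ) * R' + 1) := by
      rw [Real.rpow_add two_pos, Real.rpow_one]
      have : (1:ℝ) ≤ (2:ℝ) ^ ((n:ℝ) * R') := by
        rw [← Real.rpow_zero 2]
        exact Real.rpow_le_rpow_of_exponent_le (by norm_num) hα
      linarith
    linarith
  have hpow : ((msgCount n R' : ℝ)) ^ k ≤ ((2:ℝ) ^ ((n:ℝ) * R' + 1)) ^ k :=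
    pow_le_pow_left₀ (Nat.cast_nonneg _) hMn k
  have hpow2 : ((2:ℝ) ^ ((n:ℝ) * R' + 1)) ^ k = (2:ℝ) ^ (((n:ℝ) * R' + 1) * k) := by
    rw [← Real.rpow_natCast ((2:ℝ) ^ ((n:ℝ) * R' + 1)) k, ← Real.rpow_mul h20]
  have hexp : ((n:ℝ) * R' + 1) * k ≤ (m : ℝ) * (R' + 1 / (n:ℝ)) := by
    have h1 : (k : ℝ) * ((n:ℝ) * R') ≤ (m:ℝ) * R' := by
      rcases le_or_gt R' 0 with h | h
      · have : R' = 0 := le_antisymm h hR'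
        simp [this]
      · calc (k : ℝ) * ((n:ℝ) * R') = ((k:ℝ) * n) * R' := by ring
          _ ≤ (m:ℝ) * R' := mul_le_mul_of_nonneg_right hknR hR'
    have h2 : (k : ℝ) ≤ (m:ℝ) / n := by
      rw [le_div_iff₀ hnR]
      exact hknR
    have h3 : (m:ℝ) * (R' + 1/(n:ℝ)) = (m:ℝ) * R' + (m:ℝ)/n := by ring
    calc ((n:ℝ) * R' + 1) * k = (k:ℝ) * ((n:ℝ) * R') + k := by ring
      _ ≤ (m:ℝ) * R' + (m:ℝ)/n := add_le_add h1 h2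
      _ = (m:ℝ) * (R' + 1/(n:ℝ)) := h3.symm
  have hfin : ((msgCount n R' : ℝ)) ^ k ≤ (msgCount m (R' + 1/(n:ℝ)) : ℝ) := by
    calc ((msgCount n R' : ℝ)) ^ k ≤ (2:ℝ) ^ (((n:ℝ) * R' + 1) * k) := by rw [← hpow2]; exact hpow
      _ ≤ (2:ℝ) ^ ((m:ℝ) * (R' + 1/(n:ℝ))) := Real.rpow_le_rpow_of_exponent_le (by norm_num) hexp
      _ ≤ (msgCount m (R' + 1/(n:ℝ)) : ℝ) := Nat.le_ceil _
  exact_mod_cast hfin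

/-- The index equivalence splitting `Fin m` into blocks of length `n` plus a remainder. -/
noncomputable def seM (n m : ℕ) : Fin m ≃ (Fin (m / n) × Fin n) ⊕ Fin (m % n) :=
  (finCongr (by rw [mul_comm]; exact (Nat.div_add_mod m n).symm)).trans
    ((finSumFinEquiv.symm).trans (Equiv.sumCongr finProdFinEquiv.symm (Equiv.refl _)))

/-- Block encoder. -/
noncomputable def blockEnc {𝒳 : Type} [Fintype 𝒳] {R' R'' : ℝ} {n : ℕ}
    (e : (Fin n → 𝒳) → Fin (msgCount n R'))
    (hc : ∀ m, msgCount n R' ^ (m / n) ≤ msgCount m R'')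
    (m : ℕ) (xs : Fin m → 𝒳) : Fin (msgCount m R'') :=
  Fin.castLE (hc m)
    (finFunctionFinEquiv (fun i : Fin (m / n) => e (fun j => xs ((seM n m).symm (Sum.inl (i, j))))))

/-- Block decoder. -/
noncomputable def blockDec {𝒴 : Type} {R' R'' : ℝ} {n : ℕ}
    (dc : Fin (msgCount n R') → Fin n → 𝒴) (y0 : 𝒴)
    (m : ℕ) (c : Fin (msgCount m R'')) (t : Fin m) : 𝒴 :=
  Sum.elim
    (fun ij : Fin (m / n) × Fin n =>
      if h : (c : ℕ) < msgCount n R' ^ (m / n) then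
        dc (finFunctionFinEquiv.symm ⟨(c : ℕ), h⟩ ij.1) ij.2
      else y0)
    (fun _ => y0) ((seM n m) t)

/-- The `i`-th block of length `n` of a word of length `m`. -/
noncomputable def blockOf {𝒳 : Type} (n m : ℕ) (xs : Fin m → 𝒳) (i : Fin (m / n)) (j : Fin n) :
    𝒳 :=
  xs ((seM n m).symm (Sum.inl (i, j)))

/-- The joint type induced by a single-block code on input `v`. -/
noncomputable def pairT {𝒳 𝒴 : Type} {R' : ℝ} {n : ℕ}
    (e : (Fin n → 𝒳) → Fin (msgCount n R')) (dc : Fin (msgCount n R') → Fin n → 𝒴)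
    (v : Fin n → 𝒳) : (𝒳 × 𝒴) → ℝ :=
  jointType n (fun t => (v t, dc (e v) t))

lemma blockDec_enc {𝒳 𝒴 : Type} [Fintype 𝒳] {R' R'' : ℝ} {n : ℕ}
    (e : (Fin n → 𝒳) → Fin (msgCount n R'))
    (hc : ∀ m, msgCount n R' ^ (m / n) ≤ msgCount m R'')
    (dc : Fin (msgCount n R') → Fin n → 𝒴) (y0 : 𝒴)
    (m : ℕ) (xs : Fin m → 𝒳) (i : Fin (m / n)) (j : Fin n) :
    blockDec dc y0 m (blockEnc e hc m xs) ((seM n m).symm (Sum.inl (i, j)))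
      = dc (e (blockOf n m xs i)) j := by
  unfold blockDec
  rw [Equiv.apply_symm_apply, Sum.elim_inl]
  have hval : ((blockEnc e hc m xs : Fin (msgCount m R'')) : ℕ)
      = ((finFunctionFinEquiv
          (fun i : Fin (m / n) => e (fun j => xs ((seM n m).symm (Sum.inl (i, j)))))) : ℕ) := by
    unfold blockEnc
    exact Fin.coe_castLE _ _
  have hlt : ((blockEnc e hc m xs : Fin (msgCount m R'')) : ℕ) < msgCount n R' ^ (m / n) := by
    rw [hval]
    exact (finFunctionFinEquiv _).isLt
  rw [dif_pos hlt]
  have : (⟨((blockEnc e hc m xs : Fin (msgCount m R'')) : ℕ), hlt⟩ : Fin (msgCount n R' ^ (m / n)))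
      = finFunctionFinEquiv
          (fun i : Fin (m / n) => e (fun j => xs ((seM n m).symm (Sum.inl (i, j))))) := by
    apply Fin.ext
    exact hval
  rw [this, Equiv.symm_apply_apply]
  rfl

end BlockCode
section TypeClose
set_option linter.unusedSectionVars false
open Classical Sum

open Classical in
/-- Indicator with a fixed (classical) decidability instance. -/
noncomputable def ind1 {α : Type} (x a : α) : ℝ := if x = a then 1 else 0

lemma ind1_nonneg {α : Type} (x a : α) : 0 ≤ ind1 x a := by
  unfold ind1; split_ifs <;> norm_num

lemma ind1_le_one {α : Type} (x a : α) : ind1 x a ≤ 1 := by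
  unfold ind1; split_ifs <;> norm_num

open Classical in
lemma jointType_eq_inv_mul_sum {α : Type} {n : ℕ} (s : Fin n → α) (a : α) :
    jointType n s a = (n : ℝ)⁻¹ * ∑ t, ind1 (s t) a := by
  unfold jointType ind1
  rw [Finset.sum_boole]
  rw [div_eq_inv_mul]

open Classical in
lemma jointType_le_one {α : Type} {n : ℕ} (hn : 0 < n) (s : Fin n → α) (a : α) :
    jointType n s a ≤ 1 := by
  unfold jointType
  rw [div_le_one (by exact_mod_cast hn)]
  exact_mod_cast (Finset.card_filter_le _ _).trans (le_of_eq (by simp))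

lemma type_block_close {𝒳 𝒴 : Type} [Fintype 𝒳] [Fintype 𝒴] {R' R'' : ℝ} {n : ℕ} (hn : 0 < n)
    (e : (Fin n → 𝒳) → Fin (msgCount n R'))
    (hc : ∀ m', msgCount n R' ^ (m' / n) ≤ msgCount m' R'')
    (dc : Fin (msgCount n R') → Fin n → 𝒴) (y0 : 𝒴)
    {m : ℕ} (hm : n ≤ m) (xs : Fin m → 𝒳) (a : 𝒳 × 𝒴) :
    |jointType m (fun t => (xs t, blockDec dc y0 m (blockEnc e hc m xs) t)) a
      - ((m / n : ℕ) : ℝ)⁻¹ * ∑ i : Fin (m / n), pairT e dc (blockOf n m xs i) a|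
      ≤ 2 * n / m := by
  classical
  have hm0 : 0 < m := lt_of_lt_of_le hn hm
  have hk1 : 1 ≤ m / n := (Nat.one_le_div_iff hn).mpr hm
  set k : ℕ := m / n with hkdef
  set bl : Fin k → Fin n → 𝒳 := fun i j => blockOf n m xs i j with hbl
  set T : (Fin n → 𝒳) → (𝒳 × 𝒴) → ℝ := fun v => pairT e dc v with hT
  set PS : Fin m → 𝒳 × 𝒴 :=
    fun t => (xs t, blockDec dc y0 m (blockEnc e hc m xs) t) with hPS
  set S : ℝ := ∑ i : Fin k, T (bl i) a with hSdef
  set Rem : ℝ := ∑ l : Fin (m % n), ind1 (PS ((seM n m).symm (Sum.inr l))) a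
    with hRemdef
  have h1 : jointType m PS a = (m : ℝ)⁻¹ * ∑ t, ind1 (PS t) a :=
    jointType_eq_inv_mul_sum PS a
  have h2 : ∑ t, ind1 (PS t) a
      = (∑ i : Fin k, ∑ j : Fin n,
          ind1 (PS ((seM n m).symm (Sum.inl (i, j)))) a) + Rem := by
    rw [← Equiv.sum_comp (seM n m).symm (fun t => ind1 (PS t) a),
      Fintype.sum_sum_type, Fintype.sum_prod_type]
  have h3 : ∀ (i : Fin k) (j : Fin n),
      PS ((seM n m).symm (Sum.inl (i, j))) = (bl i j, dc (e (bl i)) j) := by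
    intro i j
    rw [hPS]
    simp only
    rw [blockDec_enc e hc dc y0 m xs i j]
    rfl
  have h4 : ∀ i : Fin k, ∑ j : Fin n,
      ind1 (PS ((seM n m).symm (Sum.inl (i, j)))) a = n * T (bl i) a := by
    intro i
    have : T (bl i) a = (n : ℝ)⁻¹ * ∑ j, ind1 (bl i j, dc (e (bl i)) j) a := by
      rw [hT]
      simp only [pairT]
      have h' := jointType_eq_inv_mul_sum (fun t => (bl i t, dc (e (bl i)) t)) a
      rw [hbl] at h' ⊢
      exact h'
    rw [this, ← mul_assoc, mul_inv_cancel₀ (by exact_mod_cast hn.ne' : (n:ℝ) ≠ 0), one_mul]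
    apply Finset.sum_congr rfl
    intro j _
    rw [h3 i j]
  have h5 : ∑ t, ind1 (PS t) a = n * S + Rem := by
    rw [h2, hSdef, Finset.mul_sum]
    congr 1
    exact Finset.sum_congr rfl fun i _ => h4 i
  -- bounds
  have hS0 : 0 ≤ S := Finset.sum_nonneg fun i _ => jointType_nonneg _ _
  have hSk : S ≤ k := by
    rw [hSdef]
    calc ∑ i : Fin k, T (bl i) a ≤ ∑ i : Fin k, (1:ℝ) :=
        Finset.sum_le_sum fun i _ => jointType_le_one hn _ _
      _ = k := by simp
  have hRem0 : 0 ≤ Rem := Finset.sum_nonneg fun l _ => ind1_nonneg _ _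
  have hRemr : Rem ≤ (m % n : ℕ) := by
    rw [hRemdef]
    calc ∑ l : Fin (m % n), ind1 (PS ((seM n m).symm (Sum.inr l))) a
        ≤ ∑ l : Fin (m % n), (1:ℝ) := Finset.sum_le_sum fun l _ => ind1_le_one _ _
      _ = (m % n : ℕ) := by simp
  have hrn : ((m % n : ℕ) : ℝ) ≤ n := by exact_mod_cast (Nat.mod_lt m hn).le
  have hmR : (0:ℝ) < m := by exact_mod_cast hm0
  have hkR : (1:ℝ) ≤ k := by exact_mod_cast hk1
  have hkR0 : (0:ℝ) < k := lt_of_lt_of_le one_pos hkR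
  have hmkn : (m : ℝ) = k * n + (m % n : ℕ) := by
    have := Nat.div_add_mod m n
    have h' : (k * n + m % n : ℕ) = m := by rw [mul_comm]; exact this
    exact_mod_cast h'.symm
  have hnR : (0:ℝ) < n := by exact_mod_cast hn
  rw [h1, h5]
  have heq : (m:ℝ)⁻¹ * ((n:ℝ) * S + Rem) - (k:ℝ)⁻¹ * S
      = (((n:ℝ) * S + Rem) * k - S * m) / (m * k) := by
    field_simp
    try ring
  rw [heq]
  have habs : |((n:ℝ) * S + Rem) * k - S * m| ≤ 2 * n * k := by
    rw [abs_le]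
    constructor <;> nlinarith [mul_nonneg hRem0 (le_of_lt hkR0), mul_le_mul_of_nonneg_left hrn hS0]
  calc |(((n:ℝ) * S + Rem) * k - S * m) / (m * k)|
      = |((n:ℝ) * S + Rem) * k - S * m| / (m * k) := by
        rw [abs_div, abs_of_pos (mul_pos hmR hkR0)]
    _ ≤ (2 * n * k) / (m * k) := (div_le_div_iff_of_pos_right (mul_pos hmR hkR0)).mpr habs
    _ = 2 * n / m := by
        rw [mul_div_mul_right _ _ (ne_of_gt hkR0)]

end TypeClose
section BadDev
set_option linter.unusedSectionVars false
open Classical Sum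

lemma bad_implies_dev {𝒳 𝒴 : Type} [Fintype 𝒳] [Fintype 𝒴] {R' R'' : ℝ} {n : ℕ} (hn : 0 < n)
    (e : (Fin n → 𝒳) → Fin (msgCount n R'))
    (hc : ∀ m', msgCount n R' ^ (m' / n) ≤ msgCount m' R'')
    (dc : Fin (msgCount n R') → Fin n → 𝒴) (y0 : 𝒴)
    {m : ℕ} (hnm : n ≤ m) (xs : Fin m → 𝒳) (P : 𝒳 × 𝒴 → ℝ)
    [Nonempty 𝒳] [Nonempty 𝒴]
    {ε : ℝ} (hε : 0 < ε)
    (hrem : (Fintype.card (𝒳 × 𝒴) : ℝ) * (n : ℝ) / (m : ℝ) ≤ ε / 2)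
    (hbad : ε ≤ tv (jointType m fun t => (xs t, blockDec dc y0 m (blockEnc e hc m xs) t)) P) :
    ∃ a : 𝒳 × 𝒴, ε / (2 * (Fintype.card (𝒳 × 𝒴) : ℝ))
      ≤ |((m / n : ℕ) : ℝ)⁻¹ * ∑ i : Fin (m / n), pairT e dc (blockOf n m xs i) a - P a| := by
  classical
  by_contra hno
  push_neg at hno
  set cA : ℝ := (Fintype.card (𝒳 × 𝒴) : ℝ) with hcA
  have hcA0 : (0:ℝ) < cA := by rw [hcA]; exact_mod_cast Fintype.card_pos
  have hclose : ∀ a : 𝒳 × 𝒴,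
      |jointType m (fun t => (xs t, blockDec dc y0 m (blockEnc e hc m xs) t)) a
        - ((m / n : ℕ) : ℝ)⁻¹ * ∑ i : Fin (m / n), pairT e dc (blockOf n m xs i) a| ≤ 2 * n / m :=
    fun a => type_block_close hn e hc dc y0 hnm xs a
  -- triangle inequality for tv
  have hpt : ∀ a : 𝒳 × 𝒴,
      |jointType m (fun t => (xs t, blockDec dc y0 m (blockEnc e hc m xs) t)) a - P a|
        ≤ |((m / n : ℕ) : ℝ)⁻¹ * ∑ i : Fin (m / n), pairT e dc (blockOf n m xs i) a - P a|
          + 2 * n / m := by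
    intro a
    have h := hclose a
    calc |jointType m (fun t => (xs t, blockDec dc y0 m (blockEnc e hc m xs) t)) a - P a|
        = |(((m / n : ℕ) : ℝ)⁻¹ * ∑ i : Fin (m / n), pairT e dc (blockOf n m xs i) a - P a)
            + (jointType m (fun t => (xs t, blockDec dc y0 m (blockEnc e hc m xs) t)) a
              - ((m / n : ℕ) : ℝ)⁻¹ * ∑ i : Fin (m / n), pairT e dc (blockOf n m xs i) a)| := by
          congr 1; ring
      _ ≤ |((m / n : ℕ) : ℝ)⁻¹ * ∑ i : Fin (m / n), pairT e dc (blockOf n m xs i) a - P a|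
            + |jointType m (fun t => (xs t, blockDec dc y0 m (blockEnc e hc m xs) t)) a
              - ((m / n : ℕ) : ℝ)⁻¹ * ∑ i : Fin (m / n), pairT e dc (blockOf n m xs i) a| :=
          abs_add_le _ _
      _ ≤ _ := by linarith
  have hsum1 : ∑ a : 𝒳 × 𝒴,
      |jointType m (fun t => (xs t, blockDec dc y0 m (blockEnc e hc m xs) t)) a - P a|
      ≤ (∑ a : 𝒳 × 𝒴,
          |((m / n : ℕ) : ℝ)⁻¹ * ∑ i : Fin (m / n), pairT e dc (blockOf n m xs i) a - P a|)
        + cA * (2 * n / m) := by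
    calc ∑ a : 𝒳 × 𝒴,
        |jointType m (fun t => (xs t, blockDec dc y0 m (blockEnc e hc m xs) t)) a - P a|
        ≤ ∑ a : 𝒳 × 𝒴,
            (|((m / n : ℕ) : ℝ)⁻¹ * ∑ i : Fin (m / n), pairT e dc (blockOf n m xs i) a - P a|
              + 2 * n / m) := Finset.sum_le_sum fun a _ => hpt a
      _ = _ := by
          rw [Finset.sum_add_distrib, Finset.sum_const, Finset.card_univ, nsmul_eq_mul, hcA]
  have hsum2 : ∑ a : 𝒳 × 𝒴,
      |((m / n : ℕ) : ℝ)⁻¹ * ∑ i : Fin (m / n), pairT e dc (blockOf n m xs i) a - P a|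
      < cA * (ε / (2 * cA)) := by
    have := Finset.sum_lt_sum_of_nonempty (Finset.univ_nonempty (α := 𝒳 × 𝒴))
      (f := fun a : 𝒳 × 𝒴 =>
        |((m / n : ℕ) : ℝ)⁻¹ * ∑ i : Fin (m / n), pairT e dc (blockOf n m xs i) a - P a|)
      (g := fun _ : 𝒳 × 𝒴 => ε / (2 * cA)) (fun a _ => hno a)
    calc ∑ a : 𝒳 × 𝒴,
        |((m / n : ℕ) : ℝ)⁻¹ * ∑ i : Fin (m / n), pairT e dc (blockOf n m xs i) a - P a|
        < ∑ _a : 𝒳 × 𝒴, ε / (2 * cA) := this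
      _ = cA * (ε / (2 * cA)) := by
          rw [Finset.sum_const, Finset.card_univ, nsmul_eq_mul, hcA]
  have hcAδ : cA * (ε / (2 * cA)) = ε / 2 := by
    field_simp
    try ring
  have htvP : ε ≤ (1/2) * ∑ a : 𝒳 × 𝒴,
      |jointType m (fun t => (xs t, blockDec dc y0 m (blockEnc e hc m xs) t)) a - P a| := hbad
  have hrem' : cA * (2 * n / m) ≤ ε := by
    have hm0 : (0:ℝ) < m := by
      have : 0 < m := lt_of_lt_of_le hn hnm
      exact_mod_cast this
    have : cA * (2 * (n:ℝ) / m) = 2 * (cA * n / m) := by ring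
    rw [this]
    linarith
  linarith
end BadDev
section BlockCoding
set_option linter.unusedSectionVars false
open Classical Sum Filter

lemma block_coding {𝒳 𝒴 : Type} [Fintype 𝒳] [Fintype 𝒴] (p0 : 𝒳 → ℝ) (hp0 : IsPMF p0)
    {R' : ℝ} (hR' : 0 ≤ R') {n : ℕ} (hn : 0 < n)
    (e : (Fin n → 𝒳) → Fin (msgCount n R'))
    (dc : Fin (msgCount n R') → Fin n → 𝒴)
    (P : 𝒳 × 𝒴 → ℝ)
    (hP : ∀ a, P a = ∑ v : Fin n → 𝒳, (∏ t, p0 (v t)) * pairT e dc v a)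
    (q : 𝒳 → 𝒴 → ℝ) (hq : ∀ x y, p0 x * q x y = P (x, y)) :
    TwoNodeAchievable p0 (R' + 1 / (n : ℝ)) q := by
  classical
  have hc : ∀ m, msgCount n R' ^ (m / n) ≤ msgCount m (R' + 1 / (n : ℝ)) :=
    fun m => msgCount_pow_le hR' hn m
  set y0 : 𝒴 := dc ⟨0, msgCount_pos n R'⟩ ⟨0, hn⟩ with hy0
  refine ⟨blockEnc e hc, blockDec dc y0, ?_⟩
  intro ε hε
  have htarget : (fun a : 𝒳 × 𝒴 => p0 a.1 * q a.1 a.2) = P := by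
    funext a
    rw [hq a.1 a.2]
  have hXne : Nonempty 𝒳 := by
    rcases isEmpty_or_nonempty 𝒳 with h | h
    · exfalso
      have := hp0.2
      rw [Finset.univ_eq_empty, Finset.sum_empty] at this
      norm_num at this
    · exact h
  have hYne : Nonempty 𝒴 := ⟨y0⟩
  set cA : ℝ := (Fintype.card (𝒳 × 𝒴) : ℝ) with hcA
  have hcA0 : (0:ℝ) < cA := by rw [hcA]; exact_mod_cast Fintype.card_pos
  set δ0 : ℝ := ε / (2 * cA) with hδ0
  have hδ00 : 0 < δ0 := by rw [hδ0]; positivity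
  simp only [htarget]
  have hμ0 : ∀ (m : ℕ) (xs : Fin m → 𝒳), 0 ≤ ∏ t, p0 (xs t) :=
    fun m xs => Finset.prod_nonneg fun t _ => hp0.1 _
  -- per-letter Chebyshev bound
  have hTbd : ∀ (v : Fin n → 𝒳) (a : 𝒳 × 𝒴), |pairT e dc v a| ≤ 1 := by
    intro v a
    have h0 : (0:ℝ) ≤ pairT e dc v a := jointType_nonneg _ _
    have h1 : pairT e dc v a ≤ 1 := jointType_le_one hn _ _
    rw [abs_of_nonneg h0]
    exact h1
  have key : ∀ m : ℕ, n ≤ m → cA * (n : ℝ) / (m : ℝ) ≤ ε / 2 →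
      probOf (fun xs : Fin m → 𝒳 => ∏ t, p0 (xs t))
        (fun xs => ε ≤ tv
          (jointType m fun t => (xs t, blockDec dc y0 m (blockEnc e hc m xs) t)) P)
      ≤ cA * (4 / ((m / n : ℕ) : ℝ) / δ0 ^ 2) := by
    intro m hnm hrem
    have hk1 : 1 ≤ m / n := (Nat.one_le_div_iff hn).mpr hnm
    have hk0 : 0 < m / n := hk1
    have peracheb : ∀ a : 𝒳 × 𝒴,
        probOf (fun xs : Fin m → 𝒳 => ∏ t, p0 (xs t))
          (fun xs => δ0 ≤
            |((m / n : ℕ) : ℝ)⁻¹ * ∑ i : Fin (m / n), pairT e dc (blockOf n m xs i) a - P a|)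
        ≤ (4 / ((m / n : ℕ) : ℝ)) / δ0 ^ 2 := by
      intro a
      have hpush : probOf (fun xs : Fin m → 𝒳 => ∏ t, p0 (xs t))
          (fun xs => δ0 ≤
            |((m / n : ℕ) : ℝ)⁻¹ * ∑ i : Fin (m / n), pairT e dc (blockOf n m xs i) a - P a|)
          = probOf (fun b : Fin (m / n) → Fin n → 𝒳 => ∏ i, ∏ j, p0 (b i j))
            (fun b => δ0 ≤
              |((m / n : ℕ) : ℝ)⁻¹ * ∑ i : Fin (m / n), pairT e dc (b i) a - P a|) := by
        unfold probOf
        have hstep : ∀ xs : Fin m → 𝒳,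
            (if δ0 ≤ |((m / n : ℕ) : ℝ)⁻¹ * ∑ i : Fin (m / n),
                pairT e dc (blockOf n m xs i) a - P a| then (∏ t, p0 (xs t)) else 0)
            = (∏ t, p0 (xs t)) *
              (fun b : Fin (m / n) → Fin n → 𝒳 =>
                if δ0 ≤ |((m / n : ℕ) : ℝ)⁻¹ * ∑ i : Fin (m / n), pairT e dc (b i) a - P a|
                then (1:ℝ) else 0) (fun i j => xs ((seM n m).symm (Sum.inl (i, j)))) := by
          intro xs
          have hcond : (δ0 ≤ |((m / n : ℕ) : ℝ)⁻¹ * ∑ i : Fin (m / n),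
              pairT e dc ((fun i j => xs ((seM n m).symm (Sum.inl (i, j)))) i) a - P a|)
              = (δ0 ≤ |((m / n : ℕ) : ℝ)⁻¹ * ∑ i : Fin (m / n),
                pairT e dc (blockOf n m xs i) a - P a|) := rfl
          simp only [hcond]
          by_cases h : δ0 ≤ |((m / n : ℕ) : ℝ)⁻¹ * ∑ i : Fin (m / n),
              pairT e dc (blockOf n m xs i) a - P a|
          · rw [if_pos h, if_pos h, mul_one]
          · rw [if_neg h, if_neg h, mul_zero]
        simp_rw [hstep]
        rw [exp_blocks hp0 (seM n m)
          (fun b : Fin (m / n) → Fin n → 𝒳 =>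
            if δ0 ≤ |((m / n : ℕ) : ℝ)⁻¹ * ∑ i : Fin (m / n), pairT e dc (b i) a - P a|
            then (1:ℝ) else 0)]
        apply Finset.sum_congr rfl
        intro b _
        by_cases h : δ0 ≤ |((m / n : ℕ) : ℝ)⁻¹ * ∑ i : Fin (m / n), pairT e dc (b i) a - P a|
        · rw [if_pos h, if_pos h, mul_one]
        · rw [if_neg h, if_neg h, mul_zero]
      rw [hpush]
      apply chebyshev _ (fun b => Finset.prod_nonneg fun i _ =>
          Finset.prod_nonneg fun j _ => hp0.1 _)
        (fun b : Fin (m / n) → Fin n → 𝒳 =>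
          ((m / n : ℕ) : ℝ)⁻¹ * ∑ i : Fin (m / n), pairT e dc (b i) a - P a) hδ00
      have hvar := var_avg (ν := fun v : Fin n → 𝒳 => ∏ t, p0 (v t)) (isPMF_prod hp0)
        hk0 (fun v => pairT e dc v a) (fun v => hTbd v a)
      rw [← hP a] at hvar
      exact hvar
    have step1 : probOf (fun xs : Fin m → 𝒳 => ∏ t, p0 (xs t))
        (fun xs => ε ≤ tv
          (jointType m fun t => (xs t, blockDec dc y0 m (blockEnc e hc m xs) t)) P)
        ≤ probOf (fun xs : Fin m → 𝒳 => ∏ t, p0 (xs t))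
          (fun xs => ∃ a : 𝒳 × 𝒴, δ0 ≤
            |((m / n : ℕ) : ℝ)⁻¹ * ∑ i : Fin (m / n),
              pairT e dc (blockOf n m xs i) a - P a|) := by
      apply probOf_mono _ (hμ0 m)
      intro xs hbad
      exact bad_implies_dev hn e hc dc y0 hnm xs P hε hrem hbad
    have step2 : probOf (fun xs : Fin m → 𝒳 => ∏ t, p0 (xs t))
          (fun xs => ∃ a : 𝒳 × 𝒴, δ0 ≤
            |((m / n : ℕ) : ℝ)⁻¹ * ∑ i : Fin (m / n),
              pairT e dc (blockOf n m xs i) a - P a|)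
        ≤ ∑ a : 𝒳 × 𝒴, probOf (fun xs : Fin m → 𝒳 => ∏ t, p0 (xs t))
          (fun xs => δ0 ≤
            |((m / n : ℕ) : ℝ)⁻¹ * ∑ i : Fin (m / n),
              pairT e dc (blockOf n m xs i) a - P a|) :=
      probOf_union _ (hμ0 m) _
    have step3 : ∑ a : 𝒳 × 𝒴, probOf (fun xs : Fin m → 𝒳 => ∏ t, p0 (xs t))
          (fun xs => δ0 ≤
            |((m / n : ℕ) : ℝ)⁻¹ * ∑ i : Fin (m / n),
              pairT e dc (blockOf n m xs i) a - P a|)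
        ≤ ∑ _a : 𝒳 × 𝒴, (4 / ((m / n : ℕ) : ℝ)) / δ0 ^ 2 :=
      Finset.sum_le_sum fun a _ => peracheb a
    have step4 : ∑ _a : 𝒳 × 𝒴, (4 / ((m / n : ℕ) : ℝ)) / δ0 ^ 2
        = cA * (4 / ((m / n : ℕ) : ℝ) / δ0 ^ 2) := by
      rw [Finset.sum_const, Finset.card_univ, nsmul_eq_mul, hcA]
    linarith
  -- limit
  have hdiv : Tendsto (fun m : ℕ => m / n) atTop atTop := by
    apply tendsto_atTop.mpr
    intro K
    rw [eventually_atTop]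
    exact ⟨K * n, fun m hm => (Nat.le_div_iff_mul_le hn).mpr hm⟩
  have hb : Tendsto (fun m : ℕ => cA * (4 / ((m / n : ℕ) : ℝ) / δ0 ^ 2)) atTop (nhds 0) := by
    have h4 : Tendsto (fun j : ℕ => (4:ℝ) / j) atTop (nhds 0) :=
      tendsto_const_div_atTop_nhds_zero_nat 4
    have := ((h4.comp hdiv).div_const (δ0 ^ 2)).const_mul cA
    simpa using this
  apply tendsto_of_tendsto_of_tendsto_of_le_of_le' tendsto_const_nhds hb
  · exact Eventually.of_forall fun m => probOf_nonneg _ (hμ0 m) _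
  · have hev1 : ∀ᶠ m : ℕ in atTop, n ≤ m := eventually_ge_atTop n
    have hev2 : ∀ᶠ m : ℕ in atTop, cA * (n : ℝ) / (m : ℝ) ≤ ε / 2 :=
      (tendsto_const_div_atTop_nhds_zero_nat (cA * n)).eventually
        (eventually_le_nhds (half_pos hε))
    filter_upwards [hev1, hev2] with m h1 h2
    exact key m h1 h2

end BlockCoding
section Converse
set_option linter.unusedSectionVars false
open Classical Filter

lemma ind1_fst_sum {𝒳 𝒴 : Type} [Fintype 𝒴] (z : 𝒳 × 𝒴) (x : 𝒳) :
    ∑ y : 𝒴, ind1 z (x, y) = ind1 z.1 x := by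
  classical
  obtain ⟨zx, zy⟩ := z
  simp only [ind1, Prod.mk.injEq]
  by_cases hx : zx = x
  · subst hx
    simp
  · simp [hx]

lemma jointType_fst {𝒳 𝒴 : Type} [Fintype 𝒳] [Fintype 𝒴] {n : ℕ} (s : Fin n → 𝒳 × 𝒴) (x : 𝒳) :
    ∑ y : 𝒴, jointType n s (x, y) = jointType n (fun t => (s t).1) x := by
  simp_rw [jointType_eq_inv_mul_sum]
  rw [← Finset.mul_sum]
  congr 1
  rw [Finset.sum_comm]
  apply Finset.sum_congr rfl
  intro t _
  exact ind1_fst_sum (s t) x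

lemma exp_type {𝒳 : Type} [Fintype 𝒳] {p0 : 𝒳 → ℝ} (hp0 : IsPMF p0) {n : ℕ} (hn : 0 < n)
    (x : 𝒳) :
    ∑ v : Fin n → 𝒳, (∏ t, p0 (v t)) * jointType n v x = p0 x := by
  classical
  simp_rw [jointType_eq_inv_mul_sum]
  have hswap : ∑ v : Fin n → 𝒳, (∏ t, p0 (v t)) * ((n:ℝ)⁻¹ * ∑ t, ind1 (v t) x)
      = (n:ℝ)⁻¹ * ∑ t : Fin n, ∑ v : Fin n → 𝒳, (∏ t', p0 (v t')) * ind1 (v t) x := by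
    symm
    calc (n:ℝ)⁻¹ * ∑ t : Fin n, ∑ v : Fin n → 𝒳, (∏ t', p0 (v t')) * ind1 (v t) x
        = ∑ t : Fin n, ∑ v : Fin n → 𝒳, (n:ℝ)⁻¹ * ((∏ t', p0 (v t')) * ind1 (v t) x) := by
          rw [Finset.mul_sum]
          exact Finset.sum_congr rfl fun t _ => Finset.mul_sum _ _ _
      _ = ∑ v : Fin n → 𝒳, ∑ t : Fin n, (n:ℝ)⁻¹ * ((∏ t', p0 (v t')) * ind1 (v t) x) :=
          Finset.sum_comm
      _ = ∑ v : Fin n → 𝒳, (∏ t, p0 (v t)) * ((n:ℝ)⁻¹ * ∑ t, ind1 (v t) x) := by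
          apply Finset.sum_congr rfl
          intro v _
          rw [← Finset.mul_sum, ← Finset.mul_sum]
          ring
  rw [hswap]
  have hcoord : ∀ t : Fin n, ∑ v : Fin n → 𝒳, (∏ t', p0 (v t')) * ind1 (v t) x = p0 x := by
    intro t
    rw [exp_coord hp0 t (fun c => ind1 c x)]
    have : ∀ c : 𝒳, p0 c * ind1 c x = if c = x then p0 c else 0 := by
      intro c
      unfold ind1
      split_ifs <;> ring
    simp_rw [this]
    rw [Finset.sum_ite_eq' Finset.univ x p0]
    simp
  simp_rw [hcoord]
  rw [Finset.sum_const, Finset.card_univ, Fintype.card_fin, nsmul_eq_mul]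
  rw [← mul_assoc, inv_mul_cancel₀ (by exact_mod_cast hn.ne' : (n:ℝ) ≠ 0), one_mul]

lemma rd_point_to_q {𝒳 𝒴 : Type} [Fintype 𝒳] [Fintype 𝒴]
    (p0 : 𝒳 → ℝ) (hp0 : IsPMF p0) (d : 𝒳 → 𝒴 → ℝ) (hd : ∀ x y, 0 ≤ d x y)
    {R' D' : ℝ} (hR' : 0 ≤ R') (h : RDAchievable (𝒴 := 𝒴) p0 d R' D') :
    ∃ q : 𝒳 → 𝒴 → ℝ, (∀ x, IsPMF (q x)) ∧ (R', q) ∈ twoNodeCapacity p0 ∧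
      (∑ x, ∑ y, p0 x * q x y * d x y) ≤ D' := by
  classical
  obtain ⟨enc, dec, hlim⟩ := h
  have hYne : Nonempty 𝒴 := ⟨dec 1 ⟨0, msgCount_pos 1 R'⟩ ⟨0, one_pos⟩⟩
  have hcY : (0:ℝ) < (Fintype.card 𝒴 : ℝ) := by exact_mod_cast Fintype.card_pos
  set f : ℕ → ℝ := fun n => ∑ xs : Fin n → 𝒳,
      (∏ t, p0 (xs t)) * ((n : ℝ)⁻¹ * ∑ t, d (xs t) (dec n (enc n xs) t)) with hf
  set Pb : (n : ℕ) → (𝒳 × 𝒴) → ℝ :=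
    fun n a => ∑ v : Fin n → 𝒳, (∏ t, p0 (v t)) * pairT (enc n) (dec n) v a with hPbdef
  have hPb0 : ∀ n a, 0 ≤ Pb n a := fun n a => Finset.sum_nonneg fun v _ =>
    mul_nonneg (Finset.prod_nonneg fun t _ => hp0.1 _) (jointType_nonneg _ _)
  have hPbsum : ∀ n : ℕ, 0 < n → ∑ a : 𝒳 × 𝒴, Pb n a = 1 := by
    intro n hn
    simp only [hPbdef]
    rw [Finset.sum_comm]
    have : ∀ v : Fin n → 𝒳, ∑ a : 𝒳 × 𝒴, (∏ t, p0 (v t)) * pairT (enc n) (dec n) v a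
        = ∏ t, p0 (v t) := by
      intro v
      rw [← Finset.mul_sum]
      have hone : ∑ a : 𝒳 × 𝒴, pairT (enc n) (dec n) v a = 1 := jointType_sum hn _
      rw [hone, mul_one]
    simp_rw [this]
    exact (isPMF_prod hp0).2
  have hPbmarg : ∀ n : ℕ, 0 < n → ∀ x : 𝒳, ∑ y, Pb n (x, y) = p0 x := by
    intro n hn x
    simp only [hPbdef]
    rw [Finset.sum_comm]
    have : ∀ v : Fin n → 𝒳, ∑ y : 𝒴, (∏ t, p0 (v t)) * pairT (enc n) (dec n) v (x, y)
        = (∏ t, p0 (v t)) * jointType n v x := by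
      intro v
      rw [← Finset.mul_sum]
      congr 1
      exact jointType_fst (fun t => (v t, dec n (enc n v) t)) x
    simp_rw [this]
    exact exp_type hp0 hn x
  have hPble1 : ∀ n : ℕ, 0 < n → ∀ a, Pb n a ≤ 1 := by
    intro n hn a
    rw [← hPbsum n hn]
    exact Finset.single_le_sum (f := Pb n) (fun b _ => hPb0 n b) (Finset.mem_univ a)
  -- conditional pmf
  set qn : (n : ℕ) → 𝒳 → 𝒴 → ℝ :=
    fun n x y => if p0 x = 0 then (Fintype.card 𝒴 : ℝ)⁻¹ else Pb n (x, y) / p0 x with hqndef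
  have hqnpmf : ∀ n : ℕ, 0 < n → ∀ x, IsPMF (qn n x) := by
    intro n hn x
    constructor
    · intro y
      simp only [hqndef]
      split_ifs with h
      · positivity
      · exact div_nonneg (hPb0 n _) (hp0.1 x)
    · simp only [hqndef]
      split_ifs with h
      · rw [Finset.sum_const, Finset.card_univ, nsmul_eq_mul]
        field_simp
      · have hx : 0 < p0 x := lt_of_le_of_ne (hp0.1 x) (Ne.symm h)
        rw [← Finset.sum_div, hPbmarg n hn x, div_self (ne_of_gt hx)]
  have hqnP : ∀ n : ℕ, 0 < n → ∀ x y, p0 x * qn n x y = Pb n (x, y) := by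
    intro n hn x y
    simp only [hqndef]
    split_ifs with h
    · rw [h, zero_mul]
      have h1 : Pb n (x, y) ≤ ∑ y', Pb n (x, y') :=
        Finset.single_le_sum (f := fun y' => Pb n (x, y')) (fun y' _ => hPb0 n _)
          (Finset.mem_univ y)
      have h2 := hPbmarg n hn x
      have h3 := hPb0 n (x, y)
      rw [h2, h] at h1
      linarith
    · have hx : p0 x ≠ 0 := h
      field_simp
  have hach : ∀ n : ℕ, 0 < n → TwoNodeAchievable p0 (R' + 1 / (n : ℝ)) (qn n) := by
    intro n hn
    exact block_coding p0 hp0 hR' hn (enc n) (dec n) (Pb n) (fun a => rfl) (qn n)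
      (hqnP n hn)
  have hSmem : ∀ n : ℕ, 0 < n → (R' + 1 / (n : ℝ), qn n) ∈
      {v : ℝ × (𝒳 → 𝒴 → ℝ) | 0 ≤ v.1 ∧ (∀ x, IsPMF (v.2 x)) ∧ TwoNodeAchievable p0 v.1 v.2} := by
    intro n hn
    have hn' : (0:ℝ) < n := by exact_mod_cast hn
    exact ⟨by positivity, hqnpmf n hn, hach n hn⟩
  -- distortion identity
  have hfd : ∀ n : ℕ, 0 < n → f n = ∑ a : 𝒳 × 𝒴, Pb n a * d a.1 a.2 := by
    intro n hn
    simp only [hf]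
    have h1 : ∀ v : Fin n → 𝒳, (n : ℝ)⁻¹ * ∑ t, d (v t) (dec n (enc n v) t)
        = ∑ a : 𝒳 × 𝒴, pairT (enc n) (dec n) v a * d a.1 a.2 := by
      intro v
      exact avg_eq_type_sum (fun t => (v t, dec n (enc n v) t)) (fun a : 𝒳 × 𝒴 => d a.1 a.2)
    simp_rw [h1, Finset.mul_sum]
    rw [Finset.sum_comm]
    apply Finset.sum_congr rfl
    intro a _
    have hPa : Pb n a = ∑ v : Fin n → 𝒳, (∏ t, p0 (v t)) * pairT (enc n) (dec n) v a := rfl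
    rw [hPa, Finset.sum_mul]
    apply Finset.sum_congr rfl
    intro v _
    ring
  have hdistq : ∀ n : ℕ, 0 < n → (∑ x, ∑ y, p0 x * qn n x y * d x y) = f n := by
    intro n hn
    rw [hfd n hn, Fintype.sum_prod_type]
    apply Finset.sum_congr rfl
    intro x _
    apply Finset.sum_congr rfl
    intro y _
    rw [hqnP n hn x y]
  -- boundedness of f
  set M : ℝ := ∑ a : 𝒳 × 𝒴, d a.1 a.2 with hM
  have hM0 : 0 ≤ M := Finset.sum_nonneg fun a _ => hd a.1 a.2
  have hfub : ∀ n, f n ≤ M := by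
    intro n
    rcases Nat.eq_zero_or_pos n with rfl | hn
    · have : f 0 = 0 := by
        rw [hf]
        simp
      rw [this]; exact hM0
    · rw [hfd n hn]
      apply Finset.sum_le_sum
      intro a _
      calc Pb n a * d a.1 a.2 ≤ 1 * d a.1 a.2 :=
          mul_le_mul_of_nonneg_right (hPble1 n hn a) (hd a.1 a.2)
        _ = d a.1 a.2 := one_mul _
  have hfbd : IsBoundedUnder (· ≤ ·) atTop f := isBoundedUnder_of ⟨M, fun n => hfub n⟩
  -- extract convergent subsequence of (qn (j+1))
  obtain ⟨q, hqmem, φ, hφ, hconv⟩ := (isCompact_condPMF (𝒳 := 𝒳) (𝒴 := 𝒴)).tendsto_subseq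
    (x := fun j : ℕ => qn (j + 1)) (fun j => hqnpmf (j + 1) (Nat.succ_pos j))
  have hφtop : Tendsto (fun j => φ j + 1) atTop atTop :=
    tendsto_atTop_mono (fun j => Nat.le_succ (φ j)) hφ.tendsto_atTop
  refine ⟨q, hqmem, ?_, ?_⟩
  · -- membership in capacity region
    apply mem_closure_of_tendsto
      (f := fun j => (R' + 1 / ((φ j + 1 : ℕ) : ℝ), qn (φ j + 1))) (b := atTop)
    · have h1 : Tendsto (fun j => 1 / ((φ j + 1 : ℕ) : ℝ)) atTop (nhds 0) :=
        (tendsto_const_div_atTop_nhds_zero_nat 1).comp hφtop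
      have h2 : Tendsto (fun j => R' + 1 / ((φ j + 1 : ℕ) : ℝ)) atTop (nhds R') := by
        have := tendsto_const_nhds (x := R') (f := atTop (α := ℕ)) |>.add h1
        simpa using this
      exact h2.prodMk_nhds hconv
    · exact Eventually.of_forall fun j => hSmem (φ j + 1) (Nat.succ_pos _)
  · -- distortion bound
    have hLtend : Tendsto (fun j => f (φ j + 1)) atTop (nhds (∑ x, ∑ y, p0 x * q x y * d x y)) := by
      have := distSum_tendsto (p0 := p0) (d := d) hconv
      apply this.congr
      intro j
      exact hdistq (φ j + 1) (Nat.succ_pos _)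
    apply le_of_forall_pos_le_add
    intro ε hε
    have hlt : limsup f atTop < D' + ε := lt_of_le_of_lt hlim (by linarith)
    have hev : ∀ᶠ n in atTop, f n < D' + ε := eventually_lt_of_limsup_lt hlt hfbd
    have hev2 : ∀ᶠ j in atTop, f (φ j + 1) < D' + ε := hφtop.eventually hev
    exact le_of_tendsto hLtend (hev2.mono fun j hj => hj.le)

end Converse

/-- The rate–distortion region is the projection of the coordination capacity region:
`(R,D)` is in the rate–distortion region iff some conditional pmf `p(y|x)` is in the
coordination capacity region with rate `R` and expected distortion at most `D`. -/
theorem rate_distortion_projection {𝒳 𝒴 : Type} [Fintype 𝒳] [Fintype 𝒴]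
    (p0 : 𝒳 → ℝ) (hp0 : IsPMF p0) (d : 𝒳 → 𝒴 → ℝ) (hd : ∀ x y, 0 ≤ d x y)
    (R D : ℝ) :
    (R, D) ∈ rdRegion (𝒴 := 𝒴) p0 d ↔
      ∃ q : 𝒳 → 𝒴 → ℝ, (∀ x, IsPMF (q x)) ∧ (R, q) ∈ twoNodeCapacity p0 ∧
        (∑ x, ∑ y, p0 x * q x y * d x y) ≤ D := by
  constructor
  · intro h
    rw [rdRegion] at h
    obtain ⟨w, hwS, hwlim⟩ := mem_closure_iff_seq_limit.mp h
    have hch : ∀ j : ℕ, ∃ q : 𝒳 → 𝒴 → ℝ, (∀ x, IsPMF (q x)) ∧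
        ((w j).1, q) ∈ twoNodeCapacity p0 ∧
        (∑ x, ∑ y, p0 x * q x y * d x y) ≤ (w j).2 :=
      fun j => rd_point_to_q p0 hp0 d hd (hwS j).1 (hwS j).2
    choose qs hqs1 hqs2 hqs3 using hch
    obtain ⟨q, hqmem, ψ, hψ, hconvq⟩ :=
      (isCompact_condPMF (𝒳 := 𝒳) (𝒴 := 𝒴)).tendsto_subseq (x := qs) (fun j => hqs1 j)
    refine ⟨q, hqmem, ?_, ?_⟩
    · have hclosed : IsClosed (twoNodeCapacity (𝒴 := 𝒴) p0) := isClosed_closure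
      have h1 : Tendsto (fun j => (w (ψ j)).1) atTop (nhds R) :=
        ((continuous_fst.tendsto (R, D)).comp hwlim).comp hψ.tendsto_atTop
      exact hclosed.mem_of_tendsto (h1.prodMk_nhds hconvq)
        (Eventually.of_forall fun j => hqs2 (ψ j))
    · have h2 : Tendsto (fun j => ∑ x, ∑ y, p0 x * qs (ψ j) x y * d x y) atTop
          (nhds (∑ x, ∑ y, p0 x * q x y * d x y)) := distSum_tendsto hconvq
      have h3 : Tendsto (fun j => (w (ψ j)).2) atTop (nhds D) :=
        ((continuous_snd.tendsto (R, D)).comp hwlim).comp hψ.tendsto_atTop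
      exact le_of_tendsto_of_tendsto' h2 h3 (fun j => hqs3 (ψ j))
  · rintro ⟨q, hq, hcap, hle⟩
    exact rhs_to_lhs p0 hp0 d hd R D q hq hcap hle
end
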